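/- arXiv:1706.04396 — 3 statements merged into one kernel-verified Lean document; each statement's English description precedes it below -/
import Mathlib

section
/- For any Souslin set 𝓔 in the Effros Borel space (F(T), 𝓑_{F(T)}) that contains 𝓓, some element of 𝓔 intersects L. -/
open Set Topology TopologicalSpace MeasureTheory

/-- The Effros Borel structure on the collection of closed subsets of `X`. -/
def effrosSigma (X : Type*) [TopologicalSpace X] :
    MeasurableSpace {A : Set X // IsClosed A} :=
  MeasurableSpace.generateFrom
    {𝓤 : Set {A : Set X // IsClosed A} |
      ∃ U : Set X, IsOpen U ∧ 𝓤 = {A : {A : Set X // IsClosed A} | ((A : Set X) ∩ U).Nonempty}}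

/-- `𝓐` is the result of the Souslin operation applied to `m`-measurable sets. -/
def IsSouslinIn {α : Type*} (m : MeasurableSpace α) (𝓐 : Set α) : Prop :=
  ∃ f : List ℕ → Set α, (∀ s, MeasurableSet[m] (f s)) ∧
    𝓐 = ⋃ σ : ℕ → ℕ, ⋂ n : ℕ, f (List.ofFn fun i : Fin n => σ i)

/-- dim X ≤ 0 : `X` has a base consisting of clopen sets (or is empty). -/
def ZeroDimensional (X : Type*) [TopologicalSpace X] : Prop :=
  ∃ B : Set (Set X), (∀ s ∈ B, IsClopen s) ∧ IsTopologicalBasis B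

/-- Every point of `S` is isolated in the subspace `S`. -/
def RelativelyDiscrete {E : Type*} [TopologicalSpace E] (S : Set E) : Prop :=
  ∀ x ∈ S, ∃ U : Set E, IsOpen U ∧ U ∩ S = {x}

/-- countable union of zero-dimensional subspaces -/
def CountableDimensional (X : Type*) [TopologicalSpace X] : Prop :=
  ∃ C : ℕ → Set X, (⋃ n, C n) = univ ∧ ∀ n, ZeroDimensional (C n)

/-- F₀(X): nonempty zero-dimensional closed sets -/
def zeroDimClosedSets (X : Type*) [TopologicalSpace X] :
    Set {A : Set X // IsClosed A} :=
  {A | (A : Set X).Nonempty ∧ ZeroDimensional (A : Set X)}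

/-- The Vietoris topology on the collection of closed subsets of `X`. -/
def vietoris (X : Type*) [TopologicalSpace X] :
    TopologicalSpace {A : Set X // IsClosed A} :=
  TopologicalSpace.generateFrom
    ({𝓤 | ∃ U : Set X, IsOpen U ∧ 𝓤 = {A : {A : Set X // IsClosed A} | (A : Set X) ⊆ U}} ∪
     {𝓤 | ∃ U : Set X, IsOpen U ∧
        𝓤 = {A : {A : Set X // IsClosed A} | ((A : Set X) ∩ U).Nonempty}})

/-- The Wijsman topology on nonempty closed subsets of a metric space. -/
noncomputable def wijsman (E : Type*) [MetricSpace E] :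
    TopologicalSpace {A : Set E // IsClosed A ∧ A.Nonempty} :=
  ⨅ z : E, TopologicalSpace.induced (fun A => Metric.infDist z (A : Set E)) inferInstance

/-- The relatively discrete part `D` of the space `T = L ∪ D`:
the points `(qₙ, 1/m)` for `m ≥ n`, where `q` enumerates the rationals of `[0,1]`. -/
def Dset (q : ℕ+ → ℝ) : Set (ℝ × ℝ) :=
  {p | ∃ n m : ℕ+, n ≤ m ∧ p = (q n, 1 / (m : ℝ))}

/-- `L = (I \ ℚ) × {0}`. -/
def Lset : Set (ℝ × ℝ) :=
  {p | p.1 ∈ Icc (0:ℝ) 1 ∧ Irrational p.1 ∧ p.2 = 0}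

/-- `T = L ∪ D`, a subspace of the plane. -/
def Tset (q : ℕ+ → ℝ) : Set (ℝ × ℝ) := Lset ∪ Dset q


open Set Topology TopologicalSpace MeasureTheory

namespace L221

abbrev XX := ℕ → Bool
abbrev ZZ := ℕ → ℕ

instance instPolishXX : PolishSpace XX :=
  have : IsCompletelyMetrizableSpace XX := inferInstance
  inferInstance

/-- `u` is an initial segment of the function `f`. -/
def PrefF {α : Type*} (u : List α) (f : ℕ → α) : Prop := ∀ i : Fin u.length, f i = u.get i

lemma prefF_ofFn {α : Type*} (f : ℕ → α) (n : ℕ) (g : ℕ → α) :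
    PrefF (List.ofFn fun i : Fin n => f i) g ↔ ∀ i < n, g i = f i := by
  constructor
  · intro h i hi
    simpa [List.get_ofFn] using h ⟨i, by simpa using hi⟩
  · intro h i
    have hi : (i : ℕ) < n := by simpa using i.isLt
    simp only [List.get_ofFn, Fin.coe_cast]
    exact h i hi

lemma prefF_isOpen {α : Type*} [TopologicalSpace α] [DiscreteTopology α] (u : List α) :
    IsOpen {f : ℕ → α | PrefF u f} := by
  have : {f : ℕ → α | PrefF u f} = ⋂ i : Fin u.length, (fun f : ℕ → α => f i) ⁻¹' {u.get i} := by
    ext f; simp [PrefF]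
  rw [this]
  exact isOpen_iInter_of_finite fun i => (continuous_apply (i : ℕ)).isOpen_preimage _ (isOpen_discrete _)

lemma prefF_measurableSet (u : List Bool) : MeasurableSet {x : XX | PrefF u x} := by
  have : {x : XX | PrefF u x} = ⋂ i : Fin u.length, (fun f : XX => f i) ⁻¹' {u.get i} := by
    ext f; simp [PrefF]
  rw [this]
  exact MeasurableSet.iInter fun i => (measurable_pi_apply (i : ℕ)) (measurableSet_singleton _)

lemma exists_prefF_subset {α : Type*} [TopologicalSpace α] [DiscreteTopology α]
    {U : Set (ℕ → α)} (hU : IsOpen U) {x : ℕ → α} (hx : x ∈ U) :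
    ∃ n : ℕ, ∀ y : ℕ → α, (∀ i < n, y i = x i) → y ∈ U := by
  obtain ⟨I, u, hIu, hsub⟩ := isOpen_pi_iff.1 hU x hx
  refine ⟨(I.sup id) + 1, fun y hy => hsub ?_⟩
  intro a ha
  have : y a = x a := hy a (Nat.lt_succ_of_le (Finset.le_sup (f := id) ha))
  rw [this]; exact (hIu a ha).2

/-- Basic clopen cylinders in `XX × ZZ`. -/
def cylSet (u : List Bool) (t : List ℕ) : Set (XX × ZZ) := {p | PrefF u p.1 ∧ PrefF t p.2}

lemma cylSet_isOpen (u : List Bool) (t : List ℕ) : IsOpen (cylSet u t) := by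
  have : cylSet u t = {f : XX | PrefF u f} ×ˢ {g : ZZ | PrefF t g} := by
    ext p; exact Iff.rfl
  rw [this]
  exact (prefF_isOpen u).prod (prefF_isOpen t)

lemma exists_cyl {O : Set (XX × ZZ)} (hO : IsOpen O) {p : XX × ZZ} (hp : p ∈ O) :
    ∃ u t, p ∈ cylSet u t ∧ cylSet u t ⊆ O := by
  obtain ⟨U, V, hU, hV, hpU, hpV, hUV⟩ := isOpen_prod_iff.1 hO p.1 p.2 hp
  obtain ⟨n₁, hn₁⟩ := exists_prefF_subset hU hpU
  obtain ⟨n₂, hn₂⟩ := exists_prefF_subset hV hpV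
  refine ⟨List.ofFn fun i : Fin n₁ => p.1 i, List.ofFn fun i : Fin n₂ => p.2 i, ?_, ?_⟩
  · exact ⟨(prefF_ofFn _ _ _).2 fun i _ => rfl, (prefF_ofFn _ _ _).2 fun i _ => rfl⟩
  · rintro ⟨x, z⟩ ⟨hx, hz⟩
    exact hUV ⟨hn₁ x ((prefF_ofFn _ _ _).1 hx), hn₂ z ((prefF_ofFn _ _ _).1 hz)⟩

/-- A fixed enumeration of basic cylinders. -/
noncomputable def enu : ℕ → List Bool × List ℕ := (exists_surjective_nat (List Bool × List ℕ)).choose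

lemma enu_surj : Function.Surjective enu := (exists_surjective_nat (List Bool × List ℕ)).choose_spec

/-- `(x, z)` belongs to the closed set coded by `y`. -/
def memW (y x : XX) (z : ZZ) : Prop := ∀ k, y k = true → (x, z) ∉ cylSet (enu k).1 (enu k).2

/-- The diagonal coanalytic set. -/
def Dg : Set XX := {x | ∀ z, ¬ memW x x z}

lemma universality {F : Set (XX × ZZ)} (hF : IsClosed F) :
    ∃ y : XX, ∀ p : XX × ZZ, p ∈ F ↔ ∀ k, y k = true → p ∉ cylSet (enu k).1 (enu k).2 := by
  classical
  refine ⟨fun k => if Disjoint (cylSet (enu k).1 (enu k).2) F then true else false,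
    fun p => ⟨fun hp k hk => ?_, fun h => ?_⟩⟩
  · by_cases hd : Disjoint (cylSet (enu k).1 (enu k).2) F
    · exact fun hmem => (Set.disjoint_left.1 hd) hmem hp
    · simp [hd] at hk
  · by_contra hpF
    obtain ⟨u, t, hmem, hsub⟩ := exists_cyl hF.isOpen_compl hpF
    obtain ⟨k, hk⟩ := enu_surj (u, t)
    have hdis : Disjoint (cylSet (enu k).1 (enu k).2) F := by
      rw [hk]
      exact Set.disjoint_left.2 fun a ha haF => hsub ha haF
    exact (h k (by simp [hdis])) (by rw [hk]; exact hmem)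

lemma closed_P {Y : Type*} [TopologicalSpace Y] (B : List ℕ → Set Y) (hcl : ∀ s, IsClosed (B s)) :
    IsClosed {p : Y × ZZ | ∀ n : ℕ, p.1 ∈ B (List.ofFn fun i : Fin n => p.2 i)} := by
  rw [← isOpen_compl_iff]
  rw [isOpen_iff_forall_mem_open]
  rintro ⟨y, z⟩ hp
  simp only [Set.mem_compl_iff, Set.mem_setOf_eq, not_forall] at hp
  obtain ⟨n, hn⟩ := hp
  refine ⟨(B (List.ofFn fun i : Fin n => z i))ᶜ ×ˢ {w : ZZ | PrefF (List.ofFn fun i : Fin n => z i) w},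
    ?_, ?_, ?_⟩
  · rintro ⟨y', z'⟩ ⟨hy', hz'⟩
    simp only [Set.mem_compl_iff, Set.mem_setOf_eq, not_forall]
    refine ⟨n, ?_⟩
    have : (List.ofFn fun i : Fin n => z' i) = (List.ofFn fun i : Fin n => z i) := by
      have := (prefF_ofFn z n z').1 hz'
      exact congrArg List.ofFn (funext fun i : Fin n => this i i.isLt)
    rw [this]; exact hy'
  · exact ((hcl _).isOpen_compl).prod (prefF_isOpen _)
  · refine ⟨hn, (prefF_ofFn _ _ _).2 fun i _ => rfl⟩

lemma represent_proj' (B : List ℕ → Set XX) (hB : ∀ s, MeasurableSet (B s)) :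
    {x : XX | ∃ z : ZZ, ∀ n : ℕ, x ∈ B (List.ofFn fun i : Fin n => z i)} = ∅ ∨
    ∃ g : ZZ → XX, Continuous g ∧
      {x : XX | ∃ z : ZZ, ∀ n : ℕ, x ∈ B (List.ofFn fun i : Fin n => z i)} = range g := by
  have hclop : ∀ s, PolishSpace.IsClopenable (B s) := fun s => (hB s).isClopenable
  choose m hm hmpol hmcl _ using hclop
  obtain ⟨t', ht'm, ht'le, ht'pol⟩ := PolishSpace.exists_polishSpace_forall_le m hm hmpol
  have hBc : ∀ s, IsClosed[t'] (B s) := by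
    intro s
    exact ⟨(@IsClosed.isOpen_compl _ (m s) _ (hmcl s)).mono (ht'm s)⟩
  set P : Set (XX × ZZ) := {p | ∀ n : ℕ, p.1 ∈ B (List.ofFn fun i : Fin n => p.2 i)} with hP
  have hPc : IsClosed[@instTopologicalSpaceProd XX ZZ t' _] P :=
    @closed_P XX t' B hBc
  by_cases hne : P.Nonempty
  · refine Or.inr ?_
    letI tP : TopologicalSpace (XX × ZZ) := @instTopologicalSpaceProd XX ZZ t' _
    have polXZ : @PolishSpace (XX × ZZ) tP :=
      by
        letI : TopologicalSpace XX := t'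
        haveI : PolishSpace XX := ht'pol
        haveI : IsCompletelyMetrizableSpace XX := inferInstance
        haveI : IsCompletelyMetrizableSpace ZZ := inferInstance
        exact inferInstance
    letI tsub : TopologicalSpace P := @instTopologicalSpaceSubtype _ _ tP
    have polP : @PolishSpace P tsub := @IsClosed.polishSpace _ tP polXZ _ hPc
    haveI : Nonempty P := hne.to_subtype
    obtain ⟨f, hfc, hfs⟩ := @PolishSpace.exists_nat_nat_continuous_surjective P tsub polP _
    have hvalc : @Continuous P (XX × ZZ) tsub tP Subtype.val := @continuous_subtype_val _ tP P
    have hfstc : @Continuous (XX × ZZ) XX tP t' Prod.fst := @continuous_fst _ _ t' _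
    refine ⟨fun z => (f z : XX × ZZ).1, ?_, ?_⟩
    · have h1 : @Continuous ZZ (XX × ZZ) _ tP (fun z => (f z : XX × ZZ)) :=
        @Continuous.comp ZZ P (XX × ZZ) _ tsub tP _ _ hvalc hfc
      have h2 : @Continuous ZZ XX _ t' (fun z => (f z : XX × ZZ).1) :=
        @Continuous.comp ZZ (XX × ZZ) XX _ tP t' _ _ hfstc h1
      exact @continuous_le_rng ZZ XX _ _ t' Pi.topologicalSpace ht'le h2
    · ext x
      simp only [Set.mem_setOf_eq, Set.mem_range]
      constructor
      · rintro ⟨z, hz⟩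
        obtain ⟨w, hw⟩ := hfs ⟨(x, z), hz⟩
        exact ⟨w, by rw [hw]⟩
      · rintro ⟨z, hz⟩
        refine ⟨((f z : XX × ZZ)).2, fun n => ?_⟩
        have hmem := (f z).2 n
        rw [← hz]
        exact hmem
  · refine Or.inl ?_
    ext x
    simp only [Set.mem_setOf_eq, Set.mem_empty_iff_false, iff_false, not_exists]
    intro z hz
    exact hne ⟨(x, z), hz⟩

lemma represent_proj (B : List ℕ → Set XX) (hB : ∀ s, MeasurableSet (B s)) :
    ∃ F : Set (XX × ZZ), IsClosed F ∧
      {x : XX | ∃ z : ZZ, ∀ n : ℕ, x ∈ B (List.ofFn fun i : Fin n => z i)} =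
        {x : XX | ∃ z : ZZ, (x, z) ∈ F} := by
  rcases represent_proj' B hB with h | ⟨g, hgc, hgr⟩
  · refine ⟨∅, isClosed_empty, ?_⟩
    rw [h]
    ext x
    simp
  · refine ⟨{p : XX × ZZ | g p.2 = p.1},
      isClosed_eq (hgc.comp continuous_snd) continuous_fst, ?_⟩
    rw [hgr]
    rfl

lemma key (B : List ℕ → Set XX) (hB : ∀ s, MeasurableSet (B s))
    (hDg : Dg = ⋃ σ : ZZ, ⋂ n : ℕ, B (List.ofFn fun i : Fin n => σ i)) : False := by
  obtain ⟨F, hFc, hFeq⟩ := represent_proj B hB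
  have hDgF : Dg = {x : XX | ∃ z : ZZ, (x, z) ∈ F} := by
    rw [hDg, ← hFeq]
    ext x
    simp only [Set.mem_iUnion, Set.mem_iInter, Set.mem_setOf_eq]
  obtain ⟨y, hy⟩ := universality hFc
  have h1 : y ∈ Dg ↔ ∃ z, (y, z) ∈ F := by rw [hDgF]; exact Iff.rfl
  have h2 : ∀ z, ((y, z) ∈ F ↔ memW y y z) := fun z => hy (y, z)
  by_cases hyD : y ∈ Dg
  · obtain ⟨z, hz⟩ := h1.1 hyD
    exact hyD z ((h2 z).1 hz)
  · apply hyD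
    intro z hz
    exact hyD (h1.2 ⟨z, (h2 z).2 hz⟩)

end L221

open Set Topology TopologicalSpace MeasureTheory Filter

namespace L221

/-- Choose a small rational closed interval inside `(c,d)` avoiding `N` given reals. -/
lemma sub_exists (c d : ℚ) (hcd : c < d) (N : ℕ) (g : ℕ → ℝ) :
    ∃ a l : ℚ, 0 < l ∧ c < a ∧ a + l < d ∧
      ∀ j < N, g j ∉ Set.Icc ((a : ℝ)) ((a : ℝ) + (l : ℝ)) := by
  classical
  have hcd' : (c : ℝ) < d := by exact_mod_cast hcd
  have hinf : (Set.Ioo (c : ℝ) (d : ℝ)).Infinite := Set.infinite_coe_iff.1 (Set.Ioo.infinite hcd')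
  have hfin : (Set.range fun j : Fin N => g j).Finite := Set.finite_range _
  obtain ⟨y, hy⟩ := (hinf.diff hfin).nonempty
  obtain ⟨⟨hyc, hyd⟩, hyg⟩ := hy
  set E : Finset ℝ := insert (y - c) (insert (d - y) ((Finset.range N).image fun j => |g j - y|))
    with hE
  have hEne : E.Nonempty := ⟨y - c, by simp [hE]⟩
  set ε : ℝ := E.min' hEne with hε
  have hεpos : 0 < ε := by
    rw [hε, Finset.lt_min'_iff]
    intro b hb
    simp only [hE, Finset.mem_insert, Finset.mem_image, Finset.mem_range] at hb
    rcases hb with rfl | rfl | ⟨j, hj, rfl⟩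
    · linarith
    · linarith
    · have : g j ≠ y := fun h => hyg ⟨⟨j, hj⟩, h⟩
      exact abs_pos.2 (sub_ne_zero.2 this)
  have hεc : ε ≤ y - c := Finset.min'_le _ _ (by simp [hE])
  have hεd : ε ≤ d - y := Finset.min'_le _ _ (by simp [hE])
  obtain ⟨a, ha1, ha2⟩ := exists_rat_btwn (show y - ε / 2 < y by linarith)
  obtain ⟨b, hb1, hb2⟩ := exists_rat_btwn (show y < y + ε / 2 by linarith)
  refine ⟨a, b - a, ?_, ?_, ?_, ?_⟩
  · have : (a : ℝ) < b := lt_trans ha2 hb1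
    have : a < b := by exact_mod_cast this
    linarith
  · have : (c : ℝ) < a := by linarith
    exact_mod_cast this
  · have : (a : ℝ) + (b - a : ℚ) < d := by push_cast; linarith
    have h2 : ((a + (b - a) : ℚ) : ℝ) < d := by push_cast; linarith
    exact_mod_cast h2
  · intro j hj hmem
    have hja : (a : ℝ) ≤ g j := hmem.1
    have hjb : g j ≤ (a : ℝ) + ((b - a : ℚ) : ℝ) := hmem.2
    have hjb' : g j ≤ (b : ℝ) := by push_cast at hjb; linarith
    have habs : |g j - y| < ε / 2 := by
      rw [abs_lt]
      constructor <;> linarith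
    have : ε ≤ |g j - y| := Finset.min'_le _ _ (by
      simp only [hE, Finset.mem_insert, Finset.mem_image, Finset.mem_range]
      exact Or.inr (Or.inr ⟨j, hj, rfl⟩))
    linarith

lemma hcd_aux (a l : ℚ) (hl : 0 < l) (i : ℕ) :
    a + l / ((i : ℚ) + 3) < a + l / ((i : ℚ) + 2) := by
  have h2 : (0 : ℚ) < (i : ℚ) + 2 := by positivity
  have h3 : (0 : ℚ) < (i : ℚ) + 3 := by positivity
  have : l / ((i : ℚ) + 3) < l / ((i : ℚ) + 2) := by
    apply div_lt_div_of_pos_left hl h2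
    linarith
  linarith

/-- State: (left endpoint, length, depth). -/
abbrev St := ℚ × ℚ × ℕ

noncomputable def childSt (q : ℕ+ → ℝ) (st : St) (i : ℕ) : St :=
  if h : 0 < st.2.1 then
    ((sub_exists (st.1 + st.2.1 / ((i : ℚ) + 3)) (st.1 + st.2.1 / ((i : ℚ) + 2))
        (hcd_aux st.1 st.2.1 h i) (st.2.2 + 2) (fun j => q j.succPNat)).choose,
     (sub_exists (st.1 + st.2.1 / ((i : ℚ) + 3)) (st.1 + st.2.1 / ((i : ℚ) + 2))
        (hcd_aux st.1 st.2.1 h i) (st.2.2 + 2) (fun j => q j.succPNat)).choose_spec.choose,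
     st.2.2 + 1)
  else (st.1, st.2.1, st.2.2 + 1)

lemma childSt_spec (q : ℕ+ → ℝ) (st : St) (h : 0 < st.2.1) (i : ℕ) :
    0 < (childSt q st i).2.1 ∧
    st.1 + st.2.1 / ((i : ℚ) + 3) < (childSt q st i).1 ∧
    (childSt q st i).1 + (childSt q st i).2.1 < st.1 + st.2.1 / ((i : ℚ) + 2) ∧
    (∀ j < st.2.2 + 2, q j.succPNat ∉
      Set.Icc (((childSt q st i).1 : ℝ)) (((childSt q st i).1 : ℝ) + ((childSt q st i).2.1 : ℝ))) ∧
    (childSt q st i).2.2 = st.2.2 + 1 := by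
  have hspec := (sub_exists (st.1 + st.2.1 / ((i : ℚ) + 3)) (st.1 + st.2.1 / ((i : ℚ) + 2))
      (hcd_aux st.1 st.2.1 h i) (st.2.2 + 2) (fun j => q j.succPNat)).choose_spec.choose_spec
  simp only [childSt, dif_pos h]
  exact ⟨hspec.1, hspec.2.1, hspec.2.2.1, fun j hj => hspec.2.2.2 j hj, trivial⟩

noncomputable def stS (q : ℕ+ → ℝ) (s : List ℕ) : St := s.foldl (childSt q) (1/3, 1/3, 0)

lemma stS_nil (q : ℕ+ → ℝ) : stS q [] = (1/3, 1/3, 0) := rfl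

lemma stS_append (q : ℕ+ → ℝ) (s : List ℕ) (i : ℕ) :
    stS q (s ++ [i]) = childSt q (stS q s) i := by
  simp [stS, List.foldl_append]

lemma stS_pos (q : ℕ+ → ℝ) (s : List ℕ) : 0 < (stS q s).2.1 := by
  induction s using List.reverseRecOn with
  | nil => norm_num [stS_nil]
  | append_singleton s i ih =>
    rw [stS_append]
    exact (childSt_spec q _ ih i).1

lemma stS_len (q : ℕ+ → ℝ) (s : List ℕ) : (stS q s).2.2 = s.length := by
  induction s using List.reverseRecOn with
  | nil => simp [stS_nil]
  | append_singleton s i ih =>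
    rw [stS_append, (childSt_spec q _ (stS_pos q s) i).2.2.2.2, ih]
    simp

/-- Nesting bounds for a single child step. -/
lemma stS_nest (q : ℕ+ → ℝ) (s : List ℕ) (i : ℕ) :
    (stS q s).1 < (stS q (s ++ [i])).1 ∧
    (stS q (s ++ [i])).1 + (stS q (s ++ [i])).2.1 < (stS q s).1 + (stS q s).2.1 ∧
    (stS q (s ++ [i])).2.1 ≤ (stS q s).2.1 / 6 ∧
    (stS q (s ++ [i])).1 + (stS q (s ++ [i])).2.1 < (stS q s).1 + (stS q s).2.1 / ((i : ℚ) + 2) := by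
  have hp := stS_pos q s
  obtain ⟨h1, h2, h3, _, _⟩ := childSt_spec q (stS q s) hp i
  rw [stS_append]
  have hi2 : (0 : ℚ) < (i : ℚ) + 2 := by positivity
  have hi3 : (0 : ℚ) < (i : ℚ) + 3 := by positivity
  have hd3 : 0 < (stS q s).2.1 / ((i : ℚ) + 3) := by positivity
  have hfrac : (stS q s).2.1 / ((i : ℚ) + 2) - (stS q s).2.1 / ((i : ℚ) + 3) ≤ (stS q s).2.1 / 6 := by
    rw [div_sub_div _ _ (ne_of_gt hi2) (ne_of_gt hi3)]
    have hnum : (stS q s).2.1 * ((i : ℚ) + 3) - ((i : ℚ) + 2) * (stS q s).2.1 = (stS q s).2.1 := by ring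
    rw [hnum]
    rw [div_le_div_iff₀ (by positivity) (by norm_num)]
    have : (6 : ℚ) ≤ ((i : ℚ) + 2) * ((i : ℚ) + 3) := by nlinarith [Nat.cast_nonneg (α := ℚ) i]
    nlinarith
  have hle2 : (stS q s).2.1 / ((i : ℚ) + 2) ≤ (stS q s).2.1 := by
    rw [div_le_iff₀ hi2]
    nlinarith
  refine ⟨by linarith, by linarith, by linarith, h3⟩

/-- Nesting along prefixes. -/
lemma stS_prefix (q : ℕ+ → ℝ) {s s' : List ℕ} (h : s <+: s') :
    (stS q s).1 ≤ (stS q s').1 ∧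
    (stS q s').1 + (stS q s').2.1 ≤ (stS q s).1 + (stS q s).2.1 := by
  obtain ⟨t, rfl⟩ := h
  induction t using List.reverseRecOn with
  | nil => simp
  | append_singleton t i ih =>
    rw [← List.append_assoc]
    obtain ⟨h1, h2, _, _⟩ := stS_nest q (s ++ t) i
    exact ⟨le_trans ih.1 (le_of_lt h1), le_trans (le_of_lt h2) ih.2⟩

lemma stS_bounds (q : ℕ+ → ℝ) (s : List ℕ) :
    (1/3 : ℚ) ≤ (stS q s).1 ∧ (stS q s).1 + (stS q s).2.1 ≤ 2/3 := by
  have := stS_prefix q (s := []) (s' := s) (List.nil_prefix)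
  rw [stS_nil] at this
  norm_num at this
  constructor
  · exact this.1
  · have := this.2
    linarith

lemma stS_avoid (q : ℕ+ → ℝ) (s : List ℕ) (i : ℕ) :
    ∀ j : ℕ, j < s.length + 2 → q j.succPNat ∉
      Set.Icc (((stS q (s ++ [i])).1 : ℝ)) (((stS q (s ++ [i])).1 : ℝ) + ((stS q (s ++ [i])).2.1 : ℝ)) := by
  intro j hj
  have := (childSt_spec q (stS q s) (stS_pos q s) i).2.2.2.1 j (by rw [stS_len]; exact hj)
  rw [stS_append]
  exact this

end L221
namespace L221

lemma prefix_snoc_get {w t : List ℕ} (hpre : w <+: t) (hlt : w.length < t.length) :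
    w ++ [t.get ⟨w.length, hlt⟩] <+: t := by
  have h1 : w = t.take w.length := List.prefix_iff_eq_take.1 hpre
  have h2 : t.take (w.length + 1) = t.take w.length ++ [t.get ⟨w.length, hlt⟩] := by
    rw [List.take_succ]
    congr 1
    rw [List.getElem?_eq_getElem hlt]
    rfl
  have h3 : w ++ [t.get ⟨w.length, hlt⟩] = t.take (w.length + 1) := by rw [h2, ← h1]
  rw [h3]
  exact List.take_prefix _ _

lemma koenig (q : ℕ+ → ℝ) (S : Set (List ℕ))
    (hdc : ∀ {s' s : List ℕ}, s' <+: s → s ∈ S → s' ∈ S)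
    (sq : ℕ → List ℕ) (hmem : ∀ k, sq k ∈ S) (p : ℝ)
    (hconv : Filter.Tendsto (fun k => (((stS q (sq k)).1 : ℝ))) Filter.atTop (𝓝 p))
    (hirr : ∀ w : List ℕ, (((stS q w).1 : ℝ)) ≠ p)
    (hfin : ∀ w : List ℕ, {k | sq k = w}.Finite) :
    ∃ z : ℕ → ℕ, ∀ n, (List.ofFn fun i : Fin n => z i) ∈ S := by
  have step : ∀ w : List ℕ, {k | w <+: sq k}.Infinite →
      ∃ i : ℕ, {k | w ++ [i] <+: sq k}.Infinite := by
    intro w hw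
    by_contra hno
    push_neg at hno
    have hfins : ∀ i, {k | w ++ [i] <+: sq k}.Finite := fun i => hno i
    have hAinf : {k | w <+: sq k ∧ sq k ≠ w}.Infinite :=
      (hw.diff (hfin w)).mono (fun k hk => ⟨hk.1, hk.2⟩)
    have hAp : ((stS q w).1 : ℝ) = p := by
      have key : ∀ ε : ℝ, 0 < ε → |((stS q w).1 : ℝ) - p| < 2 * ε := by
        intro ε hε
        obtain ⟨B, hB⟩ := exists_nat_gt (((stS q w).2.1 : ℝ) / ε)
        obtain ⟨K, hK⟩ := (Metric.tendsto_atTop.1 hconv) ε hε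
        by_cases hex : ∃ k, (w <+: sq k ∧ sq k ≠ w) ∧ K ≤ k ∧
            ∃ (hlt : w.length < (sq k).length), B ≤ (sq k).get ⟨w.length, hlt⟩
        · obtain ⟨k, ⟨hpre, hne⟩, hkK, hlt, hB'⟩ := hex
          set i := (sq k).get ⟨w.length, hlt⟩ with hi
          have hsnoc : w ++ [i] <+: sq k := prefix_snoc_get hpre hlt
          have h1 := stS_prefix q hsnoc
          have h2 := stS_nest q w i
          have hLsq := stS_pos q (sq k)
          have hLw := stS_pos q w
          have hA1 : (stS q w).1 < (stS q (sq k)).1 := lt_of_lt_of_le h2.1 h1.1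
          have hA2 : (stS q (sq k)).1 < (stS q w).1 + (stS q w).2.1 / ((i : ℚ) + 2) := by
            calc (stS q (sq k)).1 < (stS q (sq k)).1 + (stS q (sq k)).2.1 := by linarith
            _ ≤ (stS q (s := w ++ [i])).1 + (stS q (w ++ [i])).2.1 := h1.2
            _ < (stS q w).1 + (stS q w).2.1 / ((i : ℚ) + 2) := h2.2.2.2
          have hiB : ((B : ℚ) + 2) ≤ ((i : ℚ) + 2) := by
            have : (B : ℚ) ≤ i := by exact_mod_cast hB'
            linarith
          have hdivle : (stS q w).2.1 / ((i : ℚ) + 2) ≤ (stS q w).2.1 / ((B : ℚ) + 2) := by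
            apply div_le_div_of_nonneg_left (le_of_lt hLw) (by positivity) hiB
          have hdivlt : ((stS q w).2.1 : ℝ) / ((B : ℝ) + 2) < ε := by
            rw [div_lt_iff₀ (by positivity)]
            have hB2 : ((stS q w).2.1 : ℝ) < ε * B := by
              rw [div_lt_iff₀ hε] at hB
              linarith
            nlinarith
          have hdist := hK k hkK
          rw [Real.dist_eq] at hdist
          have hq1 : ((stS q w).1 : ℝ) < ((stS q (sq k)).1 : ℝ) := by exact_mod_cast hA1
          have hA2' : (stS q (sq k)).1 < (stS q w).1 + (stS q w).2.1 / ((B : ℚ) + 2) :=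
            lt_of_lt_of_le hA2 (by linarith)
          have hq2 : ((stS q (sq k)).1 : ℝ) < ((stS q w).1 : ℝ) + ((stS q w).2.1 : ℝ) / ((B : ℝ) + 2) := by
            exact_mod_cast hA2'
          rw [abs_lt] at hdist ⊢
          constructor <;> nlinarith
        · exfalso
          push_neg at hex
          have hsub : {k | w <+: sq k ∧ sq k ≠ w} ⊆
              (Set.Iio K) ∪ ⋃ i ∈ Finset.range B, {k | w ++ [i] <+: sq k} := by
            intro k hk
            by_cases hkK : K ≤ k
            · right
              have hlt : w.length < (sq k).length :=
                lt_of_le_of_ne hk.1.length_le (fun h => hk.2 (hk.1.eq_of_length h).symm)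
              have hiB := hex k hk hkK hlt
              exact Set.mem_biUnion (Finset.mem_range.2 hiB) (prefix_snoc_get hk.1 hlt)
            · exact Or.inl (not_le.1 hkK)
          exact hAinf (((Set.finite_Iio K).union
            ((Finset.range B).finite_toSet.biUnion (fun i _ => hfins i))).subset hsub)
      have hle : ∀ ε > (0:ℝ), dist ((stS q w).1 : ℝ) p ≤ ε := by
        intro ε hε
        have := key (ε/2) (by linarith)
        rw [Real.dist_eq]
        linarith
      exact eq_of_forall_dist_le hle
    exact hirr w hAp
  choose F hF using step
  have h0 : {k | [] <+: sq k}.Infinite := by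
    have : {k | ([] : List ℕ) <+: sq k} = Set.univ := by
      ext k; simp
    rw [this]
    exact Set.infinite_univ
  obtain ⟨W, hW0, hWs⟩ : ∃ W : ℕ → {w : List ℕ // {k | w <+: sq k}.Infinite},
      (W 0).1 = [] ∧ ∀ n, (W (n + 1)).1 = (W n).1 ++ [F (W n).1 (W n).2] :=
    ⟨fun n => Nat.rec ⟨[], h0⟩ (fun _ prev => ⟨prev.1 ++ [F prev.1 prev.2], hF prev.1 prev.2⟩) n,
      rfl, fun n => rfl⟩
  refine ⟨fun n => F (W n).1 (W n).2, fun n => ?_⟩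
  have hWof : ∀ n, (List.ofFn fun i : Fin n => F (W (i : ℕ)).1 (W (i : ℕ)).2) = (W n).1 := by
    intro n
    induction n with
    | zero => simp [hW0]
    | succ n ih =>
      rw [List.ofFn_succ']
      simp only [Fin.coe_castSucc, Fin.val_last, List.concat_eq_append]
      rw [ih, ← hWs n]
  rw [hWof n]
  obtain ⟨k, hk⟩ := (W n).2.nonempty
  exact hdc hk (hmem k)

end L221
namespace L221

lemma ofFn_succ_append (z : ℕ → ℕ) (n : ℕ) :
    (List.ofFn fun i : Fin (n + 1) => z i) = (List.ofFn fun i : Fin n => z i) ++ [z n] := by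
  rw [List.ofFn_succ']
  simp [List.concat_eq_append]

lemma prefix_ofFn_iff (t : List ℕ) (z : ℕ → ℕ) (n : ℕ) :
    t <+: (List.ofFn fun i : Fin n => z i) ↔ t.length ≤ n ∧ ∀ i : Fin t.length, z i = t.get i := by
  constructor
  · intro h
    have hlen : t.length ≤ n := by simpa using h.length_le
    refine ⟨hlen, fun i => ?_⟩
    have := h.getElem (i := (i : ℕ)) i.isLt
    rw [List.getElem_ofFn] at this
    simp only [List.get_eq_getElem]
    rw [this]
  · rintro ⟨hlen, hget⟩
    rw [List.prefix_iff_eq_take]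
    apply List.ext_getElem
    · simp [hlen]
    · intro i h1 h2
      have hi : i < t.length := h1
      rw [List.getElem_take]
      rw [List.getElem_ofFn]
      exact (hget ⟨i, hi⟩).symm

lemma ofFn_prefix_ofFn (z : ℕ → ℕ) {n m : ℕ} (h : n ≤ m) :
    (List.ofFn fun i : Fin n => z i) <+: (List.ofFn fun i : Fin m => z i) := by
  rw [prefix_ofFn_iff]
  constructor
  · simpa using h
  · intro i
    simp [List.get_ofFn]

section Construction

variable (q : ℕ+ → ℝ) (hrange : range q = {x | x ∈ Icc (0:ℝ) 1 ∧ ¬ Irrational x})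

lemma A_bounds (s : List ℕ) : (0 : ℝ) ≤ ((stS q s).1 : ℝ) ∧ ((stS q s).1 : ℝ) ≤ 1 := by
  obtain ⟨h1, h2⟩ := stS_bounds q s
  have hL := stS_pos q s
  constructor
  · have : (1/3 : ℚ) ≤ (stS q s).1 := h1
    have := (Rat.cast_le (K := ℝ)).2 this
    push_cast at this
    linarith
  · have : (stS q s).1 ≤ 2/3 := by linarith
    have := (Rat.cast_le (K := ℝ)).2 this
    push_cast at this
    linarith

include hrange

lemma A_mem_range (s : List ℕ) : ((stS q s).1 : ℝ) ∈ range q := by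
  rw [hrange]
  exact ⟨⟨(A_bounds q s).1, (A_bounds q s).2⟩, Rat.not_irrational _⟩

noncomputable def nIdx (s : List ℕ) : ℕ+ := (A_mem_range q hrange s).choose

lemma nIdx_spec (s : List ℕ) : q (nIdx q hrange s) = ((stS q s).1 : ℝ) :=
  (A_mem_range q hrange s).choose_spec

noncomputable def mIdx (s : List ℕ) : ℕ+ :=
  ⟨2 ^ ((nIdx q hrange s : ℕ)) * 3 ^ (Encodable.encode s + 1) * 5 ^ (s.length + 1), by positivity⟩

lemma nIdx_le_mIdx (s : List ℕ) : (nIdx q hrange s : ℕ) ≤ (mIdx q hrange s : ℕ) := by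
  show (nIdx q hrange s : ℕ) ≤ 2 ^ ((nIdx q hrange s : ℕ)) * 3 ^ (Encodable.encode s + 1) * 5 ^ (s.length + 1)
  calc (nIdx q hrange s : ℕ) ≤ 2 ^ ((nIdx q hrange s : ℕ)) := Nat.le_of_lt (Nat.lt_two_pow_self)
  _ ≤ 2 ^ ((nIdx q hrange s : ℕ)) * 3 ^ (Encodable.encode s + 1) :=
      Nat.le_mul_of_pos_right _ (by positivity)
  _ ≤ _ := Nat.le_mul_of_pos_right _ (by positivity)

lemma len_lt_mIdx (s : List ℕ) : s.length + 1 ≤ (mIdx q hrange s : ℕ) := by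
  show s.length + 1 ≤ 2 ^ ((nIdx q hrange s : ℕ)) * 3 ^ (Encodable.encode s + 1) * 5 ^ (s.length + 1)
  calc s.length + 1 ≤ 5 ^ (s.length + 1) := Nat.le_of_lt (Nat.lt_pow_self (by norm_num))
  _ ≤ (2 ^ ((nIdx q hrange s : ℕ)) * 3 ^ (Encodable.encode s + 1)) * 5 ^ (s.length + 1) :=
      Nat.le_mul_of_pos_left _ (by positivity)

lemma mIdx_inj {s s' : List ℕ} (h : mIdx q hrange s = mIdx q hrange s') : s = s' := by
  have hval : 2 ^ ((nIdx q hrange s : ℕ)) * 3 ^ (Encodable.encode s + 1) * 5 ^ (s.length + 1) =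
      2 ^ ((nIdx q hrange s' : ℕ)) * 3 ^ (Encodable.encode s' + 1) * 5 ^ (s'.length + 1) :=
    congrArg (fun m : ℕ+ => (m : ℕ)) h
  have hfac : ∀ (a b c : ℕ), (2 ^ a * 3 ^ b * 5 ^ c).factorization 3 = b := by
    intro a b c
    rw [Nat.factorization_mul (by positivity) (by positivity),
      Nat.factorization_mul (by positivity) (by positivity),
      Nat.Prime.factorization_pow (by norm_num), Nat.Prime.factorization_pow (by norm_num),
      Nat.Prime.factorization_pow (by norm_num)]
    simp [Finsupp.single_apply]
  have h3 : Encodable.encode s + 1 = Encodable.encode s' + 1 := by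
    have h0 := congrArg (fun n : ℕ => n.factorization 3) hval
    rw [hfac, hfac] at h0
    exact h0
  exact Encodable.encode_injective (Nat.succ_injective h3)

noncomputable def dPt (s : List ℕ) : ℝ × ℝ :=
  (((stS q s).1 : ℝ), 1 / (((mIdx q hrange s : ℕ) : ℝ)))

lemma dPt_snd_pos (s : List ℕ) : 0 < (dPt q hrange s).2 := by
  have h : (0 : ℝ) < ((mIdx q hrange s : ℕ) : ℝ) := by
    exact_mod_cast (mIdx q hrange s).pos
  exact one_div_pos.2 h

lemma dPt_mem_D (s : List ℕ) : dPt q hrange s ∈ Dset q := by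
  refine ⟨nIdx q hrange s, mIdx q hrange s, ?_, ?_⟩
  · exact_mod_cast nIdx_le_mIdx q hrange s
  · rw [dPt, nIdx_spec q hrange s]

lemma dPt_mem_T (s : List ℕ) : dPt q hrange s ∈ Tset q := Or.inr (dPt_mem_D q hrange s)

lemma branch_limit (z : ℕ → ℕ) :
    ∃ x0 : ℝ, (x0, 0) ∈ Lset ∧
      Filter.Tendsto (fun n => dPt q hrange (List.ofFn fun i : Fin n => z i))
        Filter.atTop (𝓝 (x0, 0)) := by
  set sn : ℕ → List ℕ := fun n => List.ofFn fun i : Fin n => z i with hsn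
  set u : ℕ → ℝ := fun n => ((stS q (sn n)).1 : ℝ) with hu
  have hmono : Monotone u := by
    apply monotone_nat_of_le_succ
    intro n
    have hns : sn (n + 1) = sn n ++ [z n] := ofFn_succ_append z n
    have h := (stS_nest q (sn n) (z n)).1
    rw [← hns] at h
    simp only [hu]
    exact_mod_cast le_of_lt h
  have hbdd : BddAbove (range u) := by
    refine ⟨1, ?_⟩
    rintro x ⟨n, rfl⟩
    exact (A_bounds q (sn n)).2
  set x0 : ℝ := ⨆ n, u n with hx0
  have htend : Filter.Tendsto u Filter.atTop (𝓝 x0) := tendsto_atTop_ciSup hmono hbdd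
  have hx0mem : ∀ n, u n ≤ x0 ∧ x0 ≤ u n + ((stS q (sn n)).2.1 : ℝ) := by
    intro n
    constructor
    · exact le_ciSup hbdd n
    · apply ciSup_le
      intro m
      rcases le_total m n with hmn | hnm
      · have h1 : u m ≤ u n := hmono hmn
        have h2 : (0 : ℝ) < ((stS q (sn n)).2.1 : ℝ) := by exact_mod_cast stS_pos q (sn n)
        linarith
      · have hpre : sn n <+: sn m := ofFn_prefix_ofFn z hnm
        have h1 := (stS_prefix q hpre).2
        have h2 : (0 : ℝ) < ((stS q (sn m)).2.1 : ℝ) := by exact_mod_cast stS_pos q (sn m)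
        have h1' : ((stS q (sn m)).1 : ℝ) + ((stS q (sn m)).2.1 : ℝ) ≤
            ((stS q (sn n)).1 : ℝ) + ((stS q (sn n)).2.1 : ℝ) := by exact_mod_cast h1
        simp only [hu]
        linarith
  have hx0Icc : x0 ∈ Icc (0 : ℝ) 1 := by
    constructor
    · exact le_trans (A_bounds q (sn 0)).1 (hx0mem 0).1
    · have h2 := (hx0mem 0).2
      have hb := stS_bounds q (sn 0)
      have : ((stS q (sn 0)).1 : ℝ) + ((stS q (sn 0)).2.1 : ℝ) ≤ 2/3 := by
        have h' : (((stS q (sn 0)).1 + (stS q (sn 0)).2.1 : ℚ) : ℝ) ≤ ((2/3 : ℚ) : ℝ) := by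
          exact_mod_cast hb.2
        push_cast at h'
        linarith
      have : x0 ≤ 2/3 := le_trans h2 this
      linarith
  have hx0irr : Irrational x0 := by
    by_contra hirr
    have hx0range : x0 ∈ range q := by rw [hrange]; exact ⟨hx0Icc, hirr⟩
    obtain ⟨j, hj⟩ := hx0range
    set n : ℕ := (j : ℕ) with hn
    have hlt : j.natPred < (sn n).length + 2 := by
      have h1 : (sn n).length = n := by simp [hsn]
      rw [h1]
      have h2 : 0 < (j : ℕ) := j.2
      have h3 : j.natPred = (j : ℕ) - 1 := rfl
      omega
    have havoid := stS_avoid q (sn n) (z n) j.natPred hlt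
    rw [PNat.succPNat_natPred] at havoid
    have hsucc : sn n ++ [z n] = sn (n + 1) := (ofFn_succ_append z n).symm
    rw [hsucc] at havoid
    have hx0in : x0 ∈ Set.Icc (((stS q (sn (n+1))).1 : ℝ))
        (((stS q (sn (n+1))).1 : ℝ) + ((stS q (sn (n+1))).2.1 : ℝ)) :=
      ⟨(hx0mem (n+1)).1, (hx0mem (n+1)).2⟩
    rw [hj] at havoid
    exact havoid hx0in
  have hsnd : Filter.Tendsto (fun k : ℕ => 1 / (((mIdx q hrange (sn k) : ℕ) : ℝ)))
      Filter.atTop (𝓝 0) := by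
    apply squeeze_zero (fun k => by positivity) (g := fun k : ℕ => 1 / ((k : ℝ) + 1))
    · intro k
      apply one_div_le_one_div_of_le (by positivity)
      have hm : k + 1 ≤ (mIdx q hrange (sn k) : ℕ) := by
        have := len_lt_mIdx q hrange (sn k)
        simpa [hsn] using this
      exact_mod_cast hm
    · exact tendsto_one_div_add_atTop_nhds_zero_nat
  refine ⟨x0, ⟨hx0Icc, hx0irr, rfl⟩, ?_⟩
  exact htend.prodMk_nhds hsnd

end Construction

end L221
namespace L221

/-- The tree of finite sequences compatible with `x`. -/
def Tx (x : XX) : Set (List ℕ) :=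
  {s | ∀ k < s.length, ¬(x k = true ∧ PrefF (enu k).1 x ∧ (enu k).2 <+: s)}

lemma Tx_dc {x : XX} {s' s : List ℕ} (hpre : s' <+: s) (hs : s ∈ Tx x) : s' ∈ Tx x := by
  intro k hk hbad
  exact hs k (lt_of_lt_of_le hk hpre.length_le) ⟨hbad.1, hbad.2.1, hbad.2.2.trans hpre⟩

lemma Tx_branch_iff (x : XX) :
    (∃ z : ℕ → ℕ, ∀ n, (List.ofFn fun i : Fin n => z i) ∈ Tx x) ↔ ∃ z, memW x x z := by
  constructor
  · rintro ⟨z, hz⟩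
    refine ⟨z, fun k hk hcyl => ?_⟩
    set n := max (k + 1) (enu k).2.length with hn
    refine hz n k ?_ ⟨hk, hcyl.1, ?_⟩
    · simp only [List.length_ofFn]
      have := le_max_left (k + 1) (enu k).2.length
      omega
    · rw [prefix_ofFn_iff]
      exact ⟨le_max_right _ _, fun i => hcyl.2 i⟩
  · rintro ⟨z, hz⟩
    refine ⟨z, fun n => ?_⟩
    rintro k hk ⟨h1, h2, h3⟩
    exact hz k h1 ⟨h2, ((prefix_ofFn_iff _ z n).1 h3).2⟩

lemma Tx_measurable (s : List ℕ) : MeasurableSet {x : XX | s ∈ Tx x} := by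
  classical
  have : {x : XX | s ∈ Tx x} =
      ⋂ k ∈ Finset.range s.length,
        ({x : XX | x k = true} ∩ {x : XX | PrefF (enu k).1 x} ∩
          {x : XX | (enu k).2 <+: s})ᶜ := by
    ext x
    simp only [Set.mem_setOf_eq, Set.mem_iInter, Finset.mem_range, Set.mem_compl_iff,
      Set.mem_inter_iff, Tx]
    constructor
    · intro h k hk hbad
      exact h k hk ⟨hbad.1.1, hbad.1.2, hbad.2⟩
    · intro h k hk hbad
      exact h k hk ⟨⟨hbad.1, hbad.2.1⟩, hbad.2.2⟩
  rw [this]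
  apply MeasurableSet.biInter (Set.to_countable _)
  intro k _
  apply MeasurableSet.compl
  apply MeasurableSet.inter
  · apply MeasurableSet.inter
    · have h := (measurable_pi_apply (a := k) (X := fun _ : ℕ => Bool)) (measurableSet_singleton true)
      have he : {x : XX | x k = true} = (fun x : XX => x k) ⁻¹' {true} := by
        ext x; simp
      rw [he]
      exact h
    · exact prefF_measurableSet _
  · by_cases ht : (enu k).2 <+: s
    · have : {x : XX | (enu k).2 <+: s} = Set.univ := by ext x; simp [ht]
      rw [this]; exact MeasurableSet.univ
    · have : {x : XX | (enu k).2 <+: s} = ∅ := by ext x; simp [ht]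
      rw [this]; exact MeasurableSet.empty

lemma closure_inter_open_nonempty {Y : Type*} [TopologicalSpace Y] {S U : Set Y}
    (hU : IsOpen U) : (closure S ∩ U).Nonempty ↔ (S ∩ U).Nonempty := by
  constructor
  · rintro ⟨a, haS, haU⟩
    have : a ∈ U ∩ closure S := ⟨haU, haS⟩
    have h2 := hU.inter_closure this
    obtain ⟨b, hbU, hbS⟩ := closure_nonempty_iff.1 ⟨a, h2⟩
    exact ⟨b, hbS, hbU⟩
  · rintro ⟨a, haS, haU⟩
    exact ⟨a, subset_closure haS, haU⟩

end L221
/-- Lemma 2.2.1. -/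
theorem souslin_set_containing_closed_subsets_of_D_meets_L
    (q : ℕ+ → ℝ) (hq : Function.Injective q)
    (hrange : range q = {x | x ∈ Icc (0:ℝ) 1 ∧ ¬ Irrational x})
    (𝓔 : Set {A : Set (Tset q) // IsClosed A})
    (h𝓔 : IsSouslinIn (effrosSigma (Tset q)) 𝓔)
    (h𝓓 : {A : {A : Set (Tset q) // IsClosed A} |
        ∀ x ∈ (A : Set (Tset q)), (x : ℝ × ℝ) ∈ Dset q} ⊆ 𝓔) :
    ∃ A ∈ 𝓔, ∃ x : Tset q, x ∈ (A : Set (Tset q)) ∧ (x : ℝ × ℝ) ∈ Lset := by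
  classical
  by_contra hcon
  push_neg at hcon
  obtain ⟨f, hf, hEq⟩ := h𝓔
  set SS : L221.XX → Set (Tset q) :=
    fun x => {t | ∃ s ∈ L221.Tx x, (t : ℝ × ℝ) = L221.dPt q hrange s} with hSS
  set Ψ : L221.XX → {A : Set (Tset q) // IsClosed A} :=
    fun x => ⟨closure (SS x), isClosed_closure⟩ with hΨ
  -- Ψ is measurable for the Effros Borel structure
  have hmeas : @Measurable _ _ _ (effrosSigma (Tset q)) Ψ := by
    apply measurable_generateFrom
    rintro 𝓤 ⟨U, hU, rfl⟩
    have hre : Ψ ⁻¹' {A : {A : Set (Tset q) // IsClosed A} | ((A : Set (Tset q)) ∩ U).Nonempty} =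
        ⋃ s : List ℕ, {x : L221.XX | s ∈ L221.Tx x ∧
          (⟨L221.dPt q hrange s, L221.dPt_mem_T q hrange s⟩ : Tset q) ∈ U} := by
      ext x
      simp only [Set.mem_preimage, Set.mem_setOf_eq, Set.mem_iUnion]
      rw [L221.closure_inter_open_nonempty hU]
      constructor
      · rintro ⟨t, ⟨s, hsT, hts⟩, htU⟩
        refine ⟨s, hsT, ?_⟩
        have ht' : t = (⟨L221.dPt q hrange s, L221.dPt_mem_T q hrange s⟩ : Tset q) :=
          Subtype.ext hts
        rwa [ht'] at htU
      · rintro ⟨s, hsT, hsU⟩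
        exact ⟨⟨L221.dPt q hrange s, L221.dPt_mem_T q hrange s⟩, ⟨s, hsT, rfl⟩, hsU⟩
    rw [hre]
    apply MeasurableSet.iUnion
    intro s
    by_cases hsU : (⟨L221.dPt q hrange s, L221.dPt_mem_T q hrange s⟩ : Tset q) ∈ U
    · have he : {x : L221.XX | s ∈ L221.Tx x ∧
          (⟨L221.dPt q hrange s, L221.dPt_mem_T q hrange s⟩ : Tset q) ∈ U} =
          {x : L221.XX | s ∈ L221.Tx x} := by
        ext x; simp [hsU]
      rw [he]; exact L221.Tx_measurable s
    · have he : {x : L221.XX | s ∈ L221.Tx x ∧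
          (⟨L221.dPt q hrange s, L221.dPt_mem_T q hrange s⟩ : Tset q) ∈ U} = ∅ := by
        ext x; simp [hsU]
      rw [he]; exact MeasurableSet.empty
  -- Dg = Ψ ⁻¹' 𝓔
  have hDgEq : L221.Dg = Ψ ⁻¹' 𝓔 := by
    ext x
    constructor
    · intro hxD
      have hnobranch : ¬ ∃ z : ℕ → ℕ, ∀ n, (List.ofFn fun i : Fin n => z i) ∈ L221.Tx x := by
        intro hbr
        obtain ⟨z, hz⟩ := (L221.Tx_branch_iff x).1 hbr
        exact hxD z hz
      have hclosed : IsClosed (SS x) := by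
        apply IsSeqClosed.isClosed
        intro tn t htn hlim
        choose sfun hsTx hsEq using htn
        have hlim' : Filter.Tendsto (fun k => ((tn k : ℝ × ℝ))) Filter.atTop
            (𝓝 ((t : ℝ × ℝ))) := ((continuous_subtype_val).tendsto t).comp hlim
        have hlimd : Filter.Tendsto (fun k => L221.dPt q hrange (sfun k)) Filter.atTop
            (𝓝 ((t : ℝ × ℝ))) := by
          rw [show (fun k => L221.dPt q hrange (sfun k)) = (fun k => ((tn k : ℝ × ℝ)))
            from funext fun k => (hsEq k).symm]
          exact hlim'
        by_cases hW : ∃ s₀ ∈ L221.Tx x, ((t : ℝ × ℝ)) = L221.dPt q hrange s₀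
        · obtain ⟨s₀, hs₀, hts₀⟩ := hW
          exact ⟨s₀, hs₀, hts₀⟩
        · exfalso
          push_neg at hW
          have hfst : Filter.Tendsto (fun k => ((L221.stS q (sfun k)).1 : ℝ)) Filter.atTop
              (𝓝 ((t : ℝ × ℝ)).1) := (continuous_fst.tendsto _).comp hlimd
          have hsnd : Filter.Tendsto
              (fun k => 1 / (((L221.mIdx q hrange (sfun k) : ℕ)) : ℝ)) Filter.atTop
              (𝓝 ((t : ℝ × ℝ)).2) := (continuous_snd.tendsto _).comp hlimd
          have hfreq_imp : ∀ w : List ℕ, {k | sfun k = w}.Infinite →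
              ((t : ℝ × ℝ)) = L221.dPt q hrange w := by
            intro w hw
            have hfr : ∃ᶠ k in Filter.atTop,
                L221.dPt q hrange (sfun k) = L221.dPt q hrange w :=
              Nat.frequently_atTop_iff_infinite.2 (hw.mono fun k hk => by
                simp only [Set.mem_setOf_eq] at hk ⊢; rw [hk])
            exact tendsto_nhds_unique_of_frequently_eq hlimd tendsto_const_nhds hfr
          have ht2 : ((t : ℝ × ℝ)).2 = 0 := by
            by_contra h0
            have hge : (0 : ℝ) ≤ ((t : ℝ × ℝ)).2 :=
              ge_of_tendsto' hsnd (fun k => le_of_lt (by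
                have hm0 : (0 : ℝ) < ((L221.mIdx q hrange (sfun k) : ℕ) : ℝ) := by
                  exact_mod_cast (L221.mIdx q hrange (sfun k)).pos
                exact one_div_pos.2 hm0))
            have hpos : (0 : ℝ) < ((t : ℝ × ℝ)).2 := lt_of_le_of_ne hge (Ne.symm h0)
            have hev : ∀ᶠ k in Filter.atTop,
                (((L221.mIdx q hrange (sfun k) : ℕ)) : ℝ) < 2 / ((t : ℝ × ℝ)).2 := by
              have hhalf : ∀ᶠ k in Filter.atTop,
                  ((t : ℝ × ℝ)).2 / 2 < 1 / (((L221.mIdx q hrange (sfun k) : ℕ)) : ℝ) :=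
                hsnd.eventually (eventually_gt_nhds (by linarith))
              filter_upwards [hhalf] with k hk
              have hm0 : (0 : ℝ) < ((L221.mIdx q hrange (sfun k) : ℕ) : ℝ) := by
                exact_mod_cast (L221.mIdx q hrange (sfun k)).pos
              rw [lt_div_iff₀ hm0] at hk
              rw [lt_div_iff₀ hpos]
              nlinarith
            obtain ⟨K, hK⟩ := Filter.eventually_atTop.1 hev
            set B : ℕ := ⌈(2 / ((t : ℝ × ℝ)).2)⌉₊ with hB
            have hcover : {k | K ≤ k} ⊆ ⋃ M ∈ Finset.range (B + 1),
                {k | (L221.mIdx q hrange (sfun k) : ℕ) = M} := by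
              intro k hk
              have h1 := hK k hk
              have h2 : ((L221.mIdx q hrange (sfun k) : ℕ) : ℝ) ≤ (B : ℝ) :=
                le_trans (le_of_lt h1) (Nat.le_ceil _)
              have h3 : (L221.mIdx q hrange (sfun k) : ℕ) < B + 1 :=
                Nat.lt_succ_of_le (by exact_mod_cast h2)
              exact Set.mem_biUnion (Finset.mem_range.2 h3) rfl
            have hKinf : {k : ℕ | K ≤ k}.Infinite :=
              Set.infinite_of_injective_forall_mem (f := fun n : ℕ => K + n)
                (fun a b hab => Nat.add_left_cancel hab) (fun n => by simp)
            have hpig : ∃ M ∈ Finset.range (B + 1),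
                {k | (L221.mIdx q hrange (sfun k) : ℕ) = M}.Infinite := by
              by_contra hall
              push_neg at hall
              have hfinU : (⋃ M ∈ Finset.range (B + 1),
                  {k | (L221.mIdx q hrange (sfun k) : ℕ) = M}).Finite :=
                Set.Finite.biUnion (Finset.range (B + 1)).finite_toSet
                  (fun M hM => hall M hM)
              exact hKinf (hfinU.subset hcover)
            obtain ⟨M, _, hMinf⟩ := hpig
            obtain ⟨k0, hk0⟩ := hMinf.nonempty
            have hsame : {k | (L221.mIdx q hrange (sfun k) : ℕ) = M} ⊆
                {k | sfun k = sfun k0} := by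
              intro k hk
              simp only [Set.mem_setOf_eq] at hk hk0 ⊢
              exact L221.mIdx_inj q hrange (PNat.coe_injective (hk.trans hk0.symm))
            exact hW (sfun k0) (hsTx k0) (hfreq_imp (sfun k0) (hMinf.mono hsame))
          have htL : ((t : ℝ × ℝ)) ∈ Lset := by
            rcases t.2 with h | h
            · exact h
            · exfalso
              obtain ⟨n, m, _, hp⟩ := h
              have h1 : ((t : ℝ × ℝ)).2 = 1 / (m : ℝ) := by rw [hp]
              rw [ht2] at h1
              have hm0 : (0 : ℝ) < (m : ℝ) := by exact_mod_cast m.pos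
              have h2 := one_div_pos.2 hm0
              linarith
          have hbr := L221.koenig q (L221.Tx x) (fun {s' s} h hs => L221.Tx_dc h hs)
            sfun hsTx (((t : ℝ × ℝ)).1) hfst
            (fun w hA => htL.2.1 ⟨(L221.stS q w).1, hA⟩)
            (fun w => by
              by_contra hnf
              have hinf : {k | sfun k = w}.Infinite := hnf
              have hw := hfreq_imp w hinf
              have := L221.dPt_snd_pos q hrange w
              rw [← hw] at this
              rw [ht2] at this
              exact lt_irrefl _ this)
          exact hnobranch hbr
      show Ψ x ∈ 𝓔
      apply h𝓓
      intro tt htt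
      have h1 : closure (SS x) = SS x := hclosed.closure_eq
      have htt' : tt ∈ closure (SS x) := htt
      rw [h1] at htt'
      obtain ⟨s, _, hts⟩ := htt'
      rw [hts]
      exact L221.dPt_mem_D q hrange s
    · intro hxE
      by_contra hxD
      have hex : ∃ z, L221.memW x x z := by
        simp only [L221.Dg, Set.mem_setOf_eq, not_forall, not_not] at hxD
        exact hxD
      obtain ⟨z, hz⟩ := (L221.Tx_branch_iff x).2 hex
      obtain ⟨x0, hx0L, htend⟩ := L221.branch_limit q hrange z
      have hx0T : ((x0, (0:ℝ)) : ℝ × ℝ) ∈ Tset q := Or.inl hx0L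
      have hptcl : (⟨(x0, 0), hx0T⟩ : Tset q) ∈ closure (SS x) := by
        rw [closure_subtype]
        apply mem_closure_of_tendsto htend
        filter_upwards with n
        exact ⟨⟨L221.dPt q hrange (List.ofFn fun i : Fin n => z i),
          L221.dPt_mem_T q hrange _⟩, ⟨_, hz n, rfl⟩, rfl⟩
      exact hcon (Ψ x) hxE ⟨(x0, 0), hx0T⟩ hptcl hx0L
  -- conclude with the diagonal lemma
  apply L221.key (fun s => Ψ ⁻¹' (f s)) (fun s => hmeas (hf s))
  rw [hDgEq, hEq]
  simp only [Set.preimage_iUnion, Set.preimage_iInter]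
end

section
/- Let f : E → F be a continuous map of an analytic space E onto a non-σ-compact metrizable space F. Then there exist a closed subspace P of F homeomorphic to the irrationals ℕ^ℕ and continuous maps gₙ : P → E (n = 1, 2, …) such that, for each t ∈ P, the set {gₙ(t) : n = 1, 2, …} is a dense subset of the fiber f⁻¹(t). -/
open Set Topology TopologicalSpace MeasureTheory

open Metric Filter

namespace SRaux

/-! ### Cylinders in `ℕ → ℕ` indexed by lists -/

/-- The basic clopen set of all sequences extending the finite list `w`. -/
def Cyl (w : List ℕ) : Set (ℕ → ℕ) := {x | ∀ i, i < w.length → x i = w.getD i 0}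

/-- The prefix of length `n` of a sequence. -/
def pfx (τ : ℕ → ℕ) (n : ℕ) : List ℕ := List.ofFn fun i : Fin n => τ i

@[simp] lemma pfx_length (τ : ℕ → ℕ) (n : ℕ) : (pfx τ n).length = n := by
  simp [pfx]

lemma pfx_getD (τ : ℕ → ℕ) {n i : ℕ} (hi : i < n) : (pfx τ n).getD i 0 = τ i := by
  rw [List.getD_eq_getElem?_getD]
  rw [List.getElem?_eq_getElem (by simpa using hi)]
  simp [pfx]

lemma mem_cyl_pfx (τ : ℕ → ℕ) (n : ℕ) : τ ∈ Cyl (pfx τ n) := by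
  intro i hi
  rw [pfx_getD τ (by simpa using hi)]

lemma cyl_eq_pinat (w : List ℕ) :
    Cyl w = PiNat.cylinder (fun i => w.getD i 0) w.length := by
  rfl

lemma isOpen_cyl (w : List ℕ) : IsOpen (Cyl w) := by
  rw [cyl_eq_pinat]
  exact PiNat.isOpen_cylinder _ _ _

lemma cyl_mono {w w' : List ℕ} (hw : w <+: w') : Cyl w' ⊆ Cyl w := by
  intro x hx i hi
  have h1 : i < w'.length := lt_of_lt_of_le hi hw.length_le
  have := hx i h1
  rw [this]
  rcases hw with ⟨t, rfl⟩
  rw [List.getD_append _ _ _ _ hi]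

lemma pfx_prefix (τ : ℕ → ℕ) {n m : ℕ} (h : n ≤ m) : pfx τ n <+: pfx τ m := by
  refine ⟨List.ofFn fun i : Fin (m - n) => τ (n + i), ?_⟩
  apply List.ext_getElem
  · simp [pfx]; omega
  · intro i h1 h2
    simp only [pfx, List.getElem_append]
    split_ifs with h3
    · simp
    · simp only [List.getElem_ofFn]
      congr 1
      simp at h1 h3 ⊢
      omega

lemma prefix_pfx_of_mem {w : List ℕ} {τ : ℕ → ℕ} (hτ : τ ∈ Cyl w) {n : ℕ}
    (hn : w.length ≤ n) : w <+: pfx τ n := by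
  refine List.prefix_iff_eq_take.2 ?_
  apply List.ext_getElem
  · simp; omega
  · intro i h1 h2
    have : τ i = w.getD i 0 := hτ i h1
    simp only [List.getElem_take, pfx, List.getElem_ofFn]
    rw [this, List.getD_eq_getElem?_getD, List.getElem?_eq_getElem h1]
    simp

lemma eq_pfx_of_mem {w : List ℕ} {τ : ℕ → ℕ} (hτ : τ ∈ Cyl w) :
    pfx τ w.length = w := by
  have h := prefix_pfx_of_mem hτ (le_refl w.length)
  exact (h.sublist.eq_of_length (by simp)).symm

/-- Basis property: any open set containing `a` contains a cylinder around `a`. -/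
lemma exists_pfx_subset {O : Set (ℕ → ℕ)} (hO : IsOpen O) {a : ℕ → ℕ} (ha : a ∈ O) (L : ℕ) :
    ∃ n, L ≤ n ∧ Cyl (pfx a n) ⊆ O := by
  obtain ⟨v, ⟨x, n, rfl⟩, hav, hvO⟩ :=
    (PiNat.isTopologicalBasis_cylinders (fun _ : ℕ => ℕ)).exists_subset_of_mem_open ha hO
  refine ⟨max L n, le_max_left _ _, ?_⟩
  intro z hz
  apply hvO
  intro i hi
  have h1 : z i = a i := by
    have := hz i (by simp; omega)
    rw [this, pfx_getD a (by omega)]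
  rw [h1]
  exact hav i hi

/-- Cylinder around a member of an open subset of a given cylinder, extending the list. -/
lemma exists_cyl_ext {w : List ℕ} {O : Set (ℕ → ℕ)} (hO : IsOpen O) {a : ℕ → ℕ}
    (haw : a ∈ Cyl w) (haO : a ∈ O) (L : ℕ) :
    ∃ w', w <+: w' ∧ L ≤ w'.length ∧ a ∈ Cyl w' ∧ Cyl w' ⊆ O := by
  obtain ⟨n, hn, hsub⟩ := exists_pfx_subset hO haO (max L (w.length + 1))
  refine ⟨pfx a n, prefix_pfx_of_mem haw (by omega), by simp; omega, mem_cyl_pfx a n, hsub⟩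

/-! ### Bigness (not contained in any σ-compact set) -/

variable {F : Type*} [MetricSpace F]

/-- A set is big if it is not contained in any σ-compact set. -/
def Bg (S : Set F) : Prop := ∀ K : Set F, IsSigmaCompact K → ¬ S ⊆ K

lemma Bg.mono {S T : Set F} (hS : Bg S) (hST : S ⊆ T) : Bg T :=
  fun K hK hTK => hS K hK (hST.trans hTK)

lemma not_bg_iff {S : Set F} : ¬ Bg S ↔ ∃ K : Set F, IsSigmaCompact K ∧ S ⊆ K := by
  simp [Bg]

lemma not_bg_empty : ¬ Bg (∅ : Set F) := fun h => h ∅ isSigmaCompact_empty subset_rfl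

lemma Bg.nonempty {S : Set F} (hS : Bg S) : S.Nonempty := by
  rcases S.eq_empty_or_nonempty with h | h
  · exact absurd (h ▸ hS) not_bg_empty
  · exact h

lemma Bg.diff {S : Set F} (hS : Bg S) {K : Set F} (hK : IsSigmaCompact K) : Bg (S \ K) := by
  intro K' hK' hsub
  exact hS (K' ∪ K) (by
    rw [union_eq_iUnion]
    exact isSigmaCompact_iUnion _ (by rintro (b : Bool); cases b <;> simpa))
    (fun z hz => by
      by_cases h : z ∈ K
      · exact Or.inr h
      · exact Or.inl (hsub ⟨hz, h⟩))

/-- Splitting: if a big set is covered by countably many sets, one of the traces is big. -/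
lemma bg_split {ι : Type*} [Countable ι] {S : Set F} (hS : Bg S) (T : ι → Set F)
    (hcov : S ⊆ ⋃ i, T i) : ∃ i, Bg (S ∩ T i) := by
  by_contra hno
  push_neg at hno
  have : ∀ i, ∃ K : Set F, IsSigmaCompact K ∧ S ∩ T i ⊆ K := fun i => not_bg_iff.1 (hno i)
  choose K hK hKsub using this
  exact hS (⋃ i, K i) (isSigmaCompact_iUnion _ hK)
    (fun z hz => by
      rcases mem_iUnion.1 (hcov hz) with ⟨i, hi⟩
      exact mem_iUnion.2 ⟨i, hKsub i ⟨hz, hi⟩⟩)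

/-! ### Escaping sequences -/

/-- A big set contains an injective sequence with no cluster point in the whole space. -/
lemma bg_escape {S : Set F} (hS : Bg S) :
    ∃ y : ℕ → F, (∀ n, y n ∈ S) ∧ Function.Injective y ∧ ∀ z : F, ¬ MapClusterPt z atTop y := by
  -- first, a (not necessarily injective) sequence with no cluster point
  have main : ∃ y : ℕ → F, (∀ n, y n ∈ S) ∧ ∀ z : F, ¬ MapClusterPt z atTop y := by
    by_contra hno
    push_neg at hno
    have hcl : ∀ y : ℕ → F, (∀ n, y n ∈ S) → ∃ z, MapClusterPt z atTop y := hno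
    -- closure S is sequentially compact
    have hseq : IsSeqCompact (closure S) := by
      intro x hx
      have hv : ∀ n : ℕ, ∃ v, v ∈ S ∧ dist (x n) v < 1 / (n + 1) := by
        intro n
        rcases Metric.mem_closure_iff.1 (hx n) (1 / (n + 1 : ℝ)) (by positivity) with ⟨v, hv, hd⟩
        exact ⟨v, hv, hd⟩
      choose v hvS hvd using hv
      obtain ⟨z, hz⟩ := hcl v hvS
      have hne : NeBot (𝓝 z ⊓ map v atTop) := hz
      obtain ⟨θ, hθmono, hθtend⟩ := Filter.subseq_tendsto_of_neBot (f := 𝓝 z) hne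
      refine ⟨z, ?_, θ, hθmono, ?_⟩
      · exact mem_closure_of_frequently_of_tendsto
          (Eventually.frequently (Eventually.of_forall (fun n => hvS (θ n)))) hθtend
      · -- x ∘ θ tends to z as well
        have hdist : Tendsto (fun n => dist (x (θ n)) (v (θ n))) atTop (𝓝 0) := by
          apply squeeze_zero (fun n => dist_nonneg) (fun n => (hvd (θ n)).le)
          have h1 : Tendsto (fun n : ℕ => 1 / ((n : ℝ) + 1)) atTop (𝓝 0) :=
            tendsto_one_div_add_atTop_nhds_zero_nat
          exact h1.comp hθmono.tendsto_atTop
        have := hθtend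
        exact (tendsto_iff_dist_tendsto_zero.2 (by
          apply squeeze_zero (fun n => dist_nonneg)
            (fun n => dist_triangle (x (θ n)) (v (θ n)) z)
          simpa using hdist.add (tendsto_iff_dist_tendsto_zero.1 hθtend)))
    have hcpt : IsCompact (closure S) := hseq.isCompact
    exact hS (closure S) hcpt.isSigmaCompact subset_closure
  obtain ⟨y, hyS, hync⟩ := main
  -- each value is attained finitely often
  have hfib : ∀ c : F, {m | y m = c}.Finite := by
    intro c
    by_contra hinf
    apply hync c
    rw [mapClusterPt_iff_frequently]
    intro s hs
    have : ∀ N : ℕ, ∃ m, N ≤ m ∧ y m ∈ s := by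
      intro N
      obtain ⟨m, hm1, hm2⟩ := (Set.Infinite.exists_gt hinf N)
      exact ⟨m, hm2.le, by rw [show y m = c from hm1]; exact mem_of_mem_nhds hs⟩
    exact frequently_atTop.2 (fun a => by obtain ⟨m, h1, h2⟩ := this a; exact ⟨m, h1, h2⟩)
  -- the range is infinite
  have hrange : (range y).Infinite := by
    intro hfin
    have : (univ : Set ℕ).Finite := by
      have : (univ : Set ℕ) ⊆ ⋃ c ∈ range y, {m | y m = c} := by
        intro m _
        exact mem_biUnion (mem_range_self m) rfl
      exact Set.Finite.subset (Set.Finite.biUnion hfin (fun c _ => hfib c)) this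
    exact Set.infinite_univ this
  -- extract an injective sequence with values in the range
  set g := hrange.natEmbedding
  refine ⟨fun n => (g n : F), fun n => ?_, fun a b hab => g.injective (Subtype.ext hab), ?_⟩
  · rcases (g n).2 with ⟨m, hm⟩
    show (g n : F) ∈ S
    rw [← hm]; exact hyS m
  · intro z hz
    apply hync z
    rw [mapClusterPt_iff_frequently] at hz ⊢
    intro s hs
    have hzs := hz s hs
    rw [frequently_atTop] at hzs ⊢
    intro N
    have hAinf : {n | (g n : F) ∈ s}.Infinite := by
      intro hfin
      obtain ⟨b, hb⟩ := hfin.bddAbove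
      obtain ⟨n, hn1, hn2⟩ := hzs (b + 1)
      exact absurd (hb hn2) (by omega)
    have hSinf : {m | y m ∈ s}.Infinite := by
      have hchoice : ∀ n : {n | (g n : F) ∈ s}, ∃ m, y m = (g (n : ℕ) : F) := by
        intro n
        rcases (g (n : ℕ)).2 with ⟨m, hm⟩
        exact ⟨m, hm⟩
      choose φ hφ using hchoice
      have : Infinite {n | (g n : F) ∈ s} := Set.Infinite.to_subtype hAinf
      exact Set.infinite_of_injective_forall_mem (f := φ)
        (fun a b hab => by
          have : (g (a : ℕ) : F) = (g (b : ℕ) : F) := by rw [← hφ a, ← hφ b, hab]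
          exact Subtype.ext (g.injective (Subtype.ext this)))
        (fun n => by rw [mem_setOf_eq, hφ n]; exact n.2)
    obtain ⟨m, hm1, hm2⟩ := hSinf.exists_gt N
    exact ⟨m, hm2.le, hm1⟩

/-! ### Local bigness kernel -/

/-- In a second countable space, a big set is big near a big set of its points. -/
lemma bg_kern [SecondCountableTopology F] {S : Set F} (hS : Bg S) :
    Bg (S ∩ {z | ∀ ρ : ℝ, 0 < ρ → Bg (S ∩ Metric.ball z ρ)}) := by
  set Kern := {z | ∀ ρ : ℝ, 0 < ρ → Bg (S ∩ Metric.ball z ρ)} with hKern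
  obtain ⟨B, hBcnt, -, hBbasis⟩ := exists_countable_basis F
  have hcover : S \ Kern ⊆ ⋃ U ∈ {U ∈ B | ¬ Bg (S ∩ U)}, U := by
    intro z hz
    obtain ⟨hzS, hzK⟩ := hz
    rw [hKern, mem_setOf_eq] at hzK
    push_neg at hzK
    obtain ⟨ρ, hρ, hρbg⟩ := hzK
    obtain ⟨U, hU, hzU, hUsub⟩ := hBbasis.exists_subset_of_mem_open
      (Metric.mem_ball_self hρ) Metric.isOpen_ball
    refine mem_biUnion ⟨hU, fun hbg => hρbg (hbg.mono (inter_subset_inter_right S hUsub))⟩ hzU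
  by_contra hno
  obtain ⟨K, hK, hKsub⟩ := not_bg_iff.1 hno
  -- the non-big traces are covered by σ-compacts
  have : ∀ U : {U // U ∈ B ∧ ¬ Bg (S ∩ U)}, ∃ K' : Set F, IsSigmaCompact K' ∧ S ∩ U ⊆ K' := by
    intro U
    exact not_bg_iff.1 U.2.2
  choose K' hK' hK'sub using this
  have hcnt : Countable {U // U ∈ B ∧ ¬ Bg (S ∩ U)} := by
    have h1 : Countable B := countable_coe_iff.mpr hBcnt
    have h2 : {U | U ∈ B ∧ ¬ Bg (S ∩ U)} ⊆ B := fun U hU => hU.1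
    exact (hBcnt.mono h2).to_subtype
  apply hS (K ∪ ⋃ U : {U // U ∈ B ∧ ¬ Bg (S ∩ U)}, K' U)
  · rw [union_eq_iUnion]
    refine isSigmaCompact_iUnion _ ?_
    rintro (b : Bool)
    cases b
    · simpa using isSigmaCompact_iUnion _ hK'
    · simpa using hK
  · intro z hz
    by_cases hzK : z ∈ Kern
    · exact Or.inl (hKsub ⟨hz, hzK⟩)
    · have := hcover ⟨hz, hzK⟩
      rw [mem_iUnion₂] at this
      obtain ⟨U, hU, hzU⟩ := this
      exact Or.inr (mem_iUnion.2 ⟨⟨U, hU.1, hU.2⟩, hK'sub _ ⟨hz, hzU⟩⟩)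

/-! ### Facts about sequences with no cluster points -/

lemma no_cluster_ball_finite {y : ℕ → F} {z : F} (hz : ¬ MapClusterPt z atTop y) :
    ∃ ρ : ℝ, 0 < ρ ∧ {k | y k ∈ Metric.ball z ρ}.Finite := by
  rw [mapClusterPt_iff_frequently] at hz
  push_neg at hz
  obtain ⟨s, hs, hfreq⟩ := hz
  rw [eventually_atTop] at hfreq
  obtain ⟨N, hN⟩ := hfreq
  obtain ⟨ρ, hρ, hρs⟩ := Metric.mem_nhds_iff.1 hs
  refine ⟨ρ, hρ, Set.Finite.subset (finite_Iio N) ?_⟩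
  intro k hk
  rw [mem_Iio]
  by_contra hge
  exact hN k (by omega) (hρs hk)

lemma escape_sep {y : ℕ → F} (hinj : Function.Injective y)
    (hync : ∀ z : F, ¬ MapClusterPt z atTop y) (j : ℕ) :
    ∃ ρ : ℝ, 0 < ρ ∧ ∀ k, k ≠ j → ρ ≤ dist (y j) (y k) := by
  obtain ⟨ρ, hρ, hfin⟩ := no_cluster_ball_finite (hync (y j))
  set C := {k | y k ∈ Metric.ball (y j) ρ} \ {j} with hC
  have hCfin : C.Finite := hfin.diff
  by_cases hCe : C.Nonempty
  · set m := hCfin.toFinset.inf' (by rwa [Set.Finite.toFinset_nonempty]) (fun k => dist (y j) (y k)) with hm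
    have hmpos : 0 < m := by
      rw [hm]
      apply Finset.lt_inf'_iff _ |>.2
      intro k hk
      rw [Set.Finite.mem_toFinset] at hk
      exact dist_pos.2 fun hyk => hk.2 (hinj hyk.symm)
    refine ⟨min ρ m, lt_min hρ hmpos, fun k hk => ?_⟩
    by_cases hkC : k ∈ C
    · exact le_trans (min_le_right _ _)
        (Finset.inf'_le _ (Set.Finite.mem_toFinset hCfin |>.2 hkC))
    · have : y k ∉ Metric.ball (y j) ρ := fun hball => hkC ⟨hball, hk⟩
      rw [Metric.mem_ball, not_lt, dist_comm] at this
      exact le_trans (min_le_left _ _) this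
  · refine ⟨ρ, hρ, fun k hk => ?_⟩
    have : y k ∉ Metric.ball (y j) ρ := fun hball => hCe ⟨k, hball, hk⟩
    rw [Metric.mem_ball, not_lt, dist_comm] at this
    exact this

/-! ### The advance lemma -/

variable {h : (ℕ → ℕ) → F}

/-- The key splitting/advancing step: a big subset of the image of a cylinder that is contained
in an open set `V` can be refined to a big subset of the image of a longer cylinder that maps
into `V`. -/
lemma advance (hc : Continuous h) {G : Set F} {w : List ℕ} {V : Set F}
    (hGb : Bg G) (hGw : G ⊆ h '' Cyl w) (hGV : G ⊆ V) (hV : IsOpen V) (L : ℕ) :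
    ∃ w' : List ℕ, w <+: w' ∧ L ≤ w'.length ∧ Cyl w' ⊆ Cyl w ∩ h ⁻¹' V ∧
      Bg (G ∩ h '' Cyl w') := by
  set ι := {w' : List ℕ // w <+: w' ∧ L ≤ w'.length ∧ Cyl w' ⊆ Cyl w ∩ h ⁻¹' V} with hι
  have hcov : G ⊆ ⋃ i : ι, h '' Cyl (i : List ℕ) := by
    intro z hz
    obtain ⟨a, haw, rfl⟩ := hGw hz
    have haO : a ∈ Cyl w ∩ h ⁻¹' V := ⟨haw, hGV hz⟩
    obtain ⟨w', hw'pre, hw'len, haw', hw'sub⟩ :=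
      exists_cyl_ext (hO := (isOpen_cyl w).inter (hV.preimage hc)) haw haO L
    exact mem_iUnion.2 ⟨⟨w', hw'pre, hw'len, hw'sub⟩, ⟨a, haw', rfl⟩⟩
  obtain ⟨i, hi⟩ := bg_split hGb _ hcov
  exact ⟨(i : List ℕ), i.2.1, i.2.2.1, i.2.2.2, hi⟩

/-! ### The construction state -/

/-- Enumeration of finite sequences. -/
def en (n : ℕ) : List ℕ := Denumerable.ofNat (List ℕ) n

lemma en_surj (v : List ℕ) : ∃ n, en n = v := ⟨Encodable.encode v, by simp [en]⟩

/-- The data carried at each node of the tree. -/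
structure St (F : Type*) [MetricSpace F] where
  m : ℕ
  y : F
  r : ℝ
  G : Set F
  com : ℕ → Bool
  W : ℕ → List ℕ
  spine : List ℕ
  dodge : ℕ → ℕ → Set F

variable {h : (ℕ → ℕ) → F} in
/-- The invariants of a state. -/
structure StOK (h : (ℕ → ℕ) → F) (s : St F) : Prop where
  hrpos : 0 < s.r
  hrsmall : 1 ≤ s.m → s.r ≤ (1/2 : ℝ)^s.m
  hGbig : Bg s.G
  hGball : s.G ⊆ Metric.ball s.y s.r
  hGspine : s.G ⊆ h '' Cyl s.spine
  hspinelen : s.m ≤ s.spine.length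
  hspineV : Cyl s.spine ⊆ h ⁻¹' Metric.ball s.y s.r
  hcomlt : ∀ n, s.com n = true → n < s.m
  hcompre : ∀ n, s.com n = true → en n <+: s.W n
  hcomlen : ∀ n, s.com n = true → s.m ≤ (s.W n).length
  hcomV : ∀ n, s.com n = true → Cyl (s.W n) ⊆ h ⁻¹' Metric.ball s.y s.r
  hcomG : ∀ n, s.com n = true → s.G ⊆ h '' Cyl (s.W n)
  hdodgecpt : ∀ j i, IsCompact (s.dodge j i)
  hdodgekill : ∀ j i, j + i + 2 ≤ s.m → Metric.closedBall s.y s.r ∩ s.dodge j i = ∅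
  hreject : ∀ n, n < s.m → s.com n = false →
    s.G ∩ h '' (Cyl (en n) ∩ h ⁻¹' Metric.ball s.y s.r) ⊆ ⋃ i, s.dodge n i

/-- The relation between a state and its children. -/
structure StepR (h : (ℕ → ℕ) → F) (s t : St F) : Prop where
  hm : t.m = s.m + 1
  hball : Metric.closedBall t.y t.r ⊆ Metric.ball s.y s.r
  hGsub : t.G ⊆ s.G
  hspine : s.spine <+: t.spine
  hcompres : ∀ n, n < s.m → t.com n = s.com n
  hWext : ∀ n, s.com n = true → s.W n <+: t.W n
  hdodgepres : ∀ j, j ≠ s.m → t.dodge j = s.dodge j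
  hGlow : ∀ z ∈ s.G, (∀ j, j < s.m → z ∉ s.dodge j (s.m - 1 - j)) →
    z ∈ Metric.ball t.y t.r → z ∈ h '' Cyl t.spine →
    (∀ n, t.com n = true → z ∈ h '' Cyl (t.W n)) → z ∈ t.G

variable {h : (ℕ → ℕ) → F}

/-- Advancing a finite family of chains simultaneously. -/
lemma advance_list (hc : Continuous h) (L : List ℕ) (hnd : L.Nodup) (W0 : ℕ → List ℕ)
    {G V : Set F} (hGb : Bg G) (hGV : G ⊆ V) (hV : IsOpen V) (LL : ℕ)
    (hW : ∀ n ∈ L, G ⊆ h '' Cyl (W0 n)) :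
    ∃ (W1 : ℕ → List ℕ) (G1 : Set F),
      Bg G1 ∧ G1 ⊆ G ∧
      (∀ n, n ∉ L → W1 n = W0 n) ∧
      (∀ n ∈ L, W0 n <+: W1 n ∧ LL ≤ (W1 n).length ∧
        Cyl (W1 n) ⊆ Cyl (W0 n) ∩ h ⁻¹' V ∧ G1 ⊆ h '' Cyl (W1 n)) ∧
      (∀ z ∈ G, (∀ n ∈ L, z ∈ h '' Cyl (W1 n)) → z ∈ G1) := by
  induction L generalizing G with
  | nil =>
      exact ⟨W0, G, hGb, subset_rfl, fun _ _ => rfl, fun n hn => absurd hn List.not_mem_nil,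
        fun z hz _ => hz⟩
  | cons n L ih =>
      obtain ⟨w', hw'pre, hw'len, hw'sub, hw'bg⟩ :=
        advance hc hGb (hW n (List.mem_cons_self)) hGV hV LL
      have hG'sub : G ∩ h '' Cyl w' ⊆ G := inter_subset_left
      obtain ⟨W1, G1, hG1b, hG1sub, hW1out, hW1in, hG1low⟩ :=
        ih (List.Nodup.of_cons hnd) hw'bg (hG'sub.trans hGV)
          (fun n' hn' => hG'sub.trans (hW n' (List.mem_cons_of_mem n hn')))
      have hnL : n ∉ L := (List.nodup_cons.1 hnd).1
      refine ⟨Function.update W1 n w', G1, hG1b, hG1sub.trans hG'sub, ?_, ?_, ?_⟩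
      · intro n' hn'
        rw [Function.update_of_ne (fun hh : n' = n => hn' (hh ▸ List.mem_cons_self))]
        exact hW1out n' (fun hmem => hn' (List.mem_cons_of_mem n hmem))
      · intro n' hn'
        rcases List.mem_cons.1 hn' with rfl | hmem
        · rw [Function.update_self]
          exact ⟨hw'pre, hw'len, hw'sub, hG1sub.trans inter_subset_right⟩
        · rw [Function.update_of_ne (fun hh : n' = n => hnL (hh ▸ hmem))]
          exact hW1in n' hmem
      · intro z hz hpieces
        apply hG1low z ⟨hz, by
          have := hpieces n (List.mem_cons_self)
          rwa [Function.update_self] at this⟩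
        intro n' hn'
        have := hpieces n' (List.mem_cons_of_mem n hn')
        rwa [Function.update_of_ne (fun hh : n' = n => hnL (hh ▸ hn'))] at this

/-! ### The step lemma -/

lemma step_exists [SecondCountableTopology F] (hc : Continuous h) {s : St F} (hs : StOK h s) :
    ∃ c : ℕ → St F, (∀ k, StOK h (c k) ∧ StepR h s (c k)) ∧
      (∀ k k', k ≠ k' →
        Metric.closedBall (c k).y (c k).r ∩ Metric.closedBall (c k').y (c k').r = ∅) ∧
      (∀ z : F, ∃ ρ : ℝ, 0 < ρ ∧
        {k | (Metric.ball z ρ ∩ Metric.closedBall (c k).y (c k).r).Nonempty}.Finite) := by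
  classical
  set D : Set F := ⋃ j ∈ Finset.range s.m, s.dodge j (s.m - 1 - j) with hD
  have hDcpt : IsCompact D :=
    (Finset.range s.m).finite_toSet.isCompact_biUnion (fun j _ => hs.hdodgecpt j _)
  set H : Set F := s.G \ D with hH
  have hHbig : Bg H := hs.hGbig.diff hDcpt.isSigmaCompact
  have hHG : H ⊆ s.G := diff_subset
  have hH2 : Bg (H ∩ {z | ∀ ρ : ℝ, 0 < ρ → Bg (H ∩ Metric.ball z ρ)}) := bg_kern hHbig
  obtain ⟨y, hyH2, hyinj, hync⟩ := bg_escape hH2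
  have hyH : ∀ k, y k ∈ H := fun k => (hyH2 k).1
  have hyG : ∀ k, y k ∈ s.G := fun k => hHG (hyH k)
  have hykern : ∀ k, ∀ ρ : ℝ, 0 < ρ → Bg (H ∩ Metric.ball (y k) ρ) := fun k => (hyH2 k).2
  choose ρsep hρsep hsepk using fun k => escape_sep hyinj hync k
  have hη : ∀ k, 0 < s.r - dist (y k) s.y := by
    intro k
    have := hs.hGball (hyG k)
    rw [Metric.mem_ball] at this
    linarith
  have hδ : ∀ k, ∃ δ : ℝ, 0 < δ ∧ Metric.ball (y k) δ ∩ D = ∅ := by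
    intro k
    have hyD : y k ∈ Dᶜ := (hyH k).2
    obtain ⟨δ, hδpos, hsub⟩ := Metric.isOpen_iff.1 hDcpt.isClosed.isOpen_compl _ hyD
    exact ⟨δ, hδpos, by
      rw [eq_empty_iff_forall_notMem]
      exact fun z hz => (hsub hz.1) hz.2⟩
  choose δ hδpos hδD using hδ
  set r' : ℕ → ℝ := fun k => min (min ((1/2:ℝ)^(s.m+1)) ((1/2:ℝ)^k))
    (min (ρsep k / 3) (min ((s.r - dist (y k) s.y) / 2) (δ k / 2))) with hr'
  have hr'pos : ∀ k, 0 < r' k := by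
    intro k
    have h1 := hρsep k
    have h2 := hη k
    have h3 := hδpos k
    have h4 : (0:ℝ) < (1/2:ℝ)^(s.m+1) := by positivity
    have h5 : (0:ℝ) < (1/2:ℝ)^k := by positivity
    simp only [hr', lt_min_iff]
    refine ⟨⟨h4, h5⟩, by linarith, by linarith, by linarith⟩
  have hr'm : ∀ k, r' k ≤ (1/2:ℝ)^(s.m+1) := fun k => le_trans (min_le_left _ _) (min_le_left _ _)
  have hr'k : ∀ k, r' k ≤ (1/2:ℝ)^k := fun k => le_trans (min_le_left _ _) (min_le_right _ _)
  have hr'sep : ∀ k, r' k ≤ ρsep k / 3 := fun k => le_trans (min_le_right _ _) (min_le_left _ _)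
  have hr'η : ∀ k, r' k ≤ (s.r - dist (y k) s.y) / 2 :=
    fun k => le_trans (min_le_right _ _) (le_trans (min_le_right _ _) (min_le_left _ _))
  have hr'δ : ∀ k, r' k ≤ δ k / 2 :=
    fun k => le_trans (min_le_right _ _) (le_trans (min_le_right _ _) (min_le_right _ _))
  have hballsub : ∀ k, Metric.closedBall (y k) (r' k) ⊆ Metric.ball s.y s.r := by
    intro k z hz
    rw [Metric.mem_closedBall] at hz
    rw [Metric.mem_ball]
    have h1 := hr'η k
    have h2 := hη k
    calc dist z s.y ≤ dist z (y k) + dist (y k) s.y := dist_triangle _ _ _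
      _ < s.r := by linarith
  have hballD : ∀ k, Metric.closedBall (y k) (r' k) ∩ D = ∅ := by
    intro k
    rw [eq_empty_iff_forall_notMem]
    rintro z ⟨hz1, hz2⟩
    have : z ∈ Metric.ball (y k) (δ k) := by
      rw [Metric.mem_ball]
      rw [Metric.mem_closedBall] at hz1
      have := hr'δ k
      have := hδpos k
      linarith
    have := hδD k
    rw [eq_empty_iff_forall_notMem] at this
    exact this z ⟨‹z ∈ Metric.ball (y k) (δ k)›, hz2⟩
  -- construct each child
  have hchild : ∀ k, ∃ t : St F, (StOK h t ∧ StepR h s t) ∧ t.y = y k ∧ t.r = r' k := by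
    intro k
    set V := Metric.ball (y k) (r' k) with hV
    have hVopen : IsOpen V := Metric.isOpen_ball
    have hG0b : Bg (H ∩ V) := hykern k _ (hr'pos k)
    set Lc := (List.range s.m).filter (fun n => s.com n) with hLc
    have hLcnd : Lc.Nodup := List.nodup_range.filter _
    have hLcmem : ∀ n, n ∈ Lc ↔ n < s.m ∧ s.com n = true := by
      intro n
      simp [hLc, List.mem_filter, List.mem_range]
    obtain ⟨W1, G1, hG1b, hG1sub, hW1out, hW1in, hG1low⟩ :=
      advance_list hc Lc hLcnd s.W hG0b inter_subset_right hVopen (s.m+1)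
        (fun n hn => (inter_subset_left.trans hHG).trans (hs.hcomG n ((hLcmem n).1 hn).2))
    have hG1V : G1 ⊆ V := hG1sub.trans inter_subset_right
    have hG1G : G1 ⊆ s.G := hG1sub.trans (inter_subset_left.trans hHG)
    obtain ⟨sp', hsppre, hsplen, hspsub, hspbg⟩ :=
      advance hc hG1b (hG1G.trans hs.hGspine) hG1V hVopen (s.m+1)
    set G2 := G1 ∩ h '' Cyl sp' with hG2
    have hG2V : G2 ⊆ V := inter_subset_left.trans hG1V
    have hG2G : G2 ⊆ s.G := inter_subset_left.trans hG1G
    have hG2sp : G2 ⊆ h '' Cyl sp' := inter_subset_right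
    have hcomfalse : s.com s.m = false := by
      cases hh : s.com s.m with
      | false => rfl
      | true => exact absurd (hs.hcomlt _ hh) (lt_irrefl _)
    have hballVsub : V ⊆ Metric.ball s.y s.r :=
      (Metric.ball_subset_closedBall).trans (hballsub k)
    -- dodge facts, used in both branches
    have hdkill : ∀ (dnew : ℕ → Set F) (j i : ℕ), j + i + 2 ≤ s.m + 1 →
        Metric.closedBall (y k) (r' k) ∩ (Function.update s.dodge s.m dnew) j i = ∅ := by
      intro dnew j i hji
      have hjm : j ≠ s.m := by omega
      rw [Function.update_of_ne hjm]
      by_cases hsmall : j + i + 2 ≤ s.m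
      · rw [eq_empty_iff_forall_notMem]
        rintro z ⟨hz1, hz2⟩
        have hz3 : z ∈ Metric.closedBall s.y s.r :=
          Metric.ball_subset_closedBall (hballsub k hz1)
        have := hs.hdodgekill j i hsmall
        rw [eq_empty_iff_forall_notMem] at this
        exact this z ⟨hz3, hz2⟩
      · have hieq : i = s.m - 1 - j ∧ j < s.m := by omega
        rw [eq_empty_iff_forall_notMem]
        rintro z ⟨hz1, hz2⟩
        have hzD : z ∈ D := by
          rw [mem_iUnion₂]
          exact ⟨j, Finset.mem_range.2 hieq.2, hieq.1 ▸ hz2⟩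
        have := hballD k
        rw [eq_empty_iff_forall_notMem] at this
        exact this z ⟨hz1, hzD⟩
    have hdcpt : ∀ (dnew : ℕ → Set F), (∀ i, IsCompact (dnew i)) →
        ∀ j i, IsCompact ((Function.update s.dodge s.m dnew) j i) := by
      intro dnew hdnew j i
      by_cases hjm : j = s.m
      · subst hjm; rw [Function.update_self]; exact hdnew i
      · rw [Function.update_of_ne hjm]; exact hs.hdodgecpt j i
    -- old rejects transfer
    have hrejold : ∀ (G3 : Set F), G3 ⊆ G2 → ∀ n, n < s.m → s.com n = false →
        G3 ∩ h '' (Cyl (en n) ∩ h ⁻¹' V) ⊆ ⋃ i, s.dodge n i := by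
      intro G3 hG3 n hnlt hfalse z hz
      refine hs.hreject n hnlt hfalse ⟨hG2G (hG3 hz.1), ?_⟩
      obtain ⟨a, ⟨ha1, ha2⟩, rfl⟩ := hz.2
      exact ⟨a, ⟨ha1, hballVsub ha2⟩, rfl⟩
    -- common Glow fact
    have hGlowCommon : ∀ z ∈ s.G, (∀ j, j < s.m → z ∉ s.dodge j (s.m - 1 - j)) →
        z ∈ V → z ∈ h '' Cyl sp' →
        (∀ n ∈ Lc, z ∈ h '' Cyl (W1 n)) → z ∈ G2 := by
      intro z hzG hzD hzV hzsp hzpieces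
      have hzH : z ∈ H := ⟨hzG, by
        intro hzD'
        rw [mem_iUnion₂] at hzD'
        obtain ⟨j, hj, hmem⟩ := hzD'
        exact hzD j (Finset.mem_range.1 hj) hmem⟩
      exact ⟨hG1low z ⟨hzH, hzV⟩ hzpieces, hzsp⟩
    have hW1facts : ∀ n, s.com n = true →
        (s.W n <+: W1 n ∧ en n <+: W1 n ∧ s.m + 1 ≤ (W1 n).length ∧
          Cyl (W1 n) ⊆ h ⁻¹' V) := by
      intro n hn
      have hnLc : n ∈ Lc := (hLcmem n).2 ⟨hs.hcomlt n hn, hn⟩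
      obtain ⟨h1, h2, h3, h4⟩ := hW1in n hnLc
      exact ⟨h1, (hs.hcompre n hn).trans h1, h2, h3.trans inter_subset_right⟩
    have hG1W : ∀ n, s.com n = true → G1 ⊆ h '' Cyl (W1 n) := by
      intro n hn
      exact (hW1in n ((hLcmem n).2 ⟨hs.hcomlt n hn, hn⟩)).2.2.2
    by_cases hcm : ∃ w', en s.m <+: w' ∧ s.m+1 ≤ w'.length ∧
        Cyl w' ⊆ Cyl (en s.m) ∩ h ⁻¹' V ∧ Bg (G2 ∩ h '' Cyl w')
    · -- commit case
      obtain ⟨w', hw'pre, hw'len, hw'sub, hw'bg⟩ := hcm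
      set G3 := G2 ∩ h '' Cyl w' with hG3
      set com' := Function.update s.com s.m true with hcom'
      set W' := Function.update W1 s.m w' with hW'
      have hcomlt' : ∀ n, com' n = true → n < s.m + 1 := by
        intro n hn
        by_cases hnm : n = s.m
        · omega
        · rw [hcom', Function.update_of_ne hnm] at hn
          exact lt_trans (hs.hcomlt n hn) (Nat.lt_succ_self _)
      have hcomold : ∀ n, n ≠ s.m → com' n = s.com n := by
        intro n hn
        rw [hcom', Function.update_of_ne hn]
      have hWold : ∀ n, n ≠ s.m → W' n = W1 n := by
        intro n hn
        rw [hW', Function.update_of_ne hn]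
      have hWnew : W' s.m = w' := by rw [hW', Function.update_self]
      have hcomnew : com' s.m = true := by rw [hcom', Function.update_self]
      have hcompre' : ∀ n, com' n = true → en n <+: W' n := by
        intro n hn
        by_cases hnm : n = s.m
        · subst hnm; rw [hWnew]; exact hw'pre
        · rw [hcomold n hnm] at hn
          rw [hWold n hnm]
          exact (hW1facts n hn).2.1
      have hcomlen' : ∀ n, com' n = true → s.m + 1 ≤ (W' n).length := by
        intro n hn
        by_cases hnm : n = s.m
        · subst hnm; rw [hWnew]; exact hw'len
        · rw [hcomold n hnm] at hn
          rw [hWold n hnm]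
          exact (hW1facts n hn).2.2.1
      have hcomV' : ∀ n, com' n = true → Cyl (W' n) ⊆ h ⁻¹' V := by
        intro n hn
        by_cases hnm : n = s.m
        · subst hnm; rw [hWnew]; exact hw'sub.trans inter_subset_right
        · rw [hcomold n hnm] at hn
          rw [hWold n hnm]
          exact (hW1facts n hn).2.2.2
      have hcomG' : ∀ n, com' n = true → G3 ⊆ h '' Cyl (W' n) := by
        intro n hn
        by_cases hnm : n = s.m
        · subst hnm; rw [hWnew]; exact inter_subset_right
        · rw [hcomold n hnm] at hn
          rw [hWold n hnm]
          exact (inter_subset_left.trans inter_subset_left).trans (hG1W n hn)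
      have hrej' : ∀ n, n < s.m + 1 → com' n = false →
          G3 ∩ h '' (Cyl (en n) ∩ h ⁻¹' V) ⊆ ⋃ i, (Function.update s.dodge s.m (fun _ => (∅:Set F))) n i := by
        intro n hn hfalse
        have hnm : n ≠ s.m := by
          intro hh
          rw [hh, hcomnew] at hfalse
          exact absurd hfalse (by simp)
        rw [Function.update_of_ne hnm]
        exact hrejold G3 inter_subset_left n (by omega) (by rw [← hcomold n hnm]; exact hfalse)
      have hglow' : ∀ z ∈ s.G, (∀ j, j < s.m → z ∉ s.dodge j (s.m - 1 - j)) →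
          z ∈ V → z ∈ h '' Cyl sp' →
          (∀ n, com' n = true → z ∈ h '' Cyl (W' n)) → z ∈ G3 := by
        intro z hzG hzD hzball hzsp hzcom
        have hzG2 : z ∈ G2 := by
          refine hGlowCommon z hzG hzD hzball hzsp ?_
          intro n hn
          have hnlt := ((hLcmem n).1 hn).1
          have hncom := ((hLcmem n).1 hn).2
          have hnm : n ≠ s.m := by omega
          have := hzcom n (by rw [hcomold n hnm]; exact hncom)
          rwa [hWold n hnm] at this
        refine ⟨hzG2, ?_⟩
        have := hzcom s.m hcomnew
        rwa [hWnew] at this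
      refine ⟨⟨s.m+1, y k, r' k, G3, com', W', sp',
        Function.update s.dodge s.m (fun _ => (∅ : Set F))⟩, ⟨?_, ?_⟩, rfl, rfl⟩
      · exact ⟨hr'pos k, fun _ => hr'm k, hw'bg, inter_subset_left.trans hG2V,
          inter_subset_left.trans hG2sp, hsplen, hspsub.trans inter_subset_right,
          hcomlt', hcompre', hcomlen', hcomV', hcomG',
          hdcpt _ (fun _ => isCompact_empty), hdkill _, hrej'⟩
      · have hWext' : ∀ n, s.com n = true → s.W n <+: W' n := by
          intro n hn
          have hnm : n ≠ s.m := by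
            intro hh
            rw [hh, hcomfalse] at hn
            exact absurd hn (by simp)
          rw [hWold n hnm]
          exact (hW1facts n hn).1
        exact ⟨rfl, hballsub k, inter_subset_left.trans hG2G, hsppre,
          fun n hn => hcomold n (by omega), hWext',
          fun j hj => Function.update_of_ne hj _ _, hglow'⟩
    · -- reject case
      have hnb : ¬ Bg (G2 ∩ h '' (Cyl (en s.m) ∩ h ⁻¹' V)) := by
        intro hbg
        obtain ⟨w', h1, h2, h3, h4⟩ := advance hc hbg
          (fun z hz => image_mono inter_subset_left hz.2)
          (fun z hz => by
            obtain ⟨a, ⟨ha1, ha2⟩, rfl⟩ := hz.2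
            exact ha2)
          hVopen (s.m+1)
        exact hcm ⟨w', h1, h2, h3, h4.mono (inter_subset_inter_left _ inter_subset_left)⟩
      obtain ⟨K, hKsc, hKsub⟩ := not_bg_iff.1 hnb
      obtain ⟨κ, hκcpt, hκcov⟩ := hKsc
      have hrej' : ∀ n, n < s.m + 1 → s.com n = false →
          G2 ∩ h '' (Cyl (en n) ∩ h ⁻¹' V) ⊆ ⋃ i, (Function.update s.dodge s.m κ) n i := by
        intro n hn hfalse
        by_cases hnm : n = s.m
        · subst hnm
          rw [Function.update_self]
          intro z hz
          rw [mem_iUnion]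
          have hzK : z ∈ K := hKsub hz
          rw [← hκcov, mem_iUnion] at hzK
          exact hzK
        · rw [Function.update_of_ne hnm]
          exact hrejold G2 subset_rfl n (by omega) hfalse
      have hglow' : ∀ z ∈ s.G, (∀ j, j < s.m → z ∉ s.dodge j (s.m - 1 - j)) →
          z ∈ V → z ∈ h '' Cyl sp' →
          (∀ n, s.com n = true → z ∈ h '' Cyl (W1 n)) → z ∈ G2 := by
        intro z hzG hzD hzball hzsp hzcom
        refine hGlowCommon z hzG hzD hzball hzsp ?_
        intro n hn
        exact hzcom n ((hLcmem n).1 hn).2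
      refine ⟨⟨s.m+1, y k, r' k, G2, s.com, W1, sp', Function.update s.dodge s.m κ⟩,
        ⟨?_, ?_⟩, rfl, rfl⟩
      · exact ⟨hr'pos k, fun _ => hr'm k, hspbg, hG2V, hG2sp, hsplen,
          hspsub.trans inter_subset_right,
          fun n hn => lt_trans (hs.hcomlt n hn) (Nat.lt_succ_self _),
          fun n hn => (hW1facts n hn).2.1,
          fun n hn => (hW1facts n hn).2.2.1,
          fun n hn => (hW1facts n hn).2.2.2,
          fun n hn => inter_subset_left.trans (hG1W n hn),
          hdcpt _ hκcpt, hdkill _, hrej'⟩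
      · exact ⟨rfl, hballsub k, hG2G, hsppre, fun n _ => rfl,
          fun n hn => (hW1facts n hn).1,
          fun j hj => Function.update_of_ne hj _ _, hglow'⟩
  choose c hcpair hcy hcr using hchild
  refine ⟨c, hcpair, ?_, ?_⟩
  · intro k k' hkk'
    rw [hcy k, hcr k, hcy k', hcr k', eq_empty_iff_forall_notMem]
    rintro z ⟨hz1, hz2⟩
    rw [Metric.mem_closedBall] at hz1 hz2
    have hd : 0 < dist (y k) (y k') := dist_pos.2 (fun hh => hkk' (hyinj hh))
    have h1 : ρsep k ≤ dist (y k) (y k') := hsepk k k' (fun hh => hkk' hh.symm)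
    have h2 : ρsep k' ≤ dist (y k') (y k) := hsepk k' k (fun hh => hkk' hh)
    rw [dist_comm] at h2
    have h3 := hr'sep k
    have h4 := hr'sep k'
    have h5 : dist (y k) (y k') ≤ dist z (y k) + dist z (y k') := by
      rw [dist_comm z (y k)]
      exact dist_triangle _ _ _
    linarith
  · intro z
    obtain ⟨ρ₀, hρ₀, hfin⟩ := no_cluster_ball_finite (hync z)
    obtain ⟨N, hN⟩ := exists_pow_lt_of_lt_one (by linarith : (0:ℝ) < ρ₀/2)
      (by norm_num : (1/2 : ℝ) < 1)
    refine ⟨ρ₀/2, by linarith, Set.Finite.subset (Set.Finite.union hfin (finite_Iio N)) ?_⟩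
    intro k hk
    rw [mem_setOf_eq, hcy k, hcr k] at hk
    obtain ⟨u, hu1, hu2⟩ := hk
    rw [Metric.mem_ball] at hu1
    rw [Metric.mem_closedBall] at hu2
    by_cases hcase : r' k < ρ₀/2
    · left
      rw [mem_setOf_eq, Metric.mem_ball]
      calc dist (y k) z ≤ dist (y k) u + dist u z := dist_triangle _ _ _
        _ = dist u (y k) + dist u z := by rw [dist_comm]
        _ < ρ₀ := by linarith
    · right
      rw [mem_Iio]
      by_contra hge
      have : (1/2:ℝ)^k ≤ (1/2:ℝ)^N :=
        pow_le_pow_of_le_one (by norm_num) (by norm_num) (by omega)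
      have := hr'k k
      linarith

/-! ### The root state -/

lemma cyl_nil : Cyl ([] : List ℕ) = univ := by
  ext x
  simp [Cyl]

lemma root_exists (hc : Continuous h) (hsurj : Function.Surjective h)
    (hbig : Bg (univ : Set F)) : ∃ s : St F, StOK h s ∧ s.m = 0 ∧
      (∀ z ∈ Metric.ball s.y s.r, z ∈ h '' Cyl s.spine → z ∈ s.G) := by
  classical
  set y₀ := h (fun _ => 0) with hy₀
  have hcov : (univ : Set F) ⊆ ⋃ n : ℕ, Metric.ball y₀ n := by
    intro z _
    obtain ⟨n, hn⟩ := exists_nat_gt (dist z y₀)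
    exact mem_iUnion.2 ⟨n, by rwa [Metric.mem_ball]⟩
  obtain ⟨n₀, hn₀⟩ := bg_split hbig _ hcov
  rw [univ_inter] at hn₀
  have hr₀pos : (0:ℝ) < n₀ := by
    obtain ⟨z, hz⟩ := hn₀.nonempty
    rw [Metric.mem_ball] at hz
    exact lt_of_le_of_lt dist_nonneg hz
  have hGw : Metric.ball y₀ (n₀:ℝ) ⊆ h '' Cyl ([] : List ℕ) := by
    rw [cyl_nil, image_univ, Function.Surjective.range_eq hsurj]
    exact subset_univ _
  obtain ⟨sp₀, hsppre, hsplen, hspsub, hspbg⟩ :=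
    advance hc hn₀ hGw subset_rfl Metric.isOpen_ball 0
  refine ⟨⟨0, y₀, n₀, Metric.ball y₀ n₀ ∩ h '' Cyl sp₀, fun _ => false, fun _ => [],
    sp₀, fun _ _ => (∅ : Set F)⟩, ⟨hr₀pos, fun hh => (Nat.not_succ_le_zero 0 hh).elim, hspbg, inter_subset_left,
    inter_subset_right, Nat.zero_le _, hspsub.trans inter_subset_right,
    fun n hn => by simp at hn, fun n hn => by simp at hn, fun n hn => by simp at hn,
    fun n hn => by simp at hn, fun n hn => by simp at hn,
    fun j i => isCompact_empty, fun j i hji => (Nat.not_succ_le_zero _ hji).elim,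
    fun n hn _ => (Nat.not_lt_zero n hn).elim⟩, rfl, fun z hz1 hz2 => ⟨hz1, hz2⟩⟩

/-! ### The tree of states -/

variable [SecondCountableTopology F]

/-- The recursively constructed tree of states.  The list is the reversed node address. -/
noncomputable def nodeSt (hc : Continuous h) (root : {s : St F // StOK h s}) :
    List ℕ → {s : St F // StOK h s} := fun l =>
  List.rec root (fun k _t ih =>
    ⟨(step_exists hc ih.2).choose k, ((step_exists hc ih.2).choose_spec.1 k).1⟩) l

variable (hc : Continuous h) (root : {s : St F // StOK h s})

lemma nodeSt_nil : nodeSt hc root [] = root := rfl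

lemma nodeSt_cons (k : ℕ) (t : List ℕ) :
    nodeSt hc root (k :: t) =
      ⟨(step_exists hc (nodeSt hc root t).2).choose k,
        ((step_exists hc (nodeSt hc root t).2).choose_spec.1 k).1⟩ := rfl

lemma nodeSt_stepR (k : ℕ) (t : List ℕ) :
    StepR h ((nodeSt hc root t) : St F) ((nodeSt hc root (k :: t)) : St F) :=
  ((step_exists hc (nodeSt hc root t).2).choose_spec.1 k).2

lemma nodeSt_disj (t : List ℕ) {k k' : ℕ} (hkk' : k ≠ k') :
    Metric.closedBall ((nodeSt hc root (k :: t)) : St F).y ((nodeSt hc root (k :: t)) : St F).r ∩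
      Metric.closedBall ((nodeSt hc root (k' :: t)) : St F).y
        ((nodeSt hc root (k' :: t)) : St F).r = ∅ :=
  (step_exists hc (nodeSt hc root t).2).choose_spec.2.1 k k' hkk'

lemma nodeSt_locfin (t : List ℕ) (z : F) :
    ∃ ρ : ℝ, 0 < ρ ∧
      {k | (Metric.ball z ρ ∩
        Metric.closedBall ((nodeSt hc root (k :: t)) : St F).y
          ((nodeSt hc root (k :: t)) : St F).r).Nonempty}.Finite :=
  (step_exists hc (nodeSt hc root t).2).choose_spec.2.2 z

/-- The reversed prefix node address of a sequence. -/
def nds (τ : ℕ → ℕ) : ℕ → List ℕ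
  | 0 => []
  | m + 1 => τ m :: nds τ m

/-- The state along a branch. -/
noncomputable def brSt (τ : ℕ → ℕ) (m : ℕ) : St F := (nodeSt hc root (nds τ m) : St F)

lemma brSt_ok (τ : ℕ → ℕ) (m : ℕ) : StOK h (brSt hc root τ m) := (nodeSt hc root (nds τ m)).2

lemma brSt_step (τ : ℕ → ℕ) (m : ℕ) :
    StepR h (brSt hc root τ m) (brSt hc root τ (m+1)) := nodeSt_stepR hc root _ _

lemma nds_congr {τ τ' : ℕ → ℕ} {m : ℕ} (hm : ∀ i < m, τ i = τ' i) : nds τ m = nds τ' m := by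
  induction m with
  | zero => rfl
  | succ m ih =>
      show τ m :: nds τ m = τ' m :: nds τ' m
      rw [hm m (Nat.lt_succ_self m), ih (fun i hi => hm i (by omega))]

lemma brSt_congr {τ τ' : ℕ → ℕ} {m : ℕ} (hm : ∀ i < m, τ i = τ' i) :
    brSt hc root τ m = brSt hc root τ' m := by
  unfold brSt
  rw [nds_congr hm]

lemma brSt_m (hroot0 : (root : St F).m = 0) (τ : ℕ → ℕ) (m : ℕ) :
    (brSt hc root τ m).m = m := by
  induction m with
  | zero => exact hroot0
  | succ m ih => rw [(brSt_step hc root τ m).hm, ih]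

/-! ### Facts along a branch -/

section Branch

variable (τ : ℕ → ℕ)

lemma prefix_getD {w w' : List ℕ} (hp : w <+: w') {i : ℕ} (hi : i < w.length) :
    w'.getD i 0 = w.getD i 0 := by
  obtain ⟨t, rfl⟩ := hp
  rw [List.getD_append _ _ _ _ hi]

lemma ball_chain {m m' : ℕ} (hm : m ≤ m') :
    Metric.ball (brSt hc root τ m').y (brSt hc root τ m').r ⊆
      Metric.ball (brSt hc root τ m).y (brSt hc root τ m).r := by
  induction m' with
  | zero =>
      have : m = 0 := by omega
      subst this; exact subset_rfl
  | succ m' ih =>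
      by_cases hmm : m = m' + 1
      · subst hmm; exact subset_rfl
      · exact (Metric.ball_subset_closedBall.trans
          ((brSt_step hc root τ m').hball)).trans (ih (by omega))

lemma G_chain {m m' : ℕ} (hm : m ≤ m') :
    (brSt hc root τ m').G ⊆ (brSt hc root τ m).G := by
  induction m' with
  | zero =>
      have : m = 0 := by omega
      subst this; exact subset_rfl
  | succ m' ih =>
      by_cases hmm : m = m' + 1
      · subst hmm; exact subset_rfl
      · exact ((brSt_step hc root τ m').hGsub).trans (ih (by omega))

lemma spine_chain {m m' : ℕ} (hm : m ≤ m') :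
    (brSt hc root τ m).spine <+: (brSt hc root τ m').spine := by
  induction m' with
  | zero =>
      have : m = 0 := by omega
      subst this; exact List.prefix_rfl
  | succ m' ih =>
      by_cases hmm : m = m' + 1
      · subst hmm; exact List.prefix_rfl
      · exact (ih (by omega)).trans (brSt_step hc root τ m').hspine

variable (hroot0 : (root : St F).m = 0)

include hroot0

lemma com_stable {n m m' : ℕ} (hn : n < m) (hm : m ≤ m') :
    (brSt hc root τ m').com n = (brSt hc root τ m).com n := by
  induction m' with
  | zero =>
      have : m = 0 := by omega
      subst this; rfl
  | succ m' ih =>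
      by_cases hmm : m = m' + 1
      · subst hmm; rfl
      · have h1 := (brSt_step hc root τ m').hcompres n (by
          rw [brSt_m hc root hroot0]; omega)
        rw [h1, ih (by omega)]

lemma W_chain {n m m' : ℕ} (hcom : (brSt hc root τ m).com n = true) (hn : n < m) (hm : m ≤ m') :
    (brSt hc root τ m).W n <+: (brSt hc root τ m').W n := by
  induction m' with
  | zero =>
      have : m = 0 := by omega
      subst this; exact List.prefix_rfl
  | succ m' ih =>
      by_cases hmm : m = m' + 1
      · subst hmm; exact List.prefix_rfl
      · have hm' : m ≤ m' := by omega
        exact (ih hm').trans ((brSt_step hc root τ m').hWext n (by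
          rw [com_stable hc root τ hroot0 hn hm']; exact hcom))

lemma dodge_stable {j m m' : ℕ} (hj : j < m) (hm : m ≤ m') :
    (brSt hc root τ m').dodge j = (brSt hc root τ m).dodge j := by
  induction m' with
  | zero =>
      have : m = 0 := by omega
      subst this; rfl
  | succ m' ih =>
      by_cases hmm : m = m' + 1
      · subst hmm; rfl
      · have h1 := (brSt_step hc root τ m').hdodgepres j (by
          rw [brSt_m hc root hroot0]; omega)
        rw [h1, ih (by omega)]

/-! ### Limits along a branch -/

/-- The limit of the spine chains along a branch. -/
noncomputable def spineLim : ℕ → ℕ := fun i => ((brSt hc root τ (i+1)).spine).getD i 0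

lemma spineLim_mem (m : ℕ) : spineLim hc root τ ∈ Cyl ((brSt hc root τ m).spine) := by
  intro i hi
  show ((brSt hc root τ (i+1)).spine).getD i 0 = ((brSt hc root τ m).spine).getD i 0
  rcases le_total (i+1) m with hle | hle
  · refine (prefix_getD (spine_chain hc root τ hle) ?_).symm
    have := (brSt_ok hc root τ (i+1)).hspinelen
    rw [brSt_m hc root hroot0] at this
    omega
  · exact prefix_getD (spine_chain hc root τ hle) hi

/-- The point of `F` corresponding to a branch. -/
noncomputable def pMap : F := h (spineLim hc root τ)

lemma pMap_mem_ball (m : ℕ) :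
    pMap hc root τ ∈ Metric.ball (brSt hc root τ m).y (brSt hc root τ m).r :=
  (brSt_ok hc root τ m).hspineV (spineLim_mem hc root τ hroot0 m)

/-- The limit of a committed chain along a branch. -/
noncomputable def chainLim (n : ℕ) : ℕ → ℕ :=
  fun i => ((brSt hc root τ (max (i+1) (n+1))).W n).getD i 0

/-- Pinning: two points lying eventually in all the balls coincide. -/
lemma pin {a b : F} {M : ℕ}
    (ha : ∀ m, M ≤ m → a ∈ Metric.closedBall (brSt hc root τ m).y (brSt hc root τ m).r)
    (hb : ∀ m, M ≤ m → b ∈ Metric.closedBall (brSt hc root τ m).y (brSt hc root τ m).r) :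
    a = b := by
  have key : ∀ ε : ℝ, 0 < ε → dist a b < ε := by
    intro ε hε
    obtain ⟨m0, hm0⟩ := exists_pow_lt_of_lt_one (by linarith : (0:ℝ) < ε/2)
      (by norm_num : (1/2:ℝ) < 1)
    set m := max (max M m0) 1 with hmdef
    have hok := brSt_ok hc root τ m
    have hr := hok.hrsmall (by rw [brSt_m hc root hroot0]; omega)
    rw [brSt_m hc root hroot0] at hr
    have h1 := ha m (le_trans (le_max_left M m0) (le_max_left _ _))
    have h2 := hb m (le_trans (le_max_left M m0) (le_max_left _ _))
    rw [Metric.mem_closedBall] at h1 h2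
    have hle : (1/2:ℝ)^m ≤ (1/2:ℝ)^m0 :=
      pow_le_pow_of_le_one (by norm_num) (by norm_num)
        (le_trans (le_max_right M m0) (le_max_left _ _))
    calc dist a b ≤ dist a (brSt hc root τ m).y + dist (brSt hc root τ m).y b :=
          dist_triangle _ _ _
      _ = dist a (brSt hc root τ m).y + dist b (brSt hc root τ m).y := by
          rw [dist_comm (brSt hc root τ m).y b]
      _ ≤ (1/2:ℝ)^m + (1/2:ℝ)^m := by linarith
      _ ≤ (1/2:ℝ)^m0 + (1/2:ℝ)^m0 := by linarith
      _ < ε := by linarith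
  by_contra hne
  exact lt_irrefl _ (key _ (dist_pos.2 hne))


variable {n : ℕ} (hcom : (brSt hc root τ (n+1)).com n = true)

include hcom


lemma com_stable' {m : ℕ} (hm : n + 1 ≤ m) : (brSt hc root τ m).com n = true := by
  rw [com_stable hc root τ hroot0 (Nat.lt_succ_self n) hm]; exact hcom

lemma chainLim_mem {m : ℕ} (hm : n + 1 ≤ m) :
    chainLim hc root τ n ∈ Cyl ((brSt hc root τ m).W n) := by
  intro i hi
  show ((brSt hc root τ (max (i+1) (n+1))).W n).getD i 0 = ((brSt hc root τ m).W n).getD i 0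
  have hcommax := com_stable' hc root τ hroot0 hcom (le_max_right (i+1) (n+1))
  rcases le_total (max (i+1) (n+1)) m with hle | hle
  · refine (prefix_getD (W_chain hc root τ hroot0 hcommax (by omega) hle) ?_).symm
    have := (brSt_ok hc root τ (max (i+1) (n+1))).hcomlen n hcommax
    rw [brSt_m hc root hroot0] at this
    omega
  · exact prefix_getD (W_chain hc root τ hroot0
      (com_stable' hc root τ hroot0 hcom hm) (by omega) hle) hi

lemma chainLim_mem_en : chainLim hc root τ n ∈ Cyl (en n) :=
  cyl_mono ((brSt_ok hc root τ (n+1)).hcompre n hcom)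
    (chainLim_mem hc root τ hroot0 hcom (le_refl _))

lemma chainLim_mem_ball {m : ℕ} (hm : n + 1 ≤ m) :
    h (chainLim hc root τ n) ∈ Metric.ball (brSt hc root τ m).y (brSt hc root τ m).r :=
  (brSt_ok hc root τ m).hcomV n (com_stable' hc root τ hroot0 hcom hm)
    (chainLim_mem hc root τ hroot0 hcom hm)

lemma chainLim_pMap : h (chainLim hc root τ n) = pMap hc root τ := by
  refine pin hc root τ hroot0 (M := n+1)
    (fun m hm => Metric.ball_subset_closedBall (chainLim_mem_ball hc root τ hroot0 hcom hm))
    (fun m hm => Metric.ball_subset_closedBall (pMap_mem_ball hc root τ hroot0 m))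

/-! ### The (★) invariant: the limit point belongs to every `G` -/

variable (hrootG : ∀ z ∈ Metric.ball (root : St F).y (root : St F).r,
    z ∈ h '' Cyl (root : St F).spine → z ∈ (root : St F).G)

include hrootG in
omit hcom in
lemma pMap_mem_G : ∀ m, pMap hc root τ ∈ (brSt hc root τ m).G := by
  intro m
  induction m with
  | zero =>
      exact hrootG _ (pMap_mem_ball hc root τ hroot0 0)
        ⟨spineLim hc root τ, spineLim_mem hc root τ hroot0 0, rfl⟩
  | succ m ih =>
      refine (brSt_step hc root τ m).hGlow _ ih ?_ ?_ ?_ ?_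
      · intro j hj
        rw [brSt_m hc root hroot0] at hj
        rw [brSt_m hc root hroot0]
        have hkill := (brSt_ok hc root τ (m+1)).hdodgekill j (m - 1 - j) (by
          rw [brSt_m hc root hroot0]; omega)
        have hds := dodge_stable hc root τ hroot0 (show j < m from hj)
          (Nat.le_succ m)
        rw [hds] at hkill
        rw [eq_empty_iff_forall_notMem] at hkill
        intro hmem
        exact hkill _ ⟨Metric.ball_subset_closedBall (pMap_mem_ball hc root τ hroot0 (m+1)), hmem⟩
      · exact pMap_mem_ball hc root τ hroot0 (m+1)
      · exact ⟨spineLim hc root τ, spineLim_mem hc root τ hroot0 (m+1), rfl⟩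
      · intro n hn
        have hnlt : n < m + 1 := by
          have := (brSt_ok hc root τ (m+1)).hcomlt n hn
          rwa [brSt_m hc root hroot0] at this
        have hcomn : (brSt hc root τ (n+1)).com n = true := by
          rw [← com_stable hc root τ hroot0 (Nat.lt_succ_self n) (show n+1 ≤ m+1 by omega)]
          exact hn
        exact ⟨chainLim hc root τ n, chainLim_mem hc root τ hroot0 hcomn (by omega),
          chainLim_pMap hc root τ hroot0 hcomn⟩

include hrootG in
omit hcom in
/-- If the fiber over the limit point meets a basic clopen set, the corresponding
chain was committed. -/
lemma com_of_fiber {x : ℕ → ℕ} (hx : h x = pMap hc root τ) {c : ℕ} (hen : x ∈ Cyl (en c)) :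
    (brSt hc root τ (c+1)).com c = true := by
  by_contra hfalse
  have hf : (brSt hc root τ (c+1)).com c = false := by
    cases hh : (brSt hc root τ (c+1)).com c with
    | false => rfl
    | true => exact absurd hh hfalse
  have hrej := (brSt_ok hc root τ (c+1)).hreject c (by
    rw [brSt_m hc root hroot0]; omega) hf
  have hmem : pMap hc root τ ∈ (brSt hc root τ (c+1)).G ∩
      h '' (Cyl (en c) ∩ h ⁻¹' Metric.ball (brSt hc root τ (c+1)).y (brSt hc root τ (c+1)).r) := by
    refine ⟨pMap_mem_G hc root τ hroot0 hrootG (c+1), ⟨x, ⟨hen, ?_⟩, hx⟩⟩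
    rw [mem_preimage, hx]
    exact pMap_mem_ball hc root τ hroot0 (c+1)
  obtain ⟨i, hi⟩ := mem_iUnion.1 (hrej hmem)
  have hkill := (brSt_ok hc root τ (c+i+2)).hdodgekill c i (by
    rw [brSt_m hc root hroot0])
  have hds := dodge_stable hc root τ hroot0 (Nat.lt_succ_self c)
    (show c+1 ≤ c+i+2 by omega)
  rw [hds] at hkill
  rw [eq_empty_iff_forall_notMem] at hkill
  exact hkill _ ⟨Metric.ball_subset_closedBall (pMap_mem_ball hc root τ hroot0 (c+i+2)), hi⟩

end Branch

section Limits

variable (hc : Continuous h) (root : {s : St F // StOK h s})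
  (hroot0 : (root : St F).m = 0)

lemma cyl_pfx_agree {τ τ' : ℕ → ℕ} {M : ℕ} (hτ' : τ' ∈ Cyl (pfx τ M)) :
    ∀ i < M, τ' i = τ i := by
  intro i hi
  have := hτ' i (by simp [hi])
  rwa [pfx_getD τ hi] at this

/-- The section corresponding to chain `n` (defaulting to the spine). -/
noncomputable def sct (n : ℕ) (τ : ℕ → ℕ) : ℕ → ℕ :=
  if (brSt hc root τ (n+1)).com n = true then chainLim hc root τ n else spineLim hc root τ

include hroot0 in
lemma sct_maps (n : ℕ) (τ : ℕ → ℕ) : h (sct hc root n τ) = pMap hc root τ := by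
  unfold sct
  split_ifs with hcm
  · exact chainLim_pMap hc root τ hroot0 hcm
  · rfl

lemma continuous_spineLim : Continuous (fun τ => spineLim hc root τ) := by
  refine continuous_pi fun i => ?_
  refine IsLocallyConstant.continuous ?_
  rw [IsLocallyConstant.iff_exists_open]
  intro τ
  refine ⟨Cyl (pfx τ (i+1)), isOpen_cyl _, mem_cyl_pfx τ (i+1), fun τ' hτ' => ?_⟩
  show ((brSt hc root τ' (i+1)).spine).getD i 0 = ((brSt hc root τ (i+1)).spine).getD i 0
  rw [brSt_congr hc root (fun j hj => cyl_pfx_agree hτ' j hj)]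

lemma continuous_pMap : Continuous (fun τ => pMap hc root τ) :=
  hc.comp (continuous_spineLim hc root)

lemma continuous_sct (n : ℕ) : Continuous (sct hc root n) := by
  refine continuous_pi fun i => ?_
  refine IsLocallyConstant.continuous ?_
  rw [IsLocallyConstant.iff_exists_open]
  intro τ
  set M := max (i+1) (n+1) with hM
  refine ⟨Cyl (pfx τ M), isOpen_cyl _, mem_cyl_pfx τ M, fun τ' hτ' => ?_⟩
  have hagree : ∀ j < M, τ' j = τ j := fun j hj => cyl_pfx_agree hτ' j hj
  have hbr : ∀ m ≤ M, brSt hc root τ' m = brSt hc root τ m := by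
    intro m hm
    exact brSt_congr hc root (fun j hj => hagree j (by omega))
  show sct hc root n τ' i = sct hc root n τ i
  unfold sct
  rw [hbr (n+1) (le_max_right _ _)]
  split_ifs with hcm
  · show ((brSt hc root τ' (max (i+1) (n+1))).W n).getD i 0 =
      ((brSt hc root τ (max (i+1) (n+1))).W n).getD i 0
    rw [hbr _ (le_refl M)]
  · show ((brSt hc root τ' (i+1)).spine).getD i 0 = ((brSt hc root τ (i+1)).spine).getD i 0
    rw [hbr (i+1) (le_max_left _ _)]

include hroot0 in
lemma pMap_prefix : ∀ (m : ℕ) (τ τ' : ℕ → ℕ),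
    pMap hc root τ' ∈ Metric.ball (brSt hc root τ m).y (brSt hc root τ m).r →
    ∀ i < m, τ' i = τ i := by
  intro m
  induction m with
  | zero => intro τ τ' _ i hi; omega
  | succ m ih =>
      intro τ τ' hball i hi
      have hagree : ∀ i < m, τ' i = τ i :=
        ih τ τ' (ball_chain hc root τ (Nat.le_succ m) hball)
      by_cases him : i < m
      · exact hagree i him
      · have hieq : i = m := by omega
        subst hieq
        by_contra hne
        have hnds : nds τ' i = nds τ i := nds_congr hagree
        have h1 : pMap hc root τ' ∈ Metric.closedBall
            ((nodeSt hc root (τ' i :: nds τ i) : St F)).y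
            ((nodeSt hc root (τ' i :: nds τ i) : St F)).r := by
          have := pMap_mem_ball hc root τ' hroot0 (i+1)
          rw [show brSt hc root τ' (i+1) = (nodeSt hc root (τ' i :: nds τ' i) : St F) from rfl,
            hnds] at this
          exact Metric.ball_subset_closedBall this
        have h2 : pMap hc root τ' ∈ Metric.closedBall
            ((nodeSt hc root (τ i :: nds τ i) : St F)).y
            ((nodeSt hc root (τ i :: nds τ i) : St F)).r :=
          Metric.ball_subset_closedBall hball
        have hdisj := nodeSt_disj hc root (nds τ i) hne
        rw [eq_empty_iff_forall_notMem] at hdisj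
        exact hdisj _ ⟨h1, h2⟩

include hroot0 in
lemma pMap_inj : Function.Injective (fun τ => pMap hc root τ) := by
  intro τ τ' heq
  have heq' : pMap hc root τ = pMap hc root τ' := heq
  funext i
  refine pMap_prefix hc root hroot0 (i+1) τ' τ ?_ i (Nat.lt_succ_self i)
  rw [heq']
  exact pMap_mem_ball hc root τ' hroot0 (i+1)

include hroot0 in
lemma pMap_closed : IsClosed (range (fun τ => pMap hc root τ)) := by
  set Q : List ℕ → Set F := fun t => (fun τ => pMap hc root τ) '' {τ | nds τ t.length = t}
    with hQ
  have hQball : ∀ t, Q t ⊆ Metric.closedBall ((nodeSt hc root t : St F)).y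
      ((nodeSt hc root t : St F)).r := by
    rintro t _ ⟨τ, hτ, rfl⟩
    have := pMap_mem_ball hc root τ hroot0 t.length
    rw [show brSt hc root τ t.length = (nodeSt hc root (nds τ t.length) : St F) from rfl,
      hτ] at this
    exact Metric.ball_subset_closedBall this
  have hQsplit : ∀ t, Q t ⊆ ⋃ k, Q (k :: t) := by
    rintro t _ ⟨τ, hτ, rfl⟩
    refine mem_iUnion.2 ⟨τ t.length, ⟨τ, ?_, rfl⟩⟩
    show nds τ (t.length + 1) = τ t.length :: t
    show τ t.length :: nds τ t.length = _
    rw [hτ]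
  have hQstep : ∀ t (z : F), z ∈ closure (Q t) → ∃ k, z ∈ closure (Q (k :: t)) := by
    intro t z hz
    have hlf : LocallyFinite (fun k => Q (k :: t)) := by
      intro w
      obtain ⟨ρ, hρ, hfin⟩ := nodeSt_locfin hc root t w
      refine ⟨Metric.ball w ρ, Metric.ball_mem_nhds w hρ, hfin.subset ?_⟩
      rintro k ⟨u, hu1, hu2⟩
      exact ⟨u, hu2, hQball _ hu1⟩
    have : z ∈ closure (⋃ k, Q (k :: t)) := closure_mono (hQsplit t) hz
    rw [hlf.closure_iUnion] at this
    exact mem_iUnion.1 this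
  refine isClosed_of_closure_subset ?_
  intro z hz
  have hz0 : z ∈ closure (Q []) := by
    have h00 : Q [] = range (fun τ => pMap hc root τ) := by
      simp only [hQ]
      have huniv : {τ : ℕ → ℕ | nds τ ([] : List ℕ).length = ([] : List ℕ)} = univ := by
        ext τ
        simp [nds]
      rw [huniv, image_univ]
    rwa [h00]
  choose f hf using hQstep
  set T : ℕ → {t : List ℕ // z ∈ closure (Q t)} := fun m =>
    Nat.rec ⟨[], hz0⟩ (fun _ ih => ⟨f ih.1 z ih.2 :: ih.1, hf ih.1 z ih.2⟩) m with hT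
  set τ : ℕ → ℕ := fun i => ((T (i+1)).1).headD 0 with hτ
  have hTnds : ∀ m, nds τ m = (T m).1 := by
    intro m
    induction m with
    | zero => rfl
    | succ m ih =>
        show τ m :: nds τ m = (T (m+1)).1
        have hTm : (T (m+1)).1 = f (T m).1 z (T m).2 :: (T m).1 := rfl
        rw [hTm, ih]
        congr 1
  have hzball : ∀ m, z ∈ Metric.closedBall (brSt hc root τ m).y (brSt hc root τ m).r := by
    intro m
    have h1 : z ∈ closure (Q (nds τ m)) := by
      rw [hTnds m]; exact (T m).2
    have h2 := closure_mono (hQball (nds τ m)) h1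
    rwa [closure_eq_iff_isClosed.2 Metric.isClosed_closedBall] at h2
  have : z = pMap hc root τ := by
    refine pin hc root τ hroot0 (M := 0) (fun m _ => hzball m)
      (fun m _ => Metric.ball_subset_closedBall (pMap_mem_ball hc root τ hroot0 m))
  rw [this]
  exact mem_range_self τ

end Limits

/-! ### Assembly -/

lemma key {F : Type*} [MetricSpace F] [SecondCountableTopology F]
    {h : (ℕ → ℕ) → F} (hc : Continuous h) (hsurj : Function.Surjective h)
    (hbig : Bg (univ : Set F)) :
    ∃ P : Set F, IsClosed P ∧ Nonempty (P ≃ₜ (ℕ → ℕ)) ∧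
      ∃ g : ℕ → (P → (ℕ → ℕ)), (∀ n, Continuous (g n)) ∧
        (∀ n t, h (g n t) = (t : F)) ∧
        (∀ t : P, h ⁻¹' {(t : F)} ⊆ closure (range fun n => g n t)) := by
  classical
  obtain ⟨r0, hr0ok, hr0m, hr0G⟩ := root_exists hc hsurj hbig
  set root : {s : St F // StOK h s} := ⟨r0, hr0ok⟩ with hroot
  have hroot0 : (root : St F).m = 0 := hr0m
  have hrootG : ∀ z ∈ Metric.ball (root : St F).y (root : St F).r,
      z ∈ h '' Cyl (root : St F).spine → z ∈ (root : St F).G := hr0G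
  set p : (ℕ → ℕ) → F := fun τ => pMap hc root τ with hp
  set P : Set F := range p with hP
  have hPclosed : IsClosed P := pMap_closed hc root hroot0
  set E : (ℕ → ℕ) ≃ P := Equiv.ofInjective p (pMap_inj hc root hroot0) with hE
  have hEval : ∀ τ, (E τ : F) = p τ := fun τ => rfl
  have hpc : Continuous p := continuous_pMap hc root
  have hEc : Continuous (E : (ℕ → ℕ) → P) := by
    refine Continuous.subtype_mk ?_ _
    exact hpc
  have hEopen : IsOpenMap (E : (ℕ → ℕ) → P) := by
    intro U hU
    have hch : ∀ τ : {τ // τ ∈ U}, ∃ m, 1 ≤ m ∧ Cyl (pfx (τ : ℕ → ℕ) m) ⊆ U :=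
      fun τ => exists_pfx_subset hU τ.2 1
    choose mf hmf1 hmf2 using hch
    set V : Set F := ⋃ τ : {τ // τ ∈ U},
      Metric.ball (brSt hc root (τ : ℕ → ℕ) (mf τ)).y
        (brSt hc root (τ : ℕ → ℕ) (mf τ)).r with hV
    have himg : ((E : (ℕ → ℕ) → P) '' U) = Subtype.val ⁻¹' V := by
      ext x
      constructor
      · rintro ⟨τ, hτU, rfl⟩
        show (E τ : F) ∈ V
        rw [hEval τ]
        exact mem_iUnion.2 ⟨⟨τ, hτU⟩, pMap_mem_ball hc root τ hroot0 (mf ⟨τ, hτU⟩)⟩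
      · intro hx
        obtain ⟨τ0, hτ0⟩ := mem_iUnion.1 hx
        obtain ⟨τ'', hτ''⟩ := (x.2 : (x : F) ∈ range p)
        rw [← hτ''] at hτ0
        have hagree := pMap_prefix hc root hroot0 (mf τ0) (τ0 : ℕ → ℕ) τ'' hτ0
        have hτ''U : τ'' ∈ U := by
          refine hmf2 τ0 ?_
          intro i hi
          rw [pfx_length] at hi
          rw [pfx_getD _ hi]
          exact hagree i hi
        exact ⟨τ'', hτ''U, Subtype.ext (by rw [hEval τ'', hτ''])⟩
    rw [himg]
    refine (isOpen_iUnion fun τ0 => Metric.isOpen_ball).preimage continuous_subtype_val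
  set homeo : (ℕ → ℕ) ≃ₜ P := Equiv.toHomeomorphOfContinuousOpen E hEc hEopen with hhomeo
  refine ⟨P, hPclosed, ⟨homeo.symm⟩, ?_⟩
  set g : ℕ → P → (ℕ → ℕ) := fun n t => sct hc root n (homeo.symm t) with hg
  have hsymmEq : ∀ t : P, homeo.symm t = E.symm t := fun t => by
    rw [hhomeo]
    exact congrFun (Equiv.toHomeomorphOfContinuousOpen_symm_apply E hEc hEopen) t
  have hginv : ∀ t : P, p (homeo.symm t) = (t : F) := by
    intro t
    have h1 : E (homeo.symm t) = t := by
      rw [hsymmEq t, Equiv.apply_symm_apply]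
    calc p (homeo.symm t) = (E (homeo.symm t) : F) := (hEval _).symm
      _ = (t : F) := by rw [h1]
  refine ⟨g, ?_, ?_, ?_⟩
  · intro n
    exact (continuous_sct hc root n).comp homeo.symm.continuous
  · intro n t
    show h (sct hc root n (homeo.symm t)) = _
    rw [sct_maps hc root hroot0 n (homeo.symm t)]
    exact hginv t
  · intro t x hx
    rw [mem_preimage, mem_singleton_iff] at hx
    set τ : ℕ → ℕ := homeo.symm t with hτdef
    have hxp : h x = pMap hc root τ := by
      rw [hx, ← hginv t]
    rw [_root_.mem_closure_iff]
    intro O hO hxO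
    obtain ⟨n0, hn0, hsub⟩ := exists_pfx_subset hO hxO 0
    obtain ⟨cd, hcd⟩ := en_surj (pfx x n0)
    have hen : x ∈ Cyl (en cd) := by rw [hcd]; exact mem_cyl_pfx x n0
    have hcom := com_of_fiber hc root τ hroot0 hrootG hxp hen
    refine ⟨g cd t, ?_, mem_range_self cd⟩
    apply hsub
    have hgc : g cd t = chainLim hc root τ cd := by
      show sct hc root cd τ = _
      unfold sct
      rw [if_pos hcom]
    rw [hgc, ← hcd]
    exact chainLim_mem_en hc root τ hroot0 hcom

end SRaux

/-- Lemma 2.3.1. -/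
theorem exists_closed_copy_of_irrationals_and_dense_selections
    {E F : Type} [TopologicalSpace E] [MetrizableSpace E]
    (hE : ∃ g : (ℕ → ℕ) → E, Continuous g ∧ Function.Surjective g)
    [TopologicalSpace F] [MetrizableSpace F] (hF : ¬ SigmaCompactSpace F)
    (f : E → F) (hf : Continuous f) (hsurj : Function.Surjective f) :
    ∃ P : Set F, IsClosed P ∧ Nonempty (P ≃ₜ (ℕ → ℕ)) ∧
      ∃ g : ℕ → (P → E), (∀ n, Continuous (g n)) ∧
        (∀ n (t : P), f (g n t) = (t : F)) ∧
        (∀ t : P, f ⁻¹' {(t : F)} ⊆ closure (range fun n => g n t)) := by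
  classical
  obtain ⟨gE, hgEc, hgEs⟩ := hE
  letI : MetricSpace F := TopologicalSpace.metrizableSpaceMetric F
  set h : (ℕ → ℕ) → F := f ∘ gE with hh
  have hhc : Continuous h := hf.comp hgEc
  have hhs : Function.Surjective h := hsurj.comp hgEs
  haveI : SeparableSpace F := hhs.denseRange.separableSpace hhc
  haveI : SecondCountableTopology F := UniformSpace.secondCountable_of_separable F
  have hbig : SRaux.Bg (univ : Set F) := by
    intro K hK hsub
    apply hF
    rw [← isSigmaCompact_univ_iff]
    rw [← eq_univ_of_univ_subset hsub]
    exact hK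
  obtain ⟨P, hPc, ⟨ho⟩, g, hgc, hgsec, hgdense⟩ := SRaux.key hhc hhs hbig
  refine ⟨P, hPc, ⟨ho⟩, fun n t => gE (g n t), fun n => hgEc.comp (hgc n),
    fun n t => hgsec n t, ?_⟩
  intro t x hx
  rw [mem_preimage, mem_singleton_iff] at hx
  obtain ⟨xh, rfl⟩ := hgEs x
  have hxh : xh ∈ h ⁻¹' {(t : F)} := by
    rw [mem_preimage, mem_singleton_iff]
    exact hx
  have h2 : gE xh ∈ gE '' closure (range fun n => g n t) := ⟨xh, hgdense t hxh, rfl⟩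
  have h3 := (image_closure_subset_closure_image hgEc) h2
  refine closure_mono ?_ h3
  rintro u ⟨v, ⟨n, rfl⟩, rfl⟩
  exact ⟨n, rfl⟩
end

section
/- Let I = [0,1], let ℚ be the rationals in I, and consider the subspace E = I² ∖ ℚ² of the square. Then F₀(E) is not Souslin in the Effros Borel space (F(E), 𝓑_{F(E)}). -/
open Set Topology TopologicalSpace MeasureTheory
open scoped Classical

/-- The square `I² = [0,1]²` minus the rational points `ℚ²`. -/
def squareMinusRatSq : Set (ℝ × ℝ) :=
  (Icc (0:ℝ) 1 ×ˢ Icc (0:ℝ) 1) \ {p | ¬ Irrational p.1 ∧ ¬ Irrational p.2}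


namespace NS

noncomputable section


abbrev Nf := ℕ → ℕ

def pre (x : Nf) (n : ℕ) : List ℕ := List.ofFn fun i : Fin n => x i

@[simp] lemma pre_length (x : Nf) (n : ℕ) : (pre x n).length = n := by
  simp [pre]

lemma pre_zero (x : Nf) : pre x 0 = [] := by simp [pre]

lemma pre_succ (x : Nf) (n : ℕ) : pre x (n+1) = pre x n ++ [x n] := by
  show List.ofFn _ = _
  rw [List.ofFn_succ']
  simp [pre, List.concat_eq_append]

lemma pre_getElem (x : Nf) {n i : ℕ} (h : i < n) :
    (pre x n)[i]'(by simpa using h) = x i := by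
  simp [pre]

lemma pre_getD (x : Nf) {n p : ℕ} (h : p < n) : (pre x n).getD p 0 = x p := by
  rw [List.getD_eq_getElem _ _ (by simpa using h)]
  exact pre_getElem x h

lemma pre_take (x : Nf) {n k : ℕ} (h : k ≤ n) : (pre x n).take k = pre x k := by
  apply List.ext_getElem
  · simp [h]
  · intro i h1 h2
    have hik : i < k := by simpa using h2
    have hin : i < n := lt_of_lt_of_le hik h
    simp only [List.getElem_take]
    rw [pre_getElem x hin, pre_getElem x hik]

lemma pre_congr {f g : Nf} {m : ℕ} (h : ∀ i < m, f i = g i) : pre f m = pre g m := by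
  unfold pre
  congr 1
  funext i
  exact h i i.isLt

/-- The class of "tree-analytic" subsets of Baire space. -/
def TA (A : Set Nf) : Prop :=
  ∃ R : List ℕ → List ℕ → Prop, A = {x | ∃ z : Nf, ∀ n, R (pre x n) (pre z n)}

lemma TA_univ : TA (univ : Set Nf) :=
  ⟨fun _ _ => True, by ext x; simp⟩

lemma TA_empty : TA (∅ : Set Nf) :=
  ⟨fun _ _ => False, by ext x; simp⟩

/-- Key closure property: TA is closed under the Souslin operation. -/
lemma TA_souslin (f : List ℕ → Set Nf) (h : ∀ s, TA (f s)) :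
    TA (⋃ σ : Nf, ⋂ n : ℕ, f (pre σ n)) := by
  set Rf : List ℕ → List ℕ → List ℕ → Prop := fun s => Classical.choose (h s) with hRf
  have hspec : ∀ s, f s = {x | ∃ z : Nf, ∀ n, Rf s (pre x n) (pre z n)} :=
    fun s => Classical.choose_spec (h s)
  classical
  refine ⟨fun u w => ∀ m k : ℕ, k ≤ u.length →
      (∀ i < m, Nat.pair 0 i < w.length) →
      (∀ j < k, Nat.pair (m+1) j < w.length) →
      Rf (pre (fun i => w.getD (Nat.pair 0 i) 0) m) (u.take k)
         (pre (fun j => w.getD (Nat.pair (m+1) j) 0) k), ?_⟩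
  ext x
  simp only [mem_iUnion, mem_iInter, mem_setOf_eq]
  constructor
  · rintro ⟨σ, hσ⟩
    have hz : ∀ m, ∃ z : Nf, ∀ n, Rf (pre σ m) (pre x n) (pre z n) := by
      intro m
      have := hσ m
      rwa [hspec (pre σ m)] at this
    choose zf hzf using hz
    refine ⟨fun p => if (Nat.unpair p).1 = 0 then σ (Nat.unpair p).2
        else zf ((Nat.unpair p).1 - 1) (Nat.unpair p).2, ?_⟩
    intro n m k hk h0 h1
    have h0' : ∀ i < m, Nat.pair 0 i < n := by
      intro i hi; simpa using h0 i hi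
    have h1' : ∀ j < k, Nat.pair (m+1) j < n := by
      intro j hj; simpa using h1 j hj
    have e1 : pre (fun i => (pre (fun p => if (Nat.unpair p).1 = 0 then σ (Nat.unpair p).2
        else zf ((Nat.unpair p).1 - 1) (Nat.unpair p).2) n).getD (Nat.pair 0 i) 0) m
        = pre σ m := by
      apply pre_congr; intro i hi
      rw [pre_getD _ (h0' i hi)]
      simp
    have e2 : pre (fun j => (pre (fun p => if (Nat.unpair p).1 = 0 then σ (Nat.unpair p).2
        else zf ((Nat.unpair p).1 - 1) (Nat.unpair p).2) n).getD (Nat.pair (m+1) j) 0) k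
        = pre (zf m) k := by
      apply pre_congr; intro j hj
      rw [pre_getD _ (h1' j hj)]
      simp
    rw [e1, e2]
    rw [pre_take x (by simpa using hk)]
    exact hzf m k
  · rintro ⟨Z, hZ⟩
    refine ⟨fun i => Z (Nat.pair 0 i), ?_⟩
    intro m
    rw [hspec]
    refine ⟨fun j => Z (Nat.pair (m+1) j), ?_⟩
    intro k
    set A : ℕ := (Finset.range m).sup (fun i => Nat.pair 0 i + 1) with hA
    set B : ℕ := (Finset.range k).sup (fun j => Nat.pair (m+1) j + 1) with hB
    set N : ℕ := A ⊔ B ⊔ k with hN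
    have hkN : k ≤ N := le_sup_right
    have h0 : ∀ i < m, Nat.pair 0 i < N := by
      intro i hi
      have h' : Nat.pair 0 i + 1 ≤ A :=
        Finset.le_sup (f := fun i => Nat.pair 0 i + 1) (Finset.mem_range.2 hi)
      have : A ≤ N := le_trans le_sup_left le_sup_left
      omega
    have h1 : ∀ j < k, Nat.pair (m+1) j < N := by
      intro j hj
      have h' : Nat.pair (m+1) j + 1 ≤ B :=
        Finset.le_sup (f := fun j => Nat.pair (m+1) j + 1) (Finset.mem_range.2 hj)
      have : B ≤ N := le_trans le_sup_right le_sup_left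
      omega
    have H := hZ N m k (by simpa using hkN) (by simpa using h0) (by simpa using h1)
    rw [pre_take x hkN] at H
    have e1 : pre (fun i => (pre Z N).getD (Nat.pair 0 i) 0) m
        = pre (fun i => Z (Nat.pair 0 i)) m :=
      pre_congr fun i hi => pre_getD _ (h0 i hi)
    have e2 : pre (fun j => (pre Z N).getD (Nat.pair (m+1) j) 0) k
        = pre (fun j => Z (Nat.pair (m+1) j)) k :=
      pre_congr fun j hj => pre_getD _ (h1 j hj)
    rw [e1, e2] at H
    exact H


lemma pre_succ_head (x : Nf) (n : ℕ) :
    pre x (n+1) = x 0 :: pre (fun i => x (i+1)) n := by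
  simp [pre, List.ofFn_succ]

lemma TA_iUnion_nat (B : ℕ → Set Nf) (h : ∀ i, TA (B i)) : TA (⋃ i, B i) := by
  have hs : ∀ s : List ℕ, TA ((fun s => match s with | [] => (univ : Set Nf) | (a :: _) => B a) s) := by
    intro s; cases s with
    | nil => exact TA_univ
    | cons a l => exact h a
  have h2 := TA_souslin _ hs
  convert h2 using 1
  ext x
  simp only [mem_iUnion, mem_iInter]
  constructor
  · rintro ⟨i, hi⟩
    refine ⟨fun _ => i, fun n => ?_⟩
    cases n with
    | zero => rw [pre_zero]; trivial
    | succ n => rw [pre_succ_head]; exact hi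
  · rintro ⟨σ, hσ⟩
    refine ⟨σ 0, ?_⟩
    have := hσ 1
    rwa [pre_succ_head] at this

lemma TA_iInter_nat (C : ℕ → Set Nf) (h : ∀ i, TA (C i)) : TA (⋂ i, C i) := by
  have h2 := TA_souslin (fun s => C s.length) (fun s => h s.length)
  convert h2 using 1
  ext x
  simp only [mem_iUnion, mem_iInter, pre_length]
  exact ⟨fun h' => ⟨fun _ => 0, fun n => h' n⟩, fun ⟨σ, hσ⟩ => hσ⟩

lemma TA_iUnion {ι : Type*} [Countable ι] (B : ι → Set Nf) (h : ∀ i, TA (B i)) :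
    TA (⋃ i, B i) := by
  cases isEmpty_or_nonempty ι with
  | inl hempty => rw [iUnion_of_empty]; exact TA_empty
  | inr hne =>
    obtain ⟨g, hg⟩ := exists_surjective_nat ι
    rw [← hg.iUnion_comp (fun i => B i)]
    exact TA_iUnion_nat _ (fun n => h _)

lemma TA_iInter {ι : Type*} [Countable ι] (B : ι → Set Nf) (h : ∀ i, TA (B i)) :
    TA (⋂ i, B i) := by
  cases isEmpty_or_nonempty ι with
  | inl hempty => rw [iInter_of_empty]; exact TA_univ
  | inr hne =>
    obtain ⟨g, hg⟩ := exists_surjective_nat ι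
    rw [← hg.iInter_comp (fun i => B i)]
    exact TA_iInter_nat _ (fun n => h _)

lemma TA_basic (g : List ℕ → ℕ) (k : ℕ) (P : ℕ → Prop) :
    TA {x : Nf | P (x (g (pre x k)))} := by
  refine ⟨fun u w => k ≤ u.length → g (u.take k) < u.length → P (u.getD (g (u.take k)) 0), ?_⟩
  ext x
  simp only [mem_setOf_eq]
  constructor
  · intro hx
    refine ⟨x, fun n hk hg' => ?_⟩
    rw [pre_take x (by simpa using hk)] at hg' ⊢
    rw [pre_getD x (by simpa using hg')]
    exact hx
  · rintro ⟨z, hz⟩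
    set N : ℕ := k ⊔ (g (pre x k) + 1) with hN
    have hkN : k ≤ N := le_sup_left
    have H := hz N
    rw [pre_take x hkN] at H
    have hgN : g (pre x k) < N := by
      have : g (pre x k) + 1 ≤ N := le_sup_right
      omega
    have H2 := H (by simpa using hkN) (by simpa using hgN)
    rwa [pre_getD x hgN] at H2

def enc : List ℕ × List ℕ → ℕ := Encodable.encode

lemma enc_inj : Function.Injective enc := Encodable.encode_injective

/-- The diagonal set. -/
def Diag : Set Nf := {x | ¬ ∃ z : Nf, ∀ n, x (enc (pre x n, pre z n)) = 1}

lemma not_TA_Diag : ¬ TA Diag := by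
  rintro ⟨R, hR⟩
  classical
  set y : Nf := fun p => if ∃ uv : List ℕ × List ℕ, enc uv = p ∧ R uv.1 uv.2 then 1 else 0 with hy0
  have hy : ∀ u w, y (enc (u, w)) = 1 ↔ R u w := by
    intro u w
    have hyv : y (enc (u, w)) = if ∃ uv : List ℕ × List ℕ, enc uv = enc (u, w) ∧ R uv.1 uv.2 then 1 else 0 := rfl
    rw [hyv]
    split_ifs with h
    · rcases h with ⟨uv, he, hr⟩
      have := enc_inj he
      subst this
      simp [hr]
    · constructor
      · intro h01; exact absurd h01 (by norm_num)
      · intro hr; exact absurd ⟨(u, w), rfl, hr⟩ h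
  have hy3 : y ∈ Diag ↔ ∃ z : Nf, ∀ n, R (pre y n) (pre z n) := by
    rw [hR]; exact Iff.rfl
  have hy2 : y ∈ Diag ↔ ¬ ∃ z : Nf, ∀ n, R (pre y n) (pre z n) := by
    unfold Diag
    simp only [mem_setOf_eq]
    apply not_congr
    exact exists_congr fun z => forall_congr' fun n => hy _ _
  rw [hy2] at hy3
  exact iff_not_self hy3.symm



/-- A surjective enumeration of the rationals. -/
def rseq : ℕ → ℚ := Classical.choose (exists_surjective_nat ℚ)

lemma rseq_surj : Function.Surjective rseq := Classical.choose_spec (exists_surjective_nat ℚ)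

def tt (p : ℚ × ℚ) (k : ℕ) : ℚ := (p.2 - p.1) / 2 ^ (k + 4)

/-- Child interval: a subinterval of `(p.1, p.1 + (p.2-p.1)/2^(k+1)]` avoiding `rseq d`. -/
def child (p : ℚ × ℚ) (d k : ℕ) : ℚ × ℚ :=
  if rseq d ∈ Set.Icc (p.1 + 3 * tt p k) (p.1 + 4 * tt p k)
  then (p.1 + 5 * tt p k, p.1 + 6 * tt p k)
  else (p.1 + 3 * tt p k, p.1 + 4 * tt p k)

lemma child_props {p : ℚ × ℚ} (hp : p.1 < p.2) (d k : ℕ) :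
    p.1 < (child p d k).1 ∧ (child p d k).1 < (child p d k).2 ∧
    (child p d k).2 ≤ p.1 + (p.2 - p.1) / 2 ^ (k + 1) ∧
    (child p d k).2 - (child p d k).1 ≤ (p.2 - p.1) / 2 ∧
    ¬ ((child p d k).1 ≤ rseq d ∧ rseq d ≤ (child p d k).2) := by
  have hc : (0:ℚ) < 2 ^ (k + 1) := by positivity
  have hc4 : (0:ℚ) < 2 ^ (k + 4) := by positivity
  have ht0 : 0 < tt p k := div_pos (by linarith) hc4
  have he : (2:ℚ) ^ (k + 4) = 2 ^ (k + 1) * 8 := by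
    rw [show k + 4 = (k + 1) + 3 from rfl, pow_add]; norm_num
  have key : 8 * tt p k = (p.2 - p.1) / 2 ^ (k + 1) := by
    rw [tt, he]
    field_simp
  have key2 : tt p k ≤ (p.2 - p.1) / 2 := by
    rw [tt]
    exact div_le_div_of_nonneg_left (by linarith) (by norm_num)
      (le_self_pow₀ (by norm_num) (by omega))
  unfold child
  split_ifs with h
  · simp only [mem_Icc] at h
    refine ⟨by simp only; nlinarith, by simp only; nlinarith, by simp only; nlinarith,
      by simp only; nlinarith, ?_⟩
    simp only
    rintro ⟨h1, h2⟩
    nlinarith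
  · simp only [mem_Icc] at h
    push_neg at h
    refine ⟨by simp only; nlinarith, by simp only; nlinarith, by simp only; nlinarith,
      by simp only; nlinarith, ?_⟩
    simp only
    rintro ⟨h1, h2⟩
    rcases lt_or_ge (rseq d) (p.1 + 3 * tt p k) with h3 | h3
    · linarith
    · have := h h3; linarith

def go : ℚ × ℚ → ℕ → List ℕ → ℚ × ℚ
  | p, _, [] => p
  | p, d, (k :: v) => go (child p d k) (d+1) v

@[simp] lemma go_nil (p : ℚ × ℚ) (d : ℕ) : go p d [] = p := rfl

lemma go_cons (p : ℚ × ℚ) (d k : ℕ) (v : List ℕ) :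
    go p d (k :: v) = go (child p d k) (d+1) v := rfl

lemma go_append (p : ℚ × ℚ) (d : ℕ) (v w : List ℕ) :
    go p d (v ++ w) = go (go p d v) (d + v.length) w := by
  induction v generalizing p d with
  | nil => simp
  | cons k v ih =>
    rw [List.cons_append, go_cons, go_cons, ih]
    congr 1
    simp
    omega

/-- The basic interval-in structure: go stays inside and stays nondegenerate. -/
lemma go_mem {p : ℚ × ℚ} (hp : p.1 < p.2) (d : ℕ) (v : List ℕ) :
    (go p d v).1 < (go p d v).2 ∧ p.1 ≤ (go p d v).1 ∧ (go p d v).2 ≤ p.2 := by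
  induction v generalizing p d with
  | nil => exact ⟨hp, le_refl _, le_refl _⟩
  | cons k v ih =>
    rw [go_cons]
    obtain ⟨h1, h2, h3, h4, h5⟩ := child_props hp d k
    have hsub : (child p d k).2 ≤ p.2 := by
      have h2k : (p.2 - p.1) / 2 ^ (k+1) ≤ p.2 - p.1 := by
        apply div_le_self (by linarith)
        exact one_le_pow₀ (by norm_num)
      linarith
    obtain ⟨i1, i2, i3⟩ := ih h2 (d+1) (p := child p d k)
    exact ⟨i1, le_trans h1.le i2, le_trans i3 hsub⟩

lemma go_diff {p : ℚ × ℚ} (hp : p.1 < p.2) (d : ℕ) (v : List ℕ) :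
    (go p d v).2 - (go p d v).1 ≤ (p.2 - p.1) * (1/2) ^ v.length := by
  induction v generalizing p d with
  | nil => simp
  | cons k v ih =>
    rw [go_cons]
    obtain ⟨h1, h2, h3, h4, h5⟩ := child_props hp d k
    have := ih h2 (d+1) (p := child p d k)
    have hlen : ((k :: v).length : ℕ) = v.length + 1 := by simp
    calc (go (child p d k) (d+1) v).2 - (go (child p d k) (d+1) v).1
        ≤ ((child p d k).2 - (child p d k).1) * (1/2) ^ v.length := this
      _ ≤ ((p.2 - p.1) / 2) * (1/2) ^ v.length := by
          apply mul_le_mul_of_nonneg_right h4 (by positivity)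
      _ = (p.2 - p.1) * (1/2) ^ (k :: v).length := by
          rw [hlen, pow_succ]
          ring

/-- The interval assigned to a node `v`. -/
def IT (v : List ℕ) : ℚ × ℚ := go (0, 1) 0 v

def la (v : List ℕ) : ℚ := (IT v).1
def lb (v : List ℕ) : ℚ := (IT v).2

lemma la_lt_lb (v : List ℕ) : la v < lb v := (go_mem (by norm_num) 0 v).1

lemma la_nonneg (v : List ℕ) : 0 ≤ la v := (go_mem (by norm_num) 0 v).2.1

lemma lb_le_one (v : List ℕ) : lb v ≤ 1 := (go_mem (by norm_num) 0 v).2.2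

lemma IT_append (v w : List ℕ) : IT (v ++ w) = go (IT v) v.length w := by
  rw [IT, go_append]
  simp [IT]

/-- Nesting: extensions have subintervals. -/
lemma nest {v w : List ℕ} (h : v <+: w) : la v ≤ la w ∧ lb w ≤ lb v := by
  obtain ⟨u, rfl⟩ := h
  have := go_mem (la_lt_lb v) v.length u
  simp only [la, lb, IT_append]
  exact ⟨this.2.1, this.2.2⟩

lemma diff_le (v : List ℕ) : lb v - la v ≤ (1/2) ^ v.length := by
  have := go_diff (p := ((0:ℚ), (1:ℚ))) (by norm_num) 0 v
  simpa [la, lb, IT] using this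

/-- One-step: the child relation. -/
lemma IT_concat (v : List ℕ) (k : ℕ) : IT (v ++ [k]) = child (IT v) v.length k := by
  rw [IT_append]
  rfl

lemma concat_envelope (v : List ℕ) (k : ℕ) :
    la v < la (v ++ [k]) ∧ lb (v ++ [k]) ≤ la v + (lb v - la v) / 2 ^ (k + 1) := by
  obtain ⟨h1, h2, h3, h4, h5⟩ := child_props (la_lt_lb v) v.length k
  simp only [la, lb, IT_concat]
  exact ⟨h1, h3⟩

/-- Avoidance of enumerated rationals. -/
lemma avoid {v : List ℕ} {n : ℕ} (h : n < v.length) :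
    ¬ (la v ≤ rseq n ∧ rseq n ≤ lb v) := by
  rintro ⟨h1, h2⟩
  have htake : v.take (n+1) = v.take n ++ [v[n]'h] := by
    rw [List.take_succ, List.getElem?_eq_getElem h]
    rfl
  have hlen : (v.take n).length = n := by
    rw [List.length_take]
    omega
  have hpref1 : v.take (n+1) <+: v := List.take_prefix _ _
  have hnest := nest hpref1
  have hchild : IT (v.take (n+1)) = child (IT (v.take n)) n (v[n]'h) := by
    rw [htake, IT_concat, hlen]
  obtain ⟨c1, c2, c3, c4, c5⟩ := child_props (la_lt_lb (v.take n)) n (v[n]'h)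
  apply c5
  rw [← hchild] at *
  constructor
  · calc (IT (v.take (n+1))).1 = la (v.take (n+1)) := rfl
      _ ≤ la v := hnest.1
      _ ≤ rseq n := h1
  · calc rseq n ≤ lb v := h2
      _ ≤ lb (v.take (n+1)) := hnest.2
      _ = (IT (v.take (n+1))).2 := rfl


/-! ### Trees and the closure analysis -/

def ra (v : List ℕ) : ℝ := (la v : ℝ)
def rb (v : List ℕ) : ℝ := (lb v : ℝ)

lemma ra_lt_rb (v : List ℕ) : ra v < rb v := by
  have := la_lt_lb v; rw [ra, rb]; exact_mod_cast this

lemma ra_nonneg (v : List ℕ) : 0 ≤ ra v := by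
  have := la_nonneg v; rw [ra]; exact_mod_cast this

lemma rb_le_one (v : List ℕ) : rb v ≤ 1 := by
  have := lb_le_one v; rw [rb]; exact_mod_cast this

lemma rnest {v w : List ℕ} (h : v <+: w) : ra v ≤ ra w ∧ rb w ≤ rb v := by
  have := nest h
  constructor
  · rw [ra, ra]; exact_mod_cast this.1
  · rw [rb, rb]; exact_mod_cast this.2

lemma rdiff_le (v : List ℕ) : rb v - ra v ≤ (1/2 : ℝ) ^ v.length := by
  have := diff_le v
  rw [ra, rb]
  have : ((lb v - la v : ℚ) : ℝ) ≤ (((1/2 : ℚ) ^ v.length : ℚ) : ℝ) := by exact_mod_cast this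
  push_cast at this
  linarith

lemma half_pow (k : ℕ) : (1/2 : ℝ) ^ k = 1 / 2 ^ k := by
  rw [div_pow, one_pow]

lemma renvelope (u : List ℕ) (k : ℕ) {v : List ℕ} (h : (u ++ [k]) <+: v) :
    ra v ≤ ra u + (1/2 : ℝ) ^ (k+1) := by
  have h2 := (rnest h).2
  have h3 := (concat_envelope u k).2
  have hd : lb u - la u ≤ 1 := by
    have h0 := diff_le u
    have h4 : ((1:ℚ)/2) ^ u.length ≤ 1 := pow_le_one₀ (by norm_num) (by norm_num)
    linarith
  have h5 : lb (u ++ [k]) ≤ la u + 1 / 2 ^ (k+1) := by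
    refine h3.trans ?_
    have h6 : (lb u - la u) / 2 ^ (k+1) ≤ 1 / 2 ^ (k+1) := by
      gcongr
    linarith
  have h7 : ra v ≤ rb v := (ra_lt_rb v).le
  have h9 : rb (u ++ [k]) ≤ ra u + (1/2 : ℝ) ^ (k+1) := by
    rw [rb, ra, half_pow]
    have hcast : ((lb (u ++ [k]) : ℚ) : ℝ) ≤ (((la u + 1/2^(k+1) : ℚ)) : ℝ) := by
      exact_mod_cast h5
    push_cast at hcast
    convert hcast using 2
  linarith

/-- The set of α-points of a tree, with 0 added. -/
def Apts (T : Set (List ℕ)) : Set ℝ := insert 0 {x : ℝ | ∃ v ∈ T, x = ra v}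

/-- Extension points. -/
def Su (T : Set (List ℕ)) (u : List ℕ) : Set ℝ := {x : ℝ | ∃ v, v ∈ T ∧ u <+: v ∧ x = ra v}

section TreeAnalysis

variable {T : Set (List ℕ)}

lemma Su_subset_Icc (u : List ℕ) : Su T u ⊆ Icc (ra u) (rb u) := by
  rintro x ⟨v, hv, hpre, rfl⟩
  exact ⟨(rnest hpre).1, le_trans (ra_lt_rb v).le (rnest hpre).2⟩

lemma margin (p : ℝ) (u : List ℕ) (h : ∀ k : ℕ, p ∉ closure (Su T (u ++ [k]))) :
    ∀ K : ℕ, ∃ ε > 0, ∀ k < K, ∀ s ∈ Su T (u ++ [k]), ε ≤ dist p s := by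
  intro K
  induction K with
  | zero => exact ⟨1, by norm_num, fun k hk => absurd hk (by omega)⟩
  | succ K ih =>
    obtain ⟨ε, hε, hεs⟩ := ih
    have hK := h K
    rw [Metric.mem_closure_iff] at hK
    push_neg at hK
    obtain ⟨ε2, hε2, hs2⟩ := hK
    refine ⟨min ε ε2, lt_min hε hε2, ?_⟩
    intro k hk s hs
    rcases Nat.lt_or_ge k K with h' | h'
    · exact le_trans (min_le_left _ _) (hεs k h' s hs)
    · have hkK : k = K := by omega
      subst hkK
      exact le_trans (min_le_right _ _) (hs2 s hs)

lemma step (hT : ∀ v ∈ T, ∀ j, v.take j ∈ T) (p : ℝ) (hirr : Irrational p) (u : List ℕ)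
    (hu : p ∈ closure (Su T u)) :
    ∃ k : ℕ, (u ++ [k]) ∈ T ∧ p ∈ closure (Su T (u ++ [k])) := by
  have hsub : p ∈ Icc (ra u) (rb u) := closure_minimal (Su_subset_Icc u) isClosed_Icc hu
  have hne : p ≠ ra u := by
    intro h; exact hirr ⟨la u, h.symm⟩
  have hδ : 0 < p - ra u := sub_pos.2 (lt_of_le_of_ne hsub.1 (Ne.symm hne))
  by_contra hcon
  push_neg at hcon
  have hall : ∀ k : ℕ, p ∉ closure (Su T (u ++ [k])) := by
    intro k
    by_cases hk : (u ++ [k]) ∈ T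
    · exact hcon k hk
    · have hempty : Su T (u ++ [k]) = ∅ := by
        ext x
        simp only [Su, mem_setOf_eq, mem_empty_iff_false, iff_false]
        rintro ⟨v, hv, hpre, rfl⟩
        apply hk
        have h1 := hT v hv (u.length + 1)
        have he : u ++ [k] = List.take (u.length + 1) v := by
          have h2 := List.prefix_iff_eq_take.1 hpre
          simpa using h2
        rwa [← he] at h1
      rw [hempty, closure_empty]
      exact notMem_empty p
  obtain ⟨K, hK⟩ : ∃ K : ℕ, (1/2:ℝ)^(K+1) < (p - ra u)/2 := by
    obtain ⟨K, hK⟩ := exists_pow_lt_of_lt_one (by linarith : (0:ℝ) < (p - ra u)/2)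
      (by norm_num : (1/2:ℝ) < 1)
    refine ⟨K, lt_of_le_of_lt ?_ hK⟩
    apply pow_le_pow_of_le_one (by norm_num) (by norm_num) (by omega)
  obtain ⟨ε, hε, hεs⟩ := margin p u hall K
  have hpos : 0 < min ε ((p - ra u)/2) := lt_min hε (by linarith)
  rw [Metric.mem_closure_iff] at hu
  obtain ⟨s, hsS, hds⟩ := hu _ hpos
  obtain ⟨v, hv, hpre, rfl⟩ := hsS
  rcases eq_or_ne v u with rfl | hne2
  · have hdist : dist p (ra v) = p - ra v := by
      rw [Real.dist_eq, abs_of_pos hδ]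
    have : min ε ((p - ra v)/2) ≤ dist p (ra v) := by
      rw [hdist]
      exact le_trans (min_le_right _ _) (by linarith)
    linarith
  · obtain ⟨w, rfl⟩ := hpre
    have hw : w ≠ [] := by rintro rfl; simp at hne2
    obtain ⟨k, w', rfl⟩ := List.exists_cons_of_ne_nil hw
    have hpre2 : u ++ [k] <+: u ++ k :: w' := ⟨w', by simp⟩
    have hsS2 : ra (u ++ k :: w') ∈ Su T (u ++ [k]) := ⟨_, hv, hpre2, rfl⟩
    rcases Nat.lt_or_ge k K with hkK | hkK
    · have h1 := hεs k hkK _ hsS2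
      have h2 : min ε ((p - ra u)/2) ≤ dist p (ra (u ++ k :: w')) :=
        le_trans (min_le_left _ _) h1
      linarith
    · have henv : ra (u ++ k :: w') ≤ ra u + (1/2:ℝ)^(k+1) := renvelope u k hpre2
      have hb : (1/2:ℝ)^(k+1) ≤ (1/2:ℝ)^(K+1) :=
        pow_le_pow_of_le_one (by norm_num) (by norm_num) (by omega)
      have h3 : ra (u ++ k :: w') ≤ p - (p - ra u)/2 := by linarith
      have h4 : (p - ra u)/2 ≤ dist p (ra (u ++ k :: w')) := by
        rw [Real.dist_eq]
        have := le_abs_self (p - ra (u ++ k :: w'))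
        linarith
      have h5 : min ε ((p - ra u)/2) ≤ dist p (ra (u ++ k :: w')) :=
        le_trans (min_le_right _ _) h4
      linarith

lemma base (hT : ∀ v ∈ T, ∀ j, v.take j ∈ T) (p : ℝ) (hp : p ∈ closure (Apts T))
    (hirr : Irrational p) : [] ∈ T ∧ p ∈ closure (Su T []) := by
  have h0 : p ≠ 0 := by
    intro h; exact hirr ⟨0, by rw [h]; norm_num⟩
  have hA : Apts T = {(0:ℝ)} ∪ {x | ∃ v ∈ T, x = ra v} := by rw [Apts, insert_eq]
  rw [hA, closure_union] at hp
  have hp2 : p ∈ closure {x | ∃ v ∈ T, x = ra v} := by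
    rcases hp with h | h
    · rw [closure_singleton] at h; exact absurd h h0
    · exact h
  have hSeq : {x : ℝ | ∃ v ∈ T, x = ra v} = Su T [] := by
    ext x
    simp only [Su, mem_setOf_eq]
    constructor
    · rintro ⟨v, hv, rfl⟩; exact ⟨v, hv, List.nil_prefix, rfl⟩
    · rintro ⟨v, hv, _, rfl⟩; exact ⟨v, hv, rfl⟩
  rw [hSeq] at hp2
  have hne : (Su T []).Nonempty := by
    by_contra h
    rw [not_nonempty_iff_eq_empty] at h
    rw [h, closure_empty] at hp2
    exact hp2
  obtain ⟨x, v, hv, _, _⟩ := hne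
  refine ⟨?_, hp2⟩
  have := hT v hv 0
  simpa using this

lemma closure_branch (hT : ∀ v ∈ T, ∀ j, v.take j ∈ T) (p : ℝ)
    (hp : p ∈ closure (Apts T)) (hirr : Irrational p) :
    ∃ z : Nf, ∀ n, pre z n ∈ T := by
  obtain ⟨h0, hc0⟩ := base hT p hp hirr
  let P : List ℕ → Prop := fun u => u ∈ T ∧ p ∈ closure (Su T u)
  let g : {u // P u} → {u // P u} := fun s =>
    ⟨s.1 ++ [Classical.choose (step hT p hirr s.1 s.2.2)],
     (Classical.choose_spec (step hT p hirr s.1 s.2.2)).1,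
     (Classical.choose_spec (step hT p hirr s.1 s.2.2)).2⟩
  let s0 : {u // P u} := ⟨[], h0, hc0⟩
  let z : Nf := fun n => Classical.choose (step hT p hirr (g^[n] s0).1 (g^[n] s0).2.2)
  have hpre : ∀ n, pre z n = (g^[n] s0).1 := by
    intro n
    induction n with
    | zero => rw [pre_zero]; rfl
    | succ n ih =>
      rw [pre_succ, ih, Function.iterate_succ_apply']
  exact ⟨z, fun n => by rw [hpre n]; exact (g^[n] s0).2.1⟩

lemma branch_point (z : Nf) (hz : ∀ n, pre z n ∈ T) :
    ∃ p ∈ closure (Apts T), Irrational p := by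
  set f : ℕ → ℝ := fun n => ra (pre z n) with hf
  have hpre2 : ∀ n, pre z n <+: pre z (n+1) := fun n => by rw [pre_succ]; exact ⟨[z n], rfl⟩
  have hprefix : ∀ m n, m ≤ n → pre z m <+: pre z n := by
    intro m n h
    apply List.prefix_iff_eq_take.2
    rw [pre_length]
    exact (pre_take z h).symm
  have hcauchy : CauchySeq f := by
    apply cauchySeq_of_le_geometric (1/2 : ℝ) 1 (by norm_num)
    intro n
    have h1 := (rnest (hpre2 n)).1
    have h2 : ra (pre z (n+1)) ≤ rb (pre z n) :=
      le_trans (ra_lt_rb _).le (rnest (hpre2 n)).2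
    have h3 := rdiff_le (pre z n)
    rw [pre_length] at h3
    rw [Real.dist_eq, abs_sub_comm, abs_of_nonneg (by linarith : (0:ℝ) ≤ f (n+1) - f n)]
    have : f (n+1) - f n ≤ rb (pre z n) - ra (pre z n) := by
      show ra (pre z (n+1)) - ra (pre z n) ≤ _
      linarith [(ra_lt_rb (pre z (n+1))).le]
    linarith
  obtain ⟨p, hp⟩ := cauchySeq_tendsto_of_complete hcauchy
  have hmem : ∀ n, f n ∈ Apts T := fun n => Set.mem_insert_of_mem _ ⟨pre z n, hz n, rfl⟩
  have hpc : p ∈ closure (Apts T) := mem_closure_of_tendsto hp (Filter.Eventually.of_forall hmem)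
  refine ⟨p, hpc, ?_⟩
  have hicc : ∀ m, p ∈ Icc (ra (pre z m)) (rb (pre z m)) := by
    intro m
    apply isClosed_Icc.mem_of_tendsto hp
    apply Filter.eventually_atTop.2
    refine ⟨m, fun n hn => ?_⟩
    have hpm := hprefix m n hn
    exact ⟨(rnest hpm).1, le_trans (ra_lt_rb _).le (rnest hpm).2⟩
  intro hrat
  obtain ⟨q, hq⟩ := hrat
  obtain ⟨n, rfl⟩ := rseq_surj q
  have h := hicc (n+1)
  have havoid := avoid (v := pre z (n+1)) (n := n) (by simp)
  apply havoid
  simp only [ra, rb] at h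
  constructor
  · have := h.1; rw [← hq] at this; exact_mod_cast this
  · have := h.2; rw [← hq] at this; exact_mod_cast this

end TreeAnalysis

/-! ### Topology: zero-dimensionality -/

def Psi (K : Set ℝ) : Set ↥squareMinusRatSq := {p | (p : ℝ × ℝ).1 ∈ K}

lemma Psi_closed {K : Set ℝ} (hK : IsClosed K) : IsClosed (Psi K) :=
  hK.preimage ((continuous_fst).comp continuous_subtype_val)

lemma zeroDim_of_inducing {Y : Type} [TopologicalSpace Y] (f : Y → ℝ × ℝ)
    (hf : IsInducing f) (h1 : ∀ y, ¬ Irrational (f y).1) (h2 : ∀ y, Irrational (f y).2) :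
    ZeroDimensional Y := by
  classical
  set B0 : Set (Set (ℝ × ℝ)) := {S | ∃ a b : ℝ, ∃ qc qd : ℚ, Irrational a ∧ Irrational b ∧
    S = Ioo a b ×ˢ Ioo (qc : ℝ) (qd : ℝ)} with hB0
  have hbasis : IsTopologicalBasis B0 := by
    apply isTopologicalBasis_of_isOpen_of_nhds
    · rintro u ⟨a, b, qc, qd, ha, hb, rfl⟩
      exact (isOpen_Ioo).prod (isOpen_Ioo)
    · intro p u hp hu
      obtain ⟨ε, hε, hball⟩ := Metric.isOpen_iff.1 hu p hp
      obtain ⟨a, ha, ha1, ha2⟩ := exists_irrational_btwn (show p.1 - ε/2 < p.1 by linarith)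
      obtain ⟨b, hb, hb1, hb2⟩ := exists_irrational_btwn (show p.1 < p.1 + ε/2 by linarith)
      obtain ⟨qc, hc1, hc2⟩ := exists_rat_btwn (show p.2 - ε/2 < p.2 by linarith)
      obtain ⟨qd, hd1, hd2⟩ := exists_rat_btwn (show p.2 < p.2 + ε/2 by linarith)
      refine ⟨Ioo a b ×ˢ Ioo (qc:ℝ) (qd:ℝ), ⟨a, b, qc, qd, ha, hb, rfl⟩, ⟨⟨ha2, hb1⟩, ⟨hc2, hd1⟩⟩, ?_⟩
      intro x hx
      apply hball
      rw [Metric.mem_ball, Prod.dist_eq]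
      rcases hx with ⟨hx1, hx2⟩
      rw [mem_Ioo] at hx1 hx2
      apply max_lt
      · rw [Real.dist_eq, abs_sub_lt_iff]; constructor <;> linarith
      · rw [Real.dist_eq, abs_sub_lt_iff]; constructor <;> linarith
  have hB := hbasis.isInducing hf
  refine ⟨(preimage f) '' B0, ?_, hB⟩
  rintro s ⟨S, ⟨a, b, qc, qd, ha, hb, rfl⟩, rfl⟩
  constructor
  · have hEq : f ⁻¹' (Ioo a b ×ˢ Ioo (qc:ℝ) (qd:ℝ)) = f ⁻¹' (Icc a b ×ˢ Icc (qc:ℝ) (qd:ℝ)) := by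
      ext y
      simp only [mem_preimage, mem_prod, mem_Ioo, mem_Icc]
      constructor
      · rintro ⟨⟨g1, g2⟩, g3, g4⟩; exact ⟨⟨g1.le, g2.le⟩, g3.le, g4.le⟩
      · rintro ⟨⟨g1, g2⟩, g3, g4⟩
        have e1 : (f y).1 ≠ a := fun h => (h1 y) (h ▸ ha)
        have e2 : (f y).1 ≠ b := fun h => (h1 y) (h ▸ hb)
        have e3 : (f y).2 ≠ (qc:ℝ) := fun h => (Rat.not_irrational qc) (h ▸ h2 y)
        have e4 : (f y).2 ≠ (qd:ℝ) := fun h => (Rat.not_irrational qd) (h ▸ h2 y)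
        exact ⟨⟨lt_of_le_of_ne g1 (Ne.symm e1), lt_of_le_of_ne g2 e2⟩,
          lt_of_le_of_ne g3 (Ne.symm e3), lt_of_le_of_ne g4 e4⟩
    rw [hEq]
    exact (isClosed_Icc.prod isClosed_Icc).preimage hf.continuous
  · exact (isOpen_Ioo.prod isOpen_Ioo).preimage hf.continuous

lemma zeroDim_Psi {K : Set ℝ} (hKq : ∀ x ∈ K, ¬ Irrational x) :
    ZeroDimensional ↥(Psi K) := by
  apply zeroDim_of_inducing (f := fun y : ↥(Psi K) => ((y : ↥squareMinusRatSq) : ℝ × ℝ))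
  · exact IsInducing.subtypeVal.comp IsInducing.subtypeVal
  · intro y; exact hKq _ y.2
  · intro y
    rcases (y : ↥squareMinusRatSq).2 with ⟨hsq, hbad⟩
    by_contra h2
    exact hbad ⟨hKq _ y.2, h2⟩

lemma not_zeroDim_Psi {K : Set ℝ} (hK : K ⊆ Icc 0 1) {t : ℝ} (ht : Irrational t)
    (htK : t ∈ K) : ¬ ZeroDimensional ↥(Psi K) := by
  rintro ⟨B, hclop, hbasis⟩
  have hmem : ∀ s : ↥(Icc (0:ℝ) 1), (t, (s:ℝ)) ∈ squareMinusRatSq := by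
    intro s
    refine ⟨⟨hK htK, s.2⟩, ?_⟩
    rintro ⟨g1, _⟩; exact g1 ht
  let γ : ↥(Icc (0:ℝ) 1) → ↥(Psi K) := fun s => ⟨⟨(t, (s:ℝ)), hmem s⟩, htK⟩
  have hγc : Continuous γ := by
    apply Continuous.subtype_mk
    apply Continuous.subtype_mk
    exact (continuous_const).prodMk continuous_subtype_val
  have hconn : IsPreconnected (range γ) := by
    have hpc : PreconnectedSpace ↥(Icc (0:ℝ) 1) := Subtype.preconnectedSpace isPreconnected_Icc
    have := (isPreconnected_univ (α := ↥(Icc (0:ℝ) 1))).image γ hγc.continuousOn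
    rwa [image_univ] at this
  set p0 := γ ⟨0, by norm_num⟩ with hp0
  set p1 := γ ⟨1, by norm_num⟩ with hp1
  have hne : p0 ≠ p1 := by
    intro h
    have h2 := congrArg (fun q : ↥(Psi K) => ((q : ↥squareMinusRatSq) : ℝ × ℝ).2) h
    simp only [hp0, hp1, γ] at h2
    norm_num at h2
  obtain ⟨u, huB, hup0, husub⟩ := hbasis.exists_subset_of_mem_open
    (show p0 ∈ ({p1}ᶜ : Set _) from hne) (isOpen_compl_singleton)
  have hsub : range γ ⊆ u :=
    hconn.subset_isClopen (hclop u huB) ⟨p0, mem_range_self _, hup0⟩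
  exact (husub (hsub (mem_range_self _))) rfl

/-! ### The coded trees and the reduction map -/

def Tx (x : Nf) : Set (List ℕ) := {v | ∀ k ≤ v.length, x (enc (pre x k, v.take k)) = 1}

lemma Tx_take (x : Nf) : ∀ v ∈ Tx x, ∀ j, v.take j ∈ Tx x := by
  intro v hv j k hk
  have h1 : k ≤ j := le_trans hk (by simp)
  have h2 : k ≤ v.length := le_trans hk (by simp)
  rw [List.take_take, min_eq_left h1]
  exact hv k h2

lemma branch_iff (x : Nf) :
    (∃ z : Nf, ∀ n, pre z n ∈ Tx x) ↔ (∃ z : Nf, ∀ n, x (enc (pre x n, pre z n)) = 1) := by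
  constructor
  · rintro ⟨z, hz⟩
    refine ⟨z, fun n => ?_⟩
    have := hz n n (by simp)
    rwa [pre_take z (le_refl n)] at this
  · rintro ⟨z, hz⟩
    refine ⟨z, fun n k hk => ?_⟩
    rw [pre_take z (by simpa using hk)]
    exact hz k

lemma mem_Diag_iff (x : Nf) : x ∈ Diag ↔ ¬ ∃ z : Nf, ∀ n, pre z n ∈ Tx x := by
  unfold Diag
  rw [mem_setOf_eq]
  exact not_congr (branch_iff x).symm

def Kx (x : Nf) : Set ℝ := closure (Apts (Tx x))

lemma Kx_closed (x : Nf) : IsClosed (Kx x) := isClosed_closure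

lemma Kx_sub_Icc (x : Nf) : Kx x ⊆ Icc (0:ℝ) 1 := by
  apply closure_minimal _ isClosed_Icc
  rintro p (rfl | ⟨v, hv, rfl⟩)
  · exact ⟨le_refl _, zero_le_one⟩
  · exact ⟨ra_nonneg v, le_trans (ra_lt_rb v).le (rb_le_one v)⟩

lemma zero_mem_Kx (x : Nf) : (0:ℝ) ∈ Kx x := subset_closure (mem_insert _ _)

lemma Kx_rational {x : Nf} (hx : x ∈ Diag) : ∀ p ∈ Kx x, ¬ Irrational p := by
  intro p hp hirr
  exact (mem_Diag_iff x).1 hx (closure_branch (Tx_take x) p hp hirr)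

lemma Kx_irrational {x : Nf} (hx : x ∉ Diag) : ∃ p ∈ Kx x, Irrational p := by
  rw [mem_Diag_iff, not_not] at hx
  obtain ⟨z, hz⟩ := hx
  exact branch_point z hz

/-! ### The "good" σ-algebra on Baire space -/

def GoodSet (S : Set Nf) : Prop := TA S ∧ TA Sᶜ

lemma GoodSet_empty : GoodSet (∅ : Set Nf) :=
  ⟨TA_empty, by rw [compl_empty]; exact TA_univ⟩

lemma GoodSet_univ : GoodSet (univ : Set Nf) :=
  ⟨TA_univ, by rw [compl_univ]; exact TA_empty⟩

lemma GoodSet_compl {S : Set Nf} (h : GoodSet S) : GoodSet Sᶜ :=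
  ⟨h.2, by rw [compl_compl]; exact h.1⟩

lemma GoodSet_iUnion {ι : Type} [Countable ι] {B : ι → Set Nf} (h : ∀ i, GoodSet (B i)) :
    GoodSet (⋃ i, B i) :=
  ⟨TA_iUnion _ fun i => (h i).1, by rw [compl_iUnion]; exact TA_iInter _ fun i => (h i).2⟩

lemma GoodSet_union {A B : Set Nf} (hA : GoodSet A) (hB : GoodSet B) : GoodSet (A ∪ B) := by
  rw [Set.union_eq_iUnion]
  exact GoodSet_iUnion fun b => by cases b <;> simpa

lemma GoodSet_cond (c : List ℕ) (k : ℕ) :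
    GoodSet {x : Nf | x (enc (pre x k, c)) = 1} := by
  constructor
  · exact TA_basic (fun u => enc (u, c)) k (fun t => t = 1)
  · have : {x : Nf | x (enc (pre x k, c)) = 1}ᶜ = {x : Nf | ¬ (x (enc (pre x k, c)) = 1)} := by
      ext x; simp
    rw [this]
    exact TA_basic (fun u => enc (u, c)) k (fun t => ¬ (t = 1))

lemma GoodSet_Txmem (v : List ℕ) : GoodSet {x : Nf | v ∈ Tx x} := by
  classical
  have heq : {x : Nf | v ∈ Tx x}
      = ⋂ k : ℕ, (if k ≤ v.length then {x : Nf | x (enc (pre x k, v.take k)) = 1} else univ) := by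
    ext x
    simp only [mem_iInter, mem_setOf_eq, Tx]
    constructor
    · intro h k
      split_ifs with hk
      · exact h k hk
      · trivial
    · intro h k hk
      have := h k
      rwa [if_pos hk] at this
  rw [heq]
  refine ⟨TA_iInter _ fun k => ?_, ?_⟩
  · split_ifs with hk
    · exact (GoodSet_cond (v.take k) k).1
    · exact TA_univ
  · rw [compl_iInter]
    apply TA_iUnion
    intro k
    split_ifs with hk
    · exact (GoodSet_cond (v.take k) k).2
    · rw [compl_univ]; exact TA_empty

def goodMS : MeasurableSpace Nf where
  MeasurableSet' := GoodSet
  measurableSet_empty := GoodSet_empty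
  measurableSet_compl := fun _ hs => GoodSet_compl hs
  measurableSet_iUnion := fun _ hf => GoodSet_iUnion hf

/-! ### The W-sets and measurability of the reduction -/

def Wset (V : Set (ℝ × ℝ)) : Set ℝ :=
  {t : ℝ | ∃ y : ℝ, Irrational y ∧ y ∈ Ioo (0:ℝ) 1 ∧ (t, y) ∈ V}

lemma Wset_open {V : Set (ℝ × ℝ)} (hV : IsOpen V) : IsOpen (Wset V) := by
  rw [isOpen_iff_forall_mem_open]
  rintro t ⟨y, hy, hy01, htV⟩
  refine ⟨{t' : ℝ | (t', y) ∈ V}, fun t' ht' => ⟨y, hy, hy01, ht'⟩, ?_, htV⟩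
  exact hV.preimage (continuous_id.prodMk continuous_const)

lemma meets_iff {V : Set (ℝ × ℝ)} (hV : IsOpen V) {U : Set ↥squareMinusRatSq}
    (hU : Subtype.val ⁻¹' V = U) {K : Set ℝ} (hK : K ⊆ Icc (0:ℝ) 1) :
    (Psi K ∩ U).Nonempty ↔ (K ∩ Wset V).Nonempty := by
  constructor
  · rintro ⟨p, hpK, hpU⟩
    obtain ⟨⟨t, y⟩, hpE⟩ := p
    obtain ⟨⟨ht01, hy01⟩, hbad⟩ := hpE
    have hpV : (t, y) ∈ V := by rw [← hU] at hpU; exact hpU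
    refine ⟨t, hpK, ?_⟩
    by_cases hyirr : Irrational y
    · have hy0 : y ≠ 0 := by rintro rfl; exact hyirr ⟨0, by norm_num⟩
      have hy1 : y ≠ 1 := by rintro rfl; exact hyirr ⟨1, by norm_num⟩
      exact ⟨y, hyirr, ⟨lt_of_le_of_ne hy01.1 (Ne.symm hy0), lt_of_le_of_ne hy01.2 hy1⟩, hpV⟩
    · obtain ⟨ε, hε, hball⟩ := Metric.isOpen_iff.1 hV (t, y) hpV
      rcases hy01 with ⟨g1, g2⟩
      have hlo : max (y - ε) 0 < min (y + ε) 1 := by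
        simp only [max_lt_iff, lt_min_iff]
        refine ⟨⟨by linarith, by linarith⟩, by linarith, by norm_num⟩
      obtain ⟨y', hy'irr, hy'1, hy'2⟩ := exists_irrational_btwn hlo
      have h1 : y - ε < y' := lt_of_le_of_lt (le_max_left _ _) hy'1
      have h2 : 0 < y' := lt_of_le_of_lt (le_max_right _ _) hy'1
      have h3 : y' < y + ε := lt_of_lt_of_le hy'2 (min_le_left _ _)
      have h4 : y' < 1 := lt_of_lt_of_le hy'2 (min_le_right _ _)
      refine ⟨y', hy'irr, ⟨h2, h4⟩, ?_⟩
      apply hball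
      rw [Metric.mem_ball, Prod.dist_eq]
      apply max_lt
      · show dist t t < ε
        simpa using hε
      · show dist y' y < ε
        rw [Real.dist_eq, abs_sub_lt_iff]
        constructor <;> linarith
  · rintro ⟨t, htK, y, hy, hy01, htyV⟩
    have hmemE : (t, y) ∈ squareMinusRatSq := by
      refine ⟨⟨hK htK, ⟨hy01.1.le, hy01.2.le⟩⟩, ?_⟩
      rintro ⟨_, g2⟩; exact g2 hy
    refine ⟨⟨(t, y), hmemE⟩, htK, ?_⟩
    rw [← hU]
    exact htyV

lemma Kx_meets_iff (x : Nf) {W : Set ℝ} (hW : IsOpen W) :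
    (Kx x ∩ W).Nonempty ↔ (Apts (Tx x) ∩ W).Nonempty := by
  constructor
  · rintro ⟨p, hpc, hpW⟩
    have := _root_.mem_closure_iff.1 hpc W hW hpW
    obtain ⟨q, hqW, hqA⟩ := this
    exact ⟨q, hqA, hqW⟩
  · rintro ⟨p, hpA, hpW⟩
    exact ⟨p, subset_closure hpA, hpW⟩

def PsiF (x : Nf) : {A : Set ↥squareMinusRatSq // IsClosed A} :=
  ⟨Psi (Kx x), Psi_closed (Kx_closed x)⟩

lemma PsiF_measurable :
    @Measurable Nf {A : Set ↥squareMinusRatSq // IsClosed A} goodMS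
      (effrosSigma squareMinusRatSq) PsiF := by
  letI : MeasurableSpace Nf := goodMS
  apply measurable_generateFrom
  rintro 𝓤 ⟨U, hUopen, rfl⟩
  obtain ⟨V, hV, hVU⟩ := isOpen_induced_iff.1 hUopen
  show GoodSet (PsiF ⁻¹' {A | ((A : Set ↥squareMinusRatSq) ∩ U).Nonempty})
  classical
  have heq : PsiF ⁻¹' {A | ((A : Set ↥squareMinusRatSq) ∩ U).Nonempty}
      = (if (0:ℝ) ∈ Wset V then (univ : Set Nf) else ∅)
        ∪ ⋃ v : List ℕ, (if ra v ∈ Wset V then {x : Nf | v ∈ Tx x} else ∅) := by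
    ext x
    simp only [mem_preimage, mem_setOf_eq, mem_union, mem_iUnion]
    rw [show (PsiF x : Set ↥squareMinusRatSq) = Psi (Kx x) from rfl]
    rw [meets_iff hV hVU (Kx_sub_Icc x), Kx_meets_iff x (Wset_open hV)]
    constructor
    · rintro ⟨p, hpA, hpW⟩
      rcases hpA with rfl | ⟨v, hv, rfl⟩
      · left; rw [if_pos hpW]; trivial
      · right; exact ⟨v, by rw [if_pos hpW]; exact hv⟩
    · rintro (h | ⟨v, hv⟩)
      · split_ifs at h with h0
        · exact ⟨0, mem_insert _ _, h0⟩
        · exact absurd h (notMem_empty x)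
      · split_ifs at hv with h0
        · exact ⟨ra v, mem_insert_of_mem _ ⟨v, hv, rfl⟩, h0⟩
        · exact absurd hv (notMem_empty x)
  rw [heq]
  apply GoodSet_union
  · split_ifs
    · exact GoodSet_univ
    · exact GoodSet_empty
  · apply GoodSet_iUnion
    intro v
    split_ifs
    · exact GoodSet_Txmem v
    · exact GoodSet_empty

lemma PsiF_nonempty (x : Nf) : (PsiF x : Set ↥squareMinusRatSq).Nonempty := by
  obtain ⟨y0, hy0, hy0a, hy0b⟩ := exists_irrational_btwn (show (0:ℝ) < 1 by norm_num)
  have hmem : ((0:ℝ), y0) ∈ squareMinusRatSq := by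
    refine ⟨⟨⟨le_refl 0, zero_le_one⟩, ⟨hy0a.le, hy0b.le⟩⟩, ?_⟩
    rintro ⟨_, g2⟩; exact g2 hy0
  exact ⟨⟨((0:ℝ), y0), hmem⟩, zero_mem_Kx x⟩

lemma PsiF_mem_iff (x : Nf) :
    PsiF x ∈ zeroDimClosedSets squareMinusRatSq ↔ x ∈ Diag := by
  constructor
  · intro h
    by_contra hx
    obtain ⟨p, hpK, hpirr⟩ := Kx_irrational hx
    exact not_zeroDim_Psi (Kx_sub_Icc x) hpirr hpK h.2
  · intro hx
    exact ⟨PsiF_nonempty x, zeroDim_Psi (Kx_rational hx)⟩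

end
end NS

theorem zeroDimClosedSets_not_souslin_square_minus_rationals :
    ¬ IsSouslinIn (effrosSigma squareMinusRatSq)
      (zeroDimClosedSets squareMinusRatSq) := by
  rintro ⟨f, hfm, hA⟩
  apply NS.not_TA_Diag
  have hDeq : NS.Diag = ⋃ σ : ℕ → ℕ, ⋂ n : ℕ, NS.PsiF ⁻¹' (f (NS.pre σ n)) := by
    have h1 : NS.Diag = NS.PsiF ⁻¹' (zeroDimClosedSets squareMinusRatSq) := by
      ext x
      rw [Set.mem_preimage, NS.PsiF_mem_iff]
    rw [h1, hA, Set.preimage_iUnion]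
    apply Set.iUnion_congr
    intro σ
    rw [Set.preimage_iInter]
    rfl
  rw [hDeq]
  exact NS.TA_souslin _ (fun s => (show NS.GoodSet _ from NS.PsiF_measurable (hfm s)).1)
end
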